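/- arXiv:1112.3559 — 6 statements merged into one kernel-verified Lean document; each statement's English description precedes it below -/
import Mathlib

section
/- Let f : I → ℝ where I ⊆ ℝ is an interval, f three times differentiable on the interior I° with f''' integrable on [a,b], where a, b ∈ I° with a < b. Suppose |f'''|^q is convex on [a,b] for some q > 1, and let p > 1 with 1/p + 1/q = 1. Then |∫_a^b f(x) dx − ((b−a)/6)·[f(a) + 4·f((a+b)/2) + f(b)]| ≤ ((b−a)^4/96)·(1/4)^{1/q}·(Γ(2p+1)·Γ(p+1)/Γ(3p+2))^{1/p} · { (|f'''(a)|^q + 3|f'''(b)|^q)^{1/q} + (3|f'''(a)|^q + |f'''(b)|^q)^{1/q} }. -/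
open MeasureTheory Real Set


lemma beta_eval {p : ℝ} (hp : 0 < p) :
    ∫ t in (0:ℝ)..1, t ^ (2*p) * (1-t) ^ p
      = Real.Gamma (2*p+1) * Real.Gamma (p+1) / Real.Gamma (3*p+2) := by
  have hG : (0:ℝ) < Real.Gamma (3*p+2) := Real.Gamma_pos_of_pos (by linarith)
  have key := Complex.Gamma_mul_Gamma_eq_betaIntegral
    (s := ((2*p+1 : ℝ) : ℂ)) (t := ((p+1 : ℝ) : ℂ)) (by simp; linarith) (by simp; linarith)
  have hbeta : Complex.betaIntegral ((2*p+1 : ℝ) : ℂ) ((p+1 : ℝ) : ℂ)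
      = ((∫ t in (0:ℝ)..1, t ^ (2*p) * (1-t) ^ p : ℝ) : ℂ) := by
    rw [Complex.betaIntegral, ← intervalIntegral.integral_ofReal]
    apply intervalIntegral.integral_congr
    intro x hx
    rw [Set.uIcc_of_le (by norm_num : (0:ℝ) ≤ 1)] at hx
    have hx0 : 0 ≤ x := hx.1
    have hx1 : 0 ≤ 1 - x := by linarith [hx.2]
    push_cast
    rw [show (2*(p:ℂ)+1-1) = ((2*p:ℝ):ℂ) by push_cast; ring,
      show ((p:ℂ)+1-1) = ((p:ℝ):ℂ) by push_cast; ring,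
      show (1 - (x:ℂ)) = ((1-x:ℝ):ℂ) by push_cast; ring,
      ← Complex.ofReal_cpow hx0, ← Complex.ofReal_cpow hx1]
  rw [hbeta] at key
  have h32 : ((2*p+1 : ℝ) : ℂ) + ((p+1 : ℝ) : ℂ) = ((3*p+2 : ℝ) : ℂ) := by push_cast; ring
  rw [h32, Complex.Gamma_ofReal, Complex.Gamma_ofReal, Complex.Gamma_ofReal] at key
  have key' : Real.Gamma (2*p+1) * Real.Gamma (p+1)
      = Real.Gamma (3*p+2) * ∫ t in (0:ℝ)..1, t ^ (2*p) * (1-t) ^ p := by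
    exact_mod_cast key
  rw [eq_div_iff hG.ne']
  linarith [key']


lemma kernel_int {a m : ℝ} (ham : a < m) {p : ℝ} (hp : 0 < p) :
    ∫ x in a..m, ((x-a)^2*(m-x)) ^ p
      = (m-a) ^ (3*p+1) * ∫ t in (0:ℝ)..1, t ^ (2*p) * (1-t) ^ p := by
  set c := m - a with hc
  have hc0 : 0 < c := by simp [hc]; linarith
  have e1 : ∫ x in a..m, ((x-a)^2*(m-x)) ^ p
      = ∫ u in (0:ℝ)..c, ((u)^2*(c-u)) ^ p := by
    have := intervalIntegral.integral_comp_add_right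
      (a := (0:ℝ)) (b := c) (fun x => ((x-a)^2*(m-x)) ^ p) a
    rw [zero_add, show c + a = m by rw [hc]; ring] at this
    rw [← this]
    apply intervalIntegral.integral_congr
    intro u _
    show ((u + a - a) ^ 2 * (m - (u+a))) ^ p = (u ^ 2 * (c - u)) ^ p
    rw [hc]; congr 1; ring
  have e2 : c • ∫ t in (0:ℝ)..1, ((c*t)^2*(c-c*t)) ^ p
      = ∫ u in (0:ℝ)..c, ((u)^2*(c-u)) ^ p := by
    have := intervalIntegral.smul_integral_comp_mul_left
      (a := (0:ℝ)) (b := 1) (fun u => ((u)^2*(c-u)) ^ p) c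
    rw [mul_zero, mul_one] at this
    exact this
  have e3 : ∫ t in (0:ℝ)..1, ((c*t)^2*(c-c*t)) ^ p
      = c ^ (3*p) * ∫ t in (0:ℝ)..1, t ^ (2*p) * (1-t) ^ p := by
    rw [← intervalIntegral.integral_const_mul]
    apply intervalIntegral.integral_congr
    intro t ht
    rw [Set.uIcc_of_le (by norm_num : (0:ℝ) ≤ 1)] at ht
    have ht0 : 0 ≤ t := ht.1
    have ht1 : 0 ≤ 1 - t := by linarith [ht.2]
    show ((c*t)^2*(c-c*t)) ^ p = c ^ (3*p) * (t ^ (2*p) * (1-t) ^ p)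
    have : (c*t)^2*(c-c*t) = (c^3) * (t^2*(1-t)) := by ring
    rw [this, Real.mul_rpow (by positivity) (by positivity),
      Real.mul_rpow (by positivity) (by positivity),
      ← Real.rpow_natCast c 3, ← Real.rpow_mul hc0.le,
      ← Real.rpow_natCast t 2, ← Real.rpow_mul ht0]
    norm_num [mul_comm]
  rw [e1, ← e2, e3, smul_eq_mul, ← mul_assoc, ← Real.rpow_one_add' (by positivity) (by linarith)]
  ring_nf

lemma integral_linear (α β C D : ℝ) :
    ∫ x in α..β, (C + D * x) = C*(β-α) + D*(β^2-α^2)/2 := by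
  have h2 : IntervalIntegrable (fun x : ℝ => D * x) volume α β :=
    (continuous_const.mul continuous_id').intervalIntegrable _ _
  rw [intervalIntegral.integral_add intervalIntegrable_const h2,
    intervalIntegral.integral_const_mul, integral_id, intervalIntegral.integral_const]
  simp [smul_eq_mul]
  ring

lemma triple_ibp {f k k' k'' : ℝ → ℝ} {α β : ℝ}
    (hk : ∀ x, HasDerivAt k (k' x) x) (hk' : ∀ x, HasDerivAt k' (k'' x) x)
    (hk'' : ∀ x, HasDerivAt k'' (-1) x)
    (hf : ∀ x ∈ Set.uIcc α β, HasDerivAt f (deriv f x) x)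
    (hf' : ∀ x ∈ Set.uIcc α β, HasDerivAt (deriv f) (deriv (deriv f) x) x)
    (hf'' : ∀ x ∈ Set.uIcc α β, HasDerivAt (deriv (deriv f)) (deriv (deriv (deriv f)) x) x)
    (hi : IntervalIntegrable (deriv (deriv (deriv f))) volume α β) :
    ∫ x in α..β, k x * deriv (deriv (deriv f)) x
      = (k β * deriv (deriv f) β - k α * deriv (deriv f) α)
        - (k' β * deriv f β - k' α * deriv f α)
        + (k'' β * f β - k'' α * f α) + ∫ x in α..β, f x := by
  have ck' : Continuous k' :=
    continuous_iff_continuousAt.mpr fun x => (hk' x).continuousAt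
  have ck'' : Continuous k'' :=
    continuous_iff_continuousAt.mpr fun x => (hk'' x).continuousAt
  have cf : ContinuousOn f (Set.uIcc α β) :=
    fun x hx => ((hf x hx).continuousAt).continuousWithinAt
  have cf' : ContinuousOn (deriv f) (Set.uIcc α β) :=
    fun x hx => ((hf' x hx).continuousAt).continuousWithinAt
  have cf'' : ContinuousOn (deriv (deriv f)) (Set.uIcc α β) :=
    fun x hx => ((hf'' x hx).continuousAt).continuousWithinAt
  have step1 := intervalIntegral.integral_mul_deriv_eq_deriv_mul
    (fun x _ => hk x) hf'' (ck'.continuousOn.intervalIntegrable) hi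
  have step2 := intervalIntegral.integral_mul_deriv_eq_deriv_mul
    (fun x _ => hk' x) hf' (ck''.continuousOn.intervalIntegrable)
    (cf''.intervalIntegrable)
  have step3 := intervalIntegral.integral_mul_deriv_eq_deriv_mul
    (fun x (_ : x ∈ Set.uIcc α β) => hk'' x) hf
    (continuous_const.continuousOn.intervalIntegrable (a := α) (b := β))
    (cf'.intervalIntegrable)
  have e4 : ∫ x in α..β, (-1 : ℝ) * f x = - ∫ x in α..β, f x := by
    rw [intervalIntegral.integral_const_mul]; ring
  rw [step1, step2, step3, e4]
  ring


lemma cubic_d1 (a c x : ℝ) :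
    HasDerivAt (fun x => -(1/6)*((x-a)^2*(x-c)))
      (-(1/6)*(2*(x-a)*(x-c) + (x-a)^2)) x := by
  have hid := hasDerivAt_id x
  have h := (((hid.sub_const a).pow 2).mul (hid.sub_const c)).const_mul (-(1/6) : ℝ)
  simp only [id_eq] at h
  exact h.congr_deriv (by simp only [Pi.pow_apply]; ring)

lemma cubic_d2 (a c x : ℝ) :
    HasDerivAt (fun x => -(1/6)*(2*(x-a)*(x-c) + (x-a)^2))
      (-(1/6)*(2*(x-c) + 4*(x-a))) x := by
  have hid := hasDerivAt_id x
  have h := ((((hid.sub_const a).const_mul 2).mul (hid.sub_const c)).add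
    ((hid.sub_const a).pow 2)).const_mul (-(1/6) : ℝ)
  simp only [id_eq] at h
  exact h.congr_deriv (by ring)

lemma cubic_d3 (a c x : ℝ) :
    HasDerivAt (fun x => -(1/6)*(2*(x-c) + 4*(x-a))) (-1) x := by
  have hid := hasDerivAt_id x
  have h := (((hid.sub_const c).const_mul 2).add
    ((hid.sub_const a).const_mul 4)).const_mul (-(1/6) : ℝ)
  simp only [id_eq] at h
  exact h.congr_deriv (by norm_num)

lemma half_holder {g : ℝ → ℝ} {α β p q C : ℝ} (hαβ : α < β)
    (hpq : Real.HolderConjugate p q)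
    (hgi : IntegrableOn g (Set.Icc α β)) {k L : ℝ → ℝ}
    (hk : Continuous k) (hL : Continuous L)
    (hLb : ∀ x ∈ Set.Icc α β, |g x| ^ q ≤ L x)
    (hC : ∀ x ∈ Set.Icc α β, L x ≤ C) :
    |∫ x in α..β, k x * g x| ≤
      (∫ x in α..β, |k x| ^ p) ^ (1/p) * (∫ x in α..β, L x) ^ (1/q) := by
  have hq0 : 0 < q := hpq.symm.pos
  have hsub : Set.Ioc α β ⊆ Set.Icc α β := Set.Ioc_subset_Icc_self
  set μ := volume.restrict (Set.Ioc α β) with hμ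
  haveI : IsFiniteMeasure μ := by
    constructor
    rw [hμ, Measure.restrict_apply_univ]
    exact measure_Ioc_lt_top
  -- measurability
  have hmg : AEStronglyMeasurable (fun x => |g x|) μ := by
    have := (hgi.mono_set hsub).aestronglyMeasurable.norm
    simpa only [Real.norm_eq_abs] using this
  have hmgq : AEStronglyMeasurable (fun x => |g x| ^ q) μ :=
    (Real.continuous_rpow_const hq0.le).comp_aestronglyMeasurable hmg
  -- nonnegativity of C
  have hC0 : 0 ≤ C := by
    have h1 := hLb α (Set.left_mem_Icc.mpr hαβ.le)
    have h2 := hC α (Set.left_mem_Icc.mpr hαβ.le)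
    have : (0:ℝ) ≤ |g α| ^ q := Real.rpow_nonneg (abs_nonneg _) _
    linarith
  -- |g| ≤ C^(1/q) on Icc
  have hgb : ∀ x ∈ Set.Icc α β, |g x| ≤ C ^ (1/q) := by
    intro x hx
    have h1 : |g x| ^ q ≤ C := le_trans (hLb x hx) (hC x hx)
    have h2 : (|g x| ^ q) ^ q⁻¹ ≤ C ^ q⁻¹ :=
      Real.rpow_le_rpow (Real.rpow_nonneg (abs_nonneg _) _) h1 (by positivity)
    rw [Real.rpow_rpow_inv (abs_nonneg _) hq0.ne'] at h2
    rwa [one_div]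
  -- Memℒp facts
  have memF : MemLp (fun x => |k x|) (ENNReal.ofReal p) μ := by
    obtain ⟨Ck, hCk⟩ := isCompact_Icc.exists_bound_of_continuousOn
      (hk.continuousOn : ContinuousOn k (Set.Icc α β))
    refine MemLp.of_bound hk.abs.aestronglyMeasurable Ck ?_
    rw [hμ, ae_restrict_iff' measurableSet_Ioc]
    exact ae_of_all _ fun x hx => by
      simpa [Real.norm_eq_abs, abs_abs] using hCk x (hsub hx)
  have memG : MemLp (fun x => |g x|) (ENNReal.ofReal q) μ := by
    refine MemLp.of_bound hmg (C ^ (1/q)) ?_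
    rw [hμ, ae_restrict_iff' measurableSet_Ioc]
    exact ae_of_all _ fun x hx => by
      simpa [Real.norm_eq_abs, abs_abs] using hgb x (hsub hx)
  -- Hölder
  have holder := integral_mul_le_Lp_mul_Lq_of_nonneg hpq
    (ae_of_all μ fun x => abs_nonneg (k x)) (ae_of_all μ fun x => abs_nonneg (g x))
    memF memG
  -- integrability of |g|^q and L on Ioc
  have hIgq : Integrable (fun x => |g x| ^ q) μ := by
    refine memLp_one_iff_integrable.mp (MemLp.of_bound hmgq C ?_)
    rw [hμ, ae_restrict_iff' measurableSet_Ioc]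
    refine ae_of_all _ fun x hx => ?_
    have h1 := le_trans (hLb x (hsub hx)) (hC x (hsub hx))
    simpa [Real.norm_eq_abs, abs_of_nonneg (Real.rpow_nonneg (abs_nonneg (g x)) q)] using h1
  have hIL : IntegrableOn L (Set.Ioc α β) volume := (hL.integrableOn_Icc).mono_set hsub
  -- ∫ |g|^q ≤ ∫ L
  have hmono : ∫ x, |g x| ^ q ∂μ ≤ ∫ x, L x ∂μ := by
    rw [hμ]
    exact setIntegral_mono_on hIgq hIL measurableSet_Ioc
      (fun x hx => hLb x (hsub hx))
  have hgq0 : 0 ≤ ∫ x, |g x| ^ q ∂μ :=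
    integral_nonneg fun x => Real.rpow_nonneg (abs_nonneg _) _
  have hrpow : (∫ x, |g x| ^ q ∂μ) ^ (1/q) ≤ (∫ x, L x ∂μ) ^ (1/q) :=
    Real.rpow_le_rpow hgq0 hmono (by positivity)
  have hkp0 : 0 ≤ (∫ x, |k x| ^ p ∂μ) ^ (1/p) :=
    Real.rpow_nonneg (integral_nonneg fun x => Real.rpow_nonneg (abs_nonneg _) _) _
  calc |∫ x in α..β, k x * g x|
      ≤ ∫ x in α..β, |k x * g x| :=
        intervalIntegral.abs_integral_le_integral_abs hαβ.le
    _ = ∫ x, |k x| * |g x| ∂μ := by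
        rw [intervalIntegral.integral_of_le hαβ.le]
        exact setIntegral_congr_fun measurableSet_Ioc fun x _ => abs_mul _ _
    _ ≤ (∫ x, |k x| ^ p ∂μ) ^ (1/p) * (∫ x, |g x| ^ q ∂μ) ^ (1/q) := holder
    _ ≤ (∫ x, |k x| ^ p ∂μ) ^ (1/p) * (∫ x, L x ∂μ) ^ (1/q) :=
        mul_le_mul_of_nonneg_left hrpow hkp0
    _ = (∫ x in α..β, |k x| ^ p) ^ (1/p) * (∫ x in α..β, L x) ^ (1/q) := by
        simp only [intervalIntegral.integral_of_le hαβ.le, hμ]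



lemma lin_eval1 (a b A B : ℝ) (hab : a < b) :
    (b*A - a*B)/(b-a) * ((a+b)/2 - a) + (B-A)/(b-a) * (((a+b)/2)^2 - a^2)/2
      = (b-a)*(3*A+B)/8 := by
  have h : b - a ≠ 0 := by linarith
  field_simp
  ring

lemma lin_eval2 (a b A B : ℝ) (hab : a < b) :
    (b*A - a*B)/(b-a) * (b - (a+b)/2) + (B-A)/(b-a) * (b^2 - ((a+b)/2)^2)/2
      = (b-a)*(A+3*B)/8 := by
  have h : b - a ≠ 0 := by linarith
  field_simp
  ring

lemma final_algebra (h A B p q G : ℝ) (hh : 0 < h) (hA0 : 0 ≤ A) (hB0 : 0 ≤ B)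
    (hG0 : 0 ≤ G) (hp : 1 < p) (hq : 1 < q) (hpq : 1/p + 1/q = 1) :
    ((1/6:ℝ)^(p:ℝ) * ((h/2)^(3*p+1) * G)) ^ (1/p) * (h*(3*A+B)/8) ^ (1/q)
      + ((1/6:ℝ)^(p:ℝ) * ((h/2)^(3*p+1) * G)) ^ (1/p) * (h*(A+3*B)/8) ^ (1/q)
    = h^4/96 * ((1:ℝ)/4)^(1/q) * G^(1/p) * ((A+3*B)^(1/q) + (3*A+B)^(1/q)) := by
  have hp0 : (0:ℝ) < p := by linarith
  have hq0 : (0:ℝ) < q := by linarith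
  have hc : (0:ℝ) < h/2 := by linarith
  simp only [one_div]
  have h6 : (((6:ℝ)⁻¹)^(p:ℝ))^(p⁻¹) = 6⁻¹ := Real.rpow_rpow_inv (by norm_num) (ne_of_gt hp0)
  have h3 : (h/2)^((3:ℕ):ℝ) = (h/2)^(3:ℕ) := Real.rpow_natCast _ 3
  have hpow : ((h/2)^(3*p+1))^(p⁻¹) = (h/2)^(3:ℕ) * (h/2)^(p⁻¹) := by
    rw [← Real.rpow_mul hc.le, show (3*p+1)*p⁻¹ = ((3:ℕ):ℝ) + p⁻¹ by push_cast; field_simp,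
      Real.rpow_add hc, h3]
  have e1 : (((6:ℝ)⁻¹)^(p:ℝ) * ((h/2)^(3*p+1) * G)) ^ p⁻¹
      = 6⁻¹ * (((h/2)^(3:ℕ) * (h/2)^(p⁻¹)) * G^(p⁻¹)) := by
    rw [Real.mul_rpow (by positivity) (by positivity),
      Real.mul_rpow (by positivity) hG0, h6, hpow]
  have e2 : (h*(3*A+B)/8) ^ (q⁻¹)
      = (h/2)^(q⁻¹) * (((4:ℝ)⁻¹)^(q⁻¹) * (3*A+B)^(q⁻¹)) := by
    rw [show h*(3*A+B)/8 = (h/2) * ((4:ℝ)⁻¹ * (3*A+B)) by ring,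
      Real.mul_rpow hc.le (by positivity),
      Real.mul_rpow (by norm_num) (by positivity)]
  have e3 : (h*(A+3*B)/8) ^ (q⁻¹)
      = (h/2)^(q⁻¹) * (((4:ℝ)⁻¹)^(q⁻¹) * (A+3*B)^(q⁻¹)) := by
    rw [show h*(A+3*B)/8 = (h/2) * ((4:ℝ)⁻¹ * (A+3*B)) by ring,
      Real.mul_rpow hc.le (by positivity),
      Real.mul_rpow (by norm_num) (by positivity)]
  have e4 : (h/2)^(p⁻¹) * (h/2)^(q⁻¹) = h/2 := by
    rw [← Real.rpow_add hc, show p⁻¹ + q⁻¹ = 1 by simpa [one_div] using hpq,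
      Real.rpow_one]
  rw [e1, e2, e3]
  linear_combination (6⁻¹ * (h/2)^(3:ℕ) * G^(p⁻¹) * ((4:ℝ)⁻¹^(q⁻¹)
    * ((3*A+B)^(q⁻¹) + (A+3*B)^(q⁻¹)))) * e4

set_option maxHeartbeats 1000000 in
theorem simpson_convex_holder (I : Set ℝ) (hI : I.OrdConnected) (f : ℝ → ℝ)
    (a b p q : ℝ) (ha : a ∈ interior I) (hb : b ∈ interior I) (hab : a < b)
    (hd1 : ∀ x ∈ interior I, DifferentiableAt ℝ f x)
    (hd2 : ∀ x ∈ interior I, DifferentiableAt ℝ (deriv f) x)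
    (hd3 : ∀ x ∈ interior I, DifferentiableAt ℝ (deriv (deriv f)) x)
    (hint : IntegrableOn (deriv (deriv (deriv f))) (Set.Icc a b))
    (hq : 1 < q) (hp : 1 < p) (hpq : 1 / p + 1 / q = 1)
    (hconv : ConvexOn ℝ (Set.Icc a b) fun x => |deriv (deriv (deriv f)) x| ^ q) :
    |(∫ x in a..b, f x) - (b - a) / 6 * (f a + 4 * f ((a + b) / 2) + f b)| ≤
      (b - a) ^ 4 / 96 * ((1 : ℝ) / 4) ^ (1 / q) *
        (Gamma (2 * p + 1) * Gamma (p + 1) / Gamma (3 * p + 2)) ^ (1 / p) *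
        ((|deriv (deriv (deriv f)) a| ^ q + 3 * |deriv (deriv (deriv f)) b| ^ q) ^ (1 / q) +
          (3 * |deriv (deriv (deriv f)) a| ^ q + |deriv (deriv (deriv f)) b| ^ q) ^ (1 / q)) := by
  set g := deriv (deriv (deriv f)) with hg
  set m : ℝ := (a + b) / 2 with hm
  set A : ℝ := |g a| ^ q with hA
  set B : ℝ := |g b| ^ q with hB
  have hA0 : 0 ≤ A := Real.rpow_nonneg (abs_nonneg _) _
  have hB0 : 0 ≤ B := Real.rpow_nonneg (abs_nonneg _) _
  have ham : a < m := by rw [hm]; linarith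
  have hmb : m < b := by rw [hm]; linarith
  have hp0 : (0:ℝ) < p := by linarith
  have hq0 : (0:ℝ) < q := by linarith
  have hcj : Real.HolderConjugate p q := ⟨by simpa [one_div] using hpq, by linarith, by linarith⟩
  have hIcc : Set.Icc a b ⊆ interior I := hI.interior.out ha hb
  have hsub1 : Set.uIcc a m ⊆ interior I := by
    rw [Set.uIcc_of_le ham.le]
    exact (Set.Icc_subset_Icc le_rfl hmb.le).trans hIcc
  have hsub2 : Set.uIcc m b ⊆ interior I := by
    rw [Set.uIcc_of_le hmb.le]
    exact (Set.Icc_subset_Icc ham.le le_rfl).trans hIcc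
  -- integrability of g on halves
  have hint1 : IntervalIntegrable g volume a m :=
    (hint.mono_set (by rw [Set.uIcc_of_le ham.le]; exact Set.Icc_subset_Icc le_rfl hmb.le)).intervalIntegrable
  have hint2 : IntervalIntegrable g volume m b :=
    (hint.mono_set (by rw [Set.uIcc_of_le hmb.le]; exact Set.Icc_subset_Icc ham.le le_rfl)).intervalIntegrable
  -- integration by parts identities
  have ibp1 := triple_ibp (f := f) (α := a) (β := m)
    (cubic_d1 a m) (cubic_d2 a m) (cubic_d3 a m)
    (fun x hx => (hd1 x (hsub1 hx)).hasDerivAt)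
    (fun x hx => (hd2 x (hsub1 hx)).hasDerivAt)
    (fun x hx => (hd3 x (hsub1 hx)).hasDerivAt) hint1
  have ibp2 := triple_ibp (f := f) (α := m) (β := b)
    (cubic_d1 b m) (cubic_d2 b m) (cubic_d3 b m)
    (fun x hx => (hd1 x (hsub2 hx)).hasDerivAt)
    (fun x hx => (hd2 x (hsub2 hx)).hasDerivAt)
    (fun x hx => (hd3 x (hsub2 hx)).hasDerivAt) hint2
  have hfint1 : IntervalIntegrable f volume a m :=
    (ContinuousOn.intervalIntegrable fun x hx =>
      ((hd1 x (hsub1 hx)).continuousAt).continuousWithinAt)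
  have hfint2 : IntervalIntegrable f volume m b :=
    (ContinuousOn.intervalIntegrable fun x hx =>
      ((hd1 x (hsub2 hx)).continuousAt).continuousWithinAt)
  have total : (∫ x in a..b, f x) - (b - a) / 6 * (f a + 4 * f m + f b)
      = (∫ x in a..m, (-(1/6)*((x-a)^2*(x-m))) * g x)
        + (∫ x in m..b, (-(1/6)*((x-b)^2*(x-m))) * g x) := by
    rw [← intervalIntegral.integral_add_adjacent_intervals hfint1 hfint2]
    rw [show (∫ x in a..m, (-(1/6)*((x-a)^2*(x-m))) * g x)
        = ∫ x in a..m, (fun x => -(1/6)*((x-a)^2*(x-m))) x * g x from rfl, ibp1]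
    rw [show (∫ x in m..b, (-(1/6)*((x-b)^2*(x-m))) * g x)
        = ∫ x in m..b, (fun x => -(1/6)*((x-b)^2*(x-m))) x * g x from rfl, ibp2]
    beta_reduce
    rw [hm]
    ring
  -- convexity pointwise bound
  have hLb : ∀ x ∈ Set.Icc a b, |g x| ^ q ≤ ((b-x)*A + (x-a)*B)/(b-a) := by
    intro x hx
    have hba : (0:ℝ) < b - a := by linarith
    have ht0 : 0 ≤ (b-x)/(b-a) := div_nonneg (by linarith [hx.2]) hba.le
    have ht1 : 0 ≤ (x-a)/(b-a) := div_nonneg (by linarith [hx.1]) hba.le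
    have hsum : (b-x)/(b-a) + (x-a)/(b-a) = 1 := by field_simp; ring
    have hcx := hconv.2 (Set.left_mem_Icc.mpr hab.le) (Set.right_mem_Icc.mpr hab.le)
      ht0 ht1 hsum
    have hx' : (b-x)/(b-a) * a + (x-a)/(b-a) * b = x := by field_simp; ring
    calc |g x| ^ q ≤ (b-x)/(b-a) * A + (x-a)/(b-a) * B := by
          simpa [smul_eq_mul, hx', hA, hB] using hcx
      _ = ((b-x)*A + (x-a)*B)/(b-a) := by ring
  have hCb : ∀ x ∈ Set.Icc a b, ((b-x)*A + (x-a)*B)/(b-a) ≤ A + B := by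
    intro x hx
    rw [div_le_iff₀ (by linarith : (0:ℝ) < b - a)]
    nlinarith [hx.1, hx.2]
  have hLcont : Continuous (fun x : ℝ => ((b-x)*A + (x-a)*B)/(b-a)) := by fun_prop
  have hk1cont : Continuous (fun x : ℝ => -(1/6)*((x-a)^2*(x-m))) := by fun_prop
  have hk2cont : Continuous (fun x : ℝ => -(1/6)*((x-b)^2*(x-m))) := by fun_prop
  -- Hölder estimates
  have hh1 := half_holder (g := g) ham hcj
    (hint.mono_set (Set.Icc_subset_Icc le_rfl hmb.le)) hk1cont hLcont
    (fun x hx => hLb x (Set.Icc_subset_Icc le_rfl hmb.le hx))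
    (fun x hx => hCb x (Set.Icc_subset_Icc le_rfl hmb.le hx))
  have hh2 := half_holder (g := g) hmb hcj
    (hint.mono_set (Set.Icc_subset_Icc ham.le le_rfl)) hk2cont hLcont
    (fun x hx => hLb x (Set.Icc_subset_Icc ham.le le_rfl hx))
    (fun x hx => hCb x (Set.Icc_subset_Icc ham.le le_rfl hx))
  -- compute kernel p-integrals
  set G : ℝ := Gamma (2 * p + 1) * Gamma (p + 1) / Gamma (3 * p + 2) with hGd
  have hG0 : 0 ≤ G := by
    rw [hGd]
    have := Real.Gamma_pos_of_pos (show (0:ℝ) < 2*p+1 by linarith)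
    have := Real.Gamma_pos_of_pos (show (0:ℝ) < p+1 by linarith)
    have := Real.Gamma_pos_of_pos (show (0:ℝ) < 3*p+2 by linarith)
    positivity
  have ek1 : ∫ x in a..m, |(-(1/6)*((x-a)^2*(x-m)))| ^ p
      = (1/6:ℝ)^(p:ℝ) * ((m-a)^(3*p+1) * G) := by
    have e : ∫ x in a..m, |(-(1/6)*((x-a)^2*(x-m)))| ^ p
        = ∫ x in a..m, (1/6:ℝ)^(p:ℝ) * ((x-a)^2*(m-x))^p := by
      apply intervalIntegral.integral_congr
      intro x hx
      rw [Set.uIcc_of_le ham.le] at hx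
      beta_reduce
      have h1 : |(-(1/6)*((x-a)^2*(x-m)))| = (1/6)*((x-a)^2*(m-x)) := by
        rw [show -(1/6)*((x-a)^2*(x-m)) = (1/6)*((x-a)^2*(m-x)) by ring]
        exact abs_of_nonneg (by nlinarith [hx.1, hx.2])
      rw [h1, Real.mul_rpow (by norm_num) (by nlinarith [hx.1, hx.2])]
    rw [e, intervalIntegral.integral_const_mul, kernel_int ham hp0, beta_eval hp0, hGd]
  have ek2 : ∫ x in m..b, |(-(1/6)*((x-b)^2*(x-m)))| ^ p
      = (1/6:ℝ)^(p:ℝ) * ((m-a)^(3*p+1) * G) := by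
    have e : ∫ x in m..b, |(-(1/6)*((x-b)^2*(x-m)))| ^ p
        = ∫ x in m..b, (1/6:ℝ)^(p:ℝ) * ((b-x)^2*(x-m))^p := by
      apply intervalIntegral.integral_congr
      intro x hx
      rw [Set.uIcc_of_le hmb.le] at hx
      beta_reduce
      have h1 : |(-(1/6)*((x-b)^2*(x-m)))| = (1/6)*((b-x)^2*(x-m)) := by
        rw [abs_of_nonpos (by nlinarith [hx.1, hx.2])]
        ring
      rw [h1, Real.mul_rpow (by norm_num) (by nlinarith [hx.1, hx.2])]
    have flip : ∫ x in m..b, ((b-x)^2*(x-m))^p = ∫ x in a..m, ((x-a)^2*(m-x))^p := by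
      have hcs := intervalIntegral.integral_comp_sub_left (a := a) (b := m)
        (fun x => ((b-x)^2*(x-m))^p) (a+b)
      rw [show a + b - m = m by rw [hm]; ring, show a + b - a = b by ring] at hcs
      rw [← hcs]
      apply intervalIntegral.integral_congr
      intro x hx
      show ((b-(a+b-x))^2*((a+b-x)-m))^p = ((x-a)^2*(m-x))^p
      rw [show b-(a+b-x) = x - a by ring, show (a+b-x)-m = m - x by rw [hm]; ring]
    rw [e, intervalIntegral.integral_const_mul, flip, kernel_int ham hp0, beta_eval hp0, hGd]
  -- compute linear integrals
  have eL1 : ∫ x in a..m, ((b-x)*A + (x-a)*B)/(b-a) = (b-a)*(3*A+B)/8 := by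
    have hfun : (fun x : ℝ => ((b-x)*A + (x-a)*B)/(b-a))
        = fun x => (b*A - a*B)/(b-a) + ((B-A)/(b-a))*x := by
      funext x; field_simp; ring
    rw [hfun, integral_linear, hm]
    exact lin_eval1 a b A B hab
  have eL2 : ∫ x in m..b, ((b-x)*A + (x-a)*B)/(b-a) = (b-a)*(A+3*B)/8 := by
    have hfun : (fun x : ℝ => ((b-x)*A + (x-a)*B)/(b-a))
        = fun x => (b*A - a*B)/(b-a) + ((B-A)/(b-a))*x := by
      funext x; field_simp; ring
    rw [hfun, integral_linear, hm]
    exact lin_eval2 a b A B hab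
  rw [ek1, eL1] at hh1
  rw [ek2, eL2] at hh2
  -- final algebra
  clear_value g m A B G
  have hma : m - a = (b-a)/2 := by rw [hm]; ring
  rw [hma] at hh1 hh2
  have habs : |(∫ x in a..b, f x) - (b - a) / 6 * (f a + 4 * f m + f b)|
      ≤ |∫ x in a..m, (-(1/6)*((x-a)^2*(x-m))) * g x|
        + |∫ x in m..b, (-(1/6)*((x-b)^2*(x-m))) * g x| := by
    rw [total]; exact abs_add_le _ _
  refine habs.trans ((add_le_add hh1 hh2).trans (le_of_eq ?_))
  exact final_algebra (b-a) A B p q G (sub_pos.mpr hab) hA0 hB0 hG0 hp hq hpq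
end

section
/- Let f : I → ℝ where I ⊆ ℝ is an interval, f three times differentiable on the interior I° with f''' integrable on [a,b], where a, b ∈ I° with a < b. Suppose |f'''|^q is convex on [a,b] for some q ≥ 1. Then |∫_a^b f(x) dx − ((b−a)/6)·[f(a) + 4·f((a+b)/2) + f(b)]| ≤ ((b−a)^4/1152)·{ ((3|f'''(a)|^q + 7|f'''(b)|^q)/10)^{1/q} + ((7|f'''(a)|^q + 3|f'''(b)|^q)/10)^{1/q} }. -/
open MeasureTheory Real Set

lemma hasDerivAt_spow (s : ℝ) (n : ℕ) (x : ℝ) :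
    HasDerivAt (fun y => (y - s) ^ n) ((n : ℝ) * (x - s) ^ (n - 1)) x := by
  simpa using ((hasDerivAt_id x).sub_const s).fun_pow n

lemma integral_eval {l r : ℝ} (F Φ : ℝ → ℝ) (hF : Continuous F)
    (h : ∀ x, HasDerivAt Φ (F x) x) : ∫ x in l..r, F x = Φ r - Φ l :=
  intervalIntegral.integral_eq_sub_of_hasDerivAt (fun x _ => h x) (hF.intervalIntegrable l r)

lemma ibp3 {l r : ℝ} {f u₃ u₂ u₁ : ℝ → ℝ}
    (hf1 : ∀ x ∈ uIcc l r, HasDerivAt f (deriv f x) x)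
    (hf2 : ∀ x ∈ uIcc l r, HasDerivAt (deriv f) (deriv (deriv f) x) x)
    (hf3 : ∀ x ∈ uIcc l r, HasDerivAt (deriv (deriv f)) (deriv (deriv (deriv f)) x) x)
    (hu3 : ∀ x, HasDerivAt u₃ (u₂ x) x)
    (hu2 : ∀ x, HasDerivAt u₂ (u₁ x) x)
    (hu1 : ∀ x, HasDerivAt u₁ (-1) x)
    (hg : IntervalIntegrable (deriv (deriv (deriv f))) volume l r) :
    ∫ x in l..r, u₃ x * deriv (deriv (deriv f)) x
      = u₃ r * deriv (deriv f) r - u₃ l * deriv (deriv f) l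
        - (u₂ r * deriv f r - u₂ l * deriv f l)
        + (u₁ r * f r - u₁ l * f l) + ∫ x in l..r, f x := by
  have hu2c : Continuous u₂ := continuous_iff_continuousAt.mpr fun x => (hu2 x).continuousAt
  have hu1c : Continuous u₁ := continuous_iff_continuousAt.mpr fun x => (hu1 x).continuousAt
  have hfc : ContinuousOn f (uIcc l r) := fun x hx => ((hf1 x hx).continuousAt).continuousWithinAt
  have hf1c : ContinuousOn (deriv f) (uIcc l r) :=
    fun x hx => ((hf2 x hx).continuousAt).continuousWithinAt
  have hf2c : ContinuousOn (deriv (deriv f)) (uIcc l r) :=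
    fun x hx => ((hf3 x hx).continuousAt).continuousWithinAt
  rw [intervalIntegral.integral_mul_deriv_eq_deriv_mul (fun x _ => hu3 x) hf3
    (hu2c.intervalIntegrable l r) hg]
  rw [intervalIntegral.integral_mul_deriv_eq_deriv_mul (fun x _ => hu2 x) hf2
    (hu1c.intervalIntegrable l r) (hf2c.intervalIntegrable)]
  rw [intervalIntegral.integral_mul_deriv_eq_deriv_mul (fun x _ => hu1 x) hf1
    ((continuous_const (y := (-1:ℝ))).intervalIntegrable l r) (hf1c.intervalIntegrable)]
  have e : ∫ x in l..r, (-1 : ℝ) * f x = - ∫ x in l..r, f x := by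
    rw [intervalIntegral.integral_const_mul]; ring
  rw [e]; ring
lemma spow2 (s x : ℝ) : HasDerivAt (fun y => (y-s)^2) (2*(x-s)) x := by
  simpa using ((hasDerivAt_id x).sub_const s).fun_pow 2
lemma spow3 (s x : ℝ) : HasDerivAt (fun y => (y-s)^3) (3*(x-s)^2) x := by
  simpa using ((hasDerivAt_id x).sub_const s).fun_pow 3
lemma spow4 (s x : ℝ) : HasDerivAt (fun y => (y-s)^4) (4*(x-s)^3) x := by
  simpa using ((hasDerivAt_id x).sub_const s).fun_pow 4
lemma spow5 (s x : ℝ) : HasDerivAt (fun y => (y-s)^5) (5*(x-s)^4) x := by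
  simpa using ((hasDerivAt_id x).sub_const s).fun_pow 5
lemma saff (c d x : ℝ) : HasDerivAt (fun y => c - d*y) (-d) x := by
  simpa using ((hasDerivAt_id x).const_mul d).const_sub c

lemma holder_step {l r q : ℝ} (hlr : l ≤ r) (hq : 1 ≤ q) {w φ β : ℝ → ℝ}
    (hw : Continuous w) (hβ : Continuous β)
    (hw0 : ∀ x ∈ Set.Icc l r, 0 ≤ w x)
    (hφ0 : ∀ x, 0 ≤ φ x)
    (hφm : AEStronglyMeasurable φ (volume.restrict (Set.Ioc l r)))
    (hβbd : ∀ x ∈ Set.Icc l r, φ x ^ q ≤ β x) :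
    ∫ x in l..r, w x * φ x ≤
      (∫ x in l..r, w x) ^ (1 - 1/q) * (∫ x in l..r, w x * β x) ^ (1/q) := by
  have hq0 : (0:ℝ) < q := lt_of_lt_of_le one_pos hq
  have hq0' : q ≠ 0 := hq0.ne'
  have hφqm : AEStronglyMeasurable (fun x => φ x ^ q) (volume.restrict (Set.Ioc l r)) :=
    (Real.continuous_rpow_const hq0.le).comp_aestronglyMeasurable hφm
  have hφle : ∀ x ∈ Set.Icc l r, φ x ≤ β x ^ (1/q) := by
    intro x hx
    have h1 : φ x = (φ x ^ q) ^ (1/q) := by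
      rw [← Real.rpow_mul (hφ0 x), mul_one_div, div_self hq0', Real.rpow_one]
    rw [h1]
    exact Real.rpow_le_rpow (Real.rpow_nonneg (hφ0 x) q) (hβbd x hx) (one_div_nonneg.2 hq0.le)
  have hi_wβ : IntervalIntegrable (fun x => w x * β x) volume l r :=
    (hw.mul hβ).intervalIntegrable l r
  have hi_wφ : IntervalIntegrable (fun x => w x * φ x) volume l r := by
    rw [intervalIntegrable_iff_integrableOn_Ioc_of_le hlr]
    have hβq : Continuous (fun x => β x ^ (1/q)) :=
      hβ.rpow_const (fun x => Or.inr (one_div_nonneg.2 hq0.le))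
    apply Integrable.mono' ((hw.mul hβq).integrableOn_Ioc)
    · exact (hw.aestronglyMeasurable.restrict).mul hφm
    · rw [ae_restrict_iff' measurableSet_Ioc]
      refine ae_of_all _ (fun x hx => ?_)
      have hx' := Ioc_subset_Icc_self hx
      rw [Real.norm_eq_abs, abs_of_nonneg (mul_nonneg (hw0 x hx') (hφ0 x))]
      exact mul_le_mul_of_nonneg_left (hφle x hx') (hw0 x hx')
  have hi_wφq : IntervalIntegrable (fun x => w x * φ x ^ q) volume l r := by
    rw [intervalIntegrable_iff_integrableOn_Ioc_of_le hlr]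
    apply Integrable.mono' ((hw.mul hβ).integrableOn_Ioc)
    · exact (hw.aestronglyMeasurable.restrict).mul hφqm
    · rw [ae_restrict_iff' measurableSet_Ioc]
      refine ae_of_all _ (fun x hx => ?_)
      have hx' := Ioc_subset_Icc_self hx
      rw [Real.norm_eq_abs,
        abs_of_nonneg (mul_nonneg (hw0 x hx') (Real.rpow_nonneg (hφ0 x) q))]
      exact mul_le_mul_of_nonneg_left (hβbd x hx') (hw0 x hx')
  have hTV : ∫ x in l..r, w x * φ x ^ q ≤ ∫ x in l..r, w x * β x :=
    intervalIntegral.integral_mono_on hlr hi_wφq hi_wβ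
      (fun x hx => mul_le_mul_of_nonneg_left (hβbd x hx) (hw0 x hx))
  have hTnn : 0 ≤ ∫ x in l..r, w x * φ x ^ q :=
    intervalIntegral.integral_nonneg hlr
      (fun x hx => mul_nonneg (hw0 x hx) (Real.rpow_nonneg (hφ0 x) q))
  have hWnn : 0 ≤ ∫ x in l..r, w x := intervalIntegral.integral_nonneg hlr hw0
  rcases eq_or_lt_of_le hq with hq1 | hq1
  · subst hq1
    have e1 : (1:ℝ) - 1/1 = 0 := by norm_num
    have e2 : (1:ℝ)/1 = 1 := by norm_num
    rw [e1, e2, Real.rpow_zero, Real.rpow_one, one_mul]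
    simp_rw [Real.rpow_one] at hTV
    exact hTV
  · haveI : IsFiniteMeasure (volume.restrict (Set.Ioc l r)) :=
      ⟨by rw [Measure.restrict_apply_univ]; exact measure_Ioc_lt_top⟩
    have hpq : (Real.conjExponent q).HolderConjugate q :=
      (Real.HolderConjugate.conjExponent hq1).symm
    set p := Real.conjExponent q with hp
    have hp0 : 0 < p := hpq.pos
    have h1p : 1/p = 1 - 1/q := by
      have h := hpq.inv_add_inv_eq_one
      rw [inv_eq_one_div, inv_eq_one_div] at h
      linarith
    have hsum1 : 1/p + 1/q = 1 := by rw [h1p]; ring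
    set F := fun x => w x ^ (1/p) with hF
    set G := fun x => w x ^ (1/q) * φ x with hG
    have hFc : Continuous F := hw.rpow_const (fun x => Or.inr (one_div_nonneg.2 hp0.le))
    have hwqc : Continuous (fun x => w x ^ (1/q)) :=
      hw.rpow_const (fun x => Or.inr (one_div_nonneg.2 hq0.le))
    obtain ⟨CF, hCF⟩ := (isCompact_Icc (a := l) (b := r)).exists_bound_of_continuousOn
      hFc.continuousOn
    obtain ⟨Cw, hCw⟩ := (isCompact_Icc (a := l) (b := r)).exists_bound_of_continuousOn
      hwqc.continuousOn
    obtain ⟨Cβ, hCβ⟩ := (isCompact_Icc (a := l) (b := r)).exists_bound_of_continuousOn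
      (hβ.rpow_const (fun x => Or.inr (one_div_nonneg.2 hq0.le)) :
        Continuous fun x => β x ^ (1/q)).continuousOn
    have hCw0 : 0 ≤ Cw := le_trans (norm_nonneg _) (hCw l (left_mem_Icc.2 hlr))
    have hCβ0 : 0 ≤ Cβ := le_trans (norm_nonneg _) (hCβ l (left_mem_Icc.2 hlr))
    have hFm : MemLp F (ENNReal.ofReal p) (volume.restrict (Set.Ioc l r)) := by
      apply MemLp.of_bound hFc.aestronglyMeasurable.restrict CF
      rw [ae_restrict_iff' measurableSet_Ioc]
      exact ae_of_all _ (fun x hx => hCF x (Ioc_subset_Icc_self hx))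
    have hGm : MemLp G (ENNReal.ofReal q) (volume.restrict (Set.Ioc l r)) := by
      apply MemLp.of_bound ((hwqc.aestronglyMeasurable.restrict).mul hφm) (Cw * Cβ)
      rw [ae_restrict_iff' measurableSet_Ioc]
      refine ae_of_all _ (fun x hx => ?_)
      have hx' := Ioc_subset_Icc_self hx
      simp only [Pi.mul_apply, norm_mul]
      have h2 : ‖φ x‖ ≤ Cβ := by
        rw [Real.norm_eq_abs, abs_of_nonneg (hφ0 x)]
        refine le_trans (hφle x hx') ?_
        refine le_trans (le_abs_self _) ?_
        rw [← Real.norm_eq_abs]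
        exact hCβ x hx'
      exact mul_le_mul (hCw x hx') h2 (norm_nonneg _) hCw0
    have hFnn : 0 ≤ᵐ[volume.restrict (Set.Ioc l r)] F := by
      rw [Filter.EventuallyLE, ae_restrict_iff' measurableSet_Ioc]
      exact ae_of_all _ (fun x hx =>
        Real.rpow_nonneg (hw0 x (Ioc_subset_Icc_self hx)) _)
    have hGnn : 0 ≤ᵐ[volume.restrict (Set.Ioc l r)] G := by
      rw [Filter.EventuallyLE, ae_restrict_iff' measurableSet_Ioc]
      exact ae_of_all _ (fun x hx =>
        mul_nonneg (Real.rpow_nonneg (hw0 x (Ioc_subset_Icc_self hx)) _) (hφ0 x))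
    have hmain := integral_mul_le_Lp_mul_Lq_of_nonneg hpq hFnn hGnn hFm hGm
    have e1 : ∫ x, F x * G x ∂(volume.restrict (Set.Ioc l r)) = ∫ x in l..r, w x * φ x := by
      rw [intervalIntegral.integral_of_le hlr]
      refine setIntegral_congr_fun measurableSet_Ioc (fun x hx => ?_)
      have hx' := Ioc_subset_Icc_self hx
      simp only [hF, hG]
      rw [← mul_assoc, ← Real.rpow_add' (hw0 x hx') (by rw [hsum1]; norm_num), hsum1,
        Real.rpow_one]
    have e2 : ∫ x, F x ^ p ∂(volume.restrict (Set.Ioc l r)) = ∫ x in l..r, w x := by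
      rw [intervalIntegral.integral_of_le hlr]
      refine setIntegral_congr_fun measurableSet_Ioc (fun x hx => ?_)
      have hx' := Ioc_subset_Icc_self hx
      simp only [hF]
      rw [← Real.rpow_mul (hw0 x hx'), one_div_mul_cancel hp0.ne', Real.rpow_one]
    have e3 : ∫ x, G x ^ q ∂(volume.restrict (Set.Ioc l r))
        = ∫ x in l..r, w x * φ x ^ q := by
      rw [intervalIntegral.integral_of_le hlr]
      refine setIntegral_congr_fun measurableSet_Ioc (fun x hx => ?_)
      have hx' := Ioc_subset_Icc_self hx
      simp only [hG]
      rw [Real.mul_rpow (Real.rpow_nonneg (hw0 x hx') _) (hφ0 x),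
        ← Real.rpow_mul (hw0 x hx'), one_div_mul_cancel hq0', Real.rpow_one]
    rw [e1, e2, e3, h1p] at hmain
    refine le_trans hmain ?_
    exact mul_le_mul_of_nonneg_left
      (Real.rpow_le_rpow hTnn hTV (one_div_nonneg.2 hq0.le)) (Real.rpow_nonneg hWnn _)
set_option maxHeartbeats 1000000 in
theorem simpson_convex_power_mean (I : Set ℝ) (hI : I.OrdConnected) (f : ℝ → ℝ)
    (a b q : ℝ) (ha : a ∈ interior I) (hb : b ∈ interior I) (hab : a < b)
    (hd1 : ∀ x ∈ interior I, DifferentiableAt ℝ f x)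
    (hd2 : ∀ x ∈ interior I, DifferentiableAt ℝ (deriv f) x)
    (hd3 : ∀ x ∈ interior I, DifferentiableAt ℝ (deriv (deriv f)) x)
    (hint : IntegrableOn (deriv (deriv (deriv f))) (Set.Icc a b))
    (hq : 1 ≤ q)
    (hconv : ConvexOn ℝ (Set.Icc a b) fun x => |deriv (deriv (deriv f)) x| ^ q) :
    |(∫ x in a..b, f x) - (b - a) / 6 * (f a + 4 * f ((a + b) / 2) + f b)| ≤
      (b - a) ^ 4 / 1152 *
        (((3 * |deriv (deriv (deriv f)) a| ^ q + 7 * |deriv (deriv (deriv f)) b| ^ q) / 10)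
            ^ (1 / q) +
          ((7 * |deriv (deriv (deriv f)) a| ^ q + 3 * |deriv (deriv (deriv f)) b| ^ q) / 10)
            ^ (1 / q)) := by
  set g := deriv (deriv (deriv f)) with hg
  set m := (a + b) / 2 with hm
  have h0 : (0:ℝ) < b - a := sub_pos.2 hab
  have ham : a ≤ m := by rw [hm]; linarith
  have hmb : m ≤ b := by rw [hm]; linarith
  -- [a,b] ⊆ interior I
  have hIcc : Set.Icc a b ⊆ interior I := by
    obtain ⟨εa, hεa, hba⟩ := Metric.isOpen_iff.1 isOpen_interior a ha
    obtain ⟨εb, hεb, hbb⟩ := Metric.isOpen_iff.1 isOpen_interior b hb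
    have h1 : a - εa/2 ∈ I := by
      refine interior_subset (hba ?_)
      rw [Metric.mem_ball, Real.dist_eq, show a - εa/2 - a = -(εa/2) by ring, abs_neg,
        abs_of_nonneg (by linarith)]
      linarith
    have h2 : b + εb/2 ∈ I := by
      refine interior_subset (hbb ?_)
      rw [Metric.mem_ball, Real.dist_eq, show b + εb/2 - b = εb/2 by ring,
        abs_of_nonneg (by linarith)]
      linarith
    have h3 : Set.Ioo (a - εa/2) (b + εb/2) ⊆ interior I :=
      interior_maximal (Set.Ioo_subset_Icc_self.trans (hI.out h1 h2)) isOpen_Ioo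
    exact (Set.Icc_subset_Ioo (by linarith) (by linarith)).trans h3
  -- derivative facts
  have Hf1 : ∀ x ∈ Set.Icc a b, HasDerivAt f (deriv f x) x :=
    fun x hx => (hd1 x (hIcc hx)).hasDerivAt
  have Hf2 : ∀ x ∈ Set.Icc a b, HasDerivAt (deriv f) (deriv (deriv f) x) x :=
    fun x hx => (hd2 x (hIcc hx)).hasDerivAt
  have Hf3 : ∀ x ∈ Set.Icc a b, HasDerivAt (deriv (deriv f)) (g x) x :=
    fun x hx => (hd3 x (hIcc hx)).hasDerivAt
  have huIcc1 : Set.uIcc a m ⊆ Set.Icc a b := by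
    rw [Set.uIcc_of_le ham]; exact Set.Icc_subset_Icc le_rfl hmb
  have huIcc2 : Set.uIcc m b ⊆ Set.Icc a b := by
    rw [Set.uIcc_of_le hmb]; exact Set.Icc_subset_Icc ham le_rfl
  have hgam : IntervalIntegrable g volume a m :=
    (intervalIntegrable_iff_integrableOn_Icc_of_le ham).2
      (hint.mono_set (Set.Icc_subset_Icc le_rfl hmb))
  have hgmb : IntervalIntegrable g volume m b :=
    (intervalIntegrable_iff_integrableOn_Icc_of_le hmb).2
      (hint.mono_set (Set.Icc_subset_Icc ham le_rfl))
  -- kernel derivative chains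
  have hu3 : ∀ x : ℝ, HasDerivAt (fun y => (y-a)^2*(a+b-2*y)/12) ((x-a)*(2*a+b-3*x)/6) x := by
    intro x
    have X := ((spow2 a x).fun_mul (saff (a+b) 2 x)).div_const 12
    exact X.congr_deriv (by ring)
  have hu2 : ∀ x : ℝ, HasDerivAt (fun y => (y-a)*(2*a+b-3*y)/6) ((5*a+b-6*x)/6) x := by
    intro x
    have X := ((((hasDerivAt_id x).sub_const a)).fun_mul (saff (2*a+b) 3 x)).div_const 6
    simp only [id_eq] at X
    exact X.congr_deriv (by ring)
  have hu1 : ∀ x : ℝ, HasDerivAt (fun y => (5*a+b-6*y)/6) (-1 : ℝ) x := by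
    intro x
    have X := (saff (5*a+b) 6 x).div_const 6
    exact X.congr_deriv (by norm_num)
  have hv3 : ∀ x : ℝ, HasDerivAt (fun y => (y-b)^2*(a+b-2*y)/12) ((x-b)*(a+2*b-3*x)/6) x := by
    intro x
    have X := ((spow2 b x).fun_mul (saff (a+b) 2 x)).div_const 12
    exact X.congr_deriv (by ring)
  have hv2 : ∀ x : ℝ, HasDerivAt (fun y => (y-b)*(a+2*b-3*y)/6) ((a+5*b-6*x)/6) x := by
    intro x
    have X := ((((hasDerivAt_id x).sub_const b)).fun_mul (saff (a+2*b) 3 x)).div_const 6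
    simp only [id_eq] at X
    exact X.congr_deriv (by ring)
  have hv1 : ∀ x : ℝ, HasDerivAt (fun y => (a+5*b-6*y)/6) (-1 : ℝ) x := by
    intro x
    have X := (saff (a+5*b) 6 x).div_const 6
    exact X.congr_deriv (by norm_num)
  -- integration by parts identities
  have id1 := ibp3 (fun x hx => Hf1 x (huIcc1 hx)) (fun x hx => Hf2 x (huIcc1 hx))
    (fun x hx => Hf3 x (huIcc1 hx)) hu3 hu2 hu1 hgam
  have id2 := ibp3 (fun x hx => Hf1 x (huIcc2 hx)) (fun x hx => Hf2 x (huIcc2 hx))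
    (fun x hx => Hf3 x (huIcc2 hx)) hv3 hv2 hv1 hgmb
  beta_reduce at id1 id2
  -- splitting the integral of f
  have hfc : ContinuousOn f (Set.Icc a b) := fun x hx => (Hf1 x hx).continuousAt.continuousWithinAt
  have hsplit : (∫ x in a..m, f x) + ∫ x in m..b, f x = ∫ x in a..b, f x :=
    intervalIntegral.integral_add_adjacent_intervals
      ((hfc.mono huIcc1).intervalIntegrable) ((hfc.mono huIcc2).intervalIntegrable)
  have hEsum : (∫ x in a..b, f x) - (b - a) / 6 * (f a + 4 * f m + f b)
      = (∫ x in a..m, (x-a)^2*(a+b-2*x)/12 * g x)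
        + ∫ x in m..b, (x-b)^2*(a+b-2*x)/12 * g x := by
    rw [id1, id2, ← hsplit, hm]
    ring
  -- convexity bound
  have hne : b - a ≠ 0 := h0.ne'
  have hβbd : ∀ x ∈ Set.Icc a b,
      |g x| ^ q ≤ ((b-x)*|g a|^q + (x-a)*|g b|^q)/(b-a) := by
    intro x hx
    have ht0 : 0 ≤ (b-x)/(b-a) := div_nonneg (by linarith [hx.2]) h0.le
    have hs0 : 0 ≤ (x-a)/(b-a) := div_nonneg (by linarith [hx.1]) h0.le
    have hts : (b-x)/(b-a) + (x-a)/(b-a) = 1 := by field_simp [hne]; ring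
    have hcc := hconv.2 (Set.left_mem_Icc.2 hab.le) (Set.right_mem_Icc.2 hab.le) ht0 hs0 hts
    simp only [smul_eq_mul] at hcc
    have hxe : (b-x)/(b-a) * a + (x-a)/(b-a) * b = x := by field_simp [hne]; ring
    rw [hxe] at hcc
    refine le_trans hcc (le_of_eq ?_)
    ring
  -- absolute value bound
  have habs : |(∫ x in a..b, f x) - (b - a) / 6 * (f a + 4 * f m + f b)|
      ≤ (∫ x in a..m, (x-a)^2*(a+b-2*x)/12 * |g x|)
        + ∫ x in m..b, (x-b)^2*(2*x-a-b)/12 * |g x| := by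
    rw [hEsum]
    refine le_trans (abs_add_le _ _) (add_le_add ?_ ?_)
    · refine le_trans (intervalIntegral.abs_integral_le_integral_abs ham) (le_of_eq ?_)
      apply intervalIntegral.integral_congr
      intro x hx
      rw [Set.uIcc_of_le ham] at hx
      have h2 : x ≤ (a+b)/2 := by have := hx.2; rwa [hm] at this
      have h1 : 0 ≤ (x-a)^2*(a+b-2*x)/12 := by nlinarith [sq_nonneg (x-a)]
      simp only [abs_mul]
      rw [abs_of_nonneg h1]
    · refine le_trans (intervalIntegral.abs_integral_le_integral_abs hmb) (le_of_eq ?_)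
      apply intervalIntegral.integral_congr
      intro x hx
      rw [Set.uIcc_of_le hmb] at hx
      have h2 : (a+b)/2 ≤ x := by have := hx.1; rwa [hm] at this
      have h1 : (x-b)^2*(a+b-2*x)/12 ≤ 0 := by nlinarith [sq_nonneg (x-b)]
      simp only [abs_mul]
      rw [abs_of_nonpos h1]
      ring
  -- integral evaluations
  have int1 : ∫ x in a..m, (x-a)^2*(a+b-2*x)/12 = (b-a)^4/1152 := by
    have hΦ : ∀ x : ℝ, HasDerivAt (fun y => ((b-a)*(y-a)^3/3 - (y-a)^4/2)/12)
        ((x-a)^2*(a+b-2*x)/12) x := by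
      intro x
      have X := ((((spow3 a x).const_mul (b-a)).div_const 3).sub
        ((spow4 a x).div_const 2)).div_const 12
      exact X.congr_deriv (by ring)
    rw [integral_eval (fun x => (x-a)^2*(a+b-2*x)/12) _ (by fun_prop) hΦ, hm]
    ring
  have intV1 : ∫ x in a..m, (x-a)^2*(a+b-2*x)/12 * ((b-x)*|g a|^q + (x-a)*|g b|^q)
      = (7*|g a|^q + 3*|g b|^q)*(b-a)^5/11520 := by
    have hΦ : ∀ x : ℝ, HasDerivAt
        (fun y => |g a|^q*((b-a)^2*(y-a)^3/3 - 3*(b-a)*(y-a)^4/4 + 2*(y-a)^5/5)/12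
          + |g b|^q*((b-a)*(y-a)^4/4 - 2*(y-a)^5/5)/12)
        ((x-a)^2*(a+b-2*x)/12 * ((b-x)*|g a|^q + (x-a)*|g b|^q)) x := by
      intro x
      have XA := (((((((spow3 a x).const_mul ((b-a)^2)).div_const 3).sub
        (((spow4 a x).const_mul (3*(b-a))).div_const 4)).add
        (((spow5 a x).const_mul 2).div_const 5)).const_mul (|g a|^q)).div_const 12)
      have XB := (((((spow4 a x).const_mul (b-a)).div_const 4).sub
        (((spow5 a x).const_mul 2).div_const 5)).const_mul (|g b|^q)).div_const 12
      exact (XA.add XB).congr_deriv (by ring)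
    rw [integral_eval
      (fun x => (x-a)^2*(a+b-2*x)/12 * ((b-x)*|g a|^q + (x-a)*|g b|^q)) _ (by fun_prop) hΦ, hm]
    ring
  have int2 : ∫ x in m..b, (x-b)^2*(2*x-a-b)/12 = (b-a)^4/1152 := by
    have hΦ : ∀ x : ℝ, HasDerivAt (fun y => ((y-b)^4/2 + (b-a)*(y-b)^3/3)/12)
        ((x-b)^2*(2*x-a-b)/12) x := by
      intro x
      have X := (((spow4 b x).div_const 2).add
        (((spow3 b x).const_mul (b-a)).div_const 3)).div_const 12
      exact X.congr_deriv (by ring)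
    rw [integral_eval (fun x => (x-b)^2*(2*x-a-b)/12) _ (by fun_prop) hΦ, hm]
    ring
  have intV2 : ∫ x in m..b, (x-b)^2*(2*x-a-b)/12 * ((b-x)*|g a|^q + (x-a)*|g b|^q)
      = (3*|g a|^q + 7*|g b|^q)*(b-a)^5/11520 := by
    have hΦ : ∀ x : ℝ, HasDerivAt
        (fun y => -(|g a|^q*(2*(y-b)^5/5 + (b-a)*(y-b)^4/4)/12)
          + |g b|^q*(2*(y-b)^5/5 + 3*(b-a)*(y-b)^4/4 + (b-a)^2*(y-b)^3/3)/12)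
        ((x-b)^2*(2*x-a-b)/12 * ((b-x)*|g a|^q + (x-a)*|g b|^q)) x := by
      intro x
      have Y5 := ((spow5 b x).const_mul 2).div_const 5
      have Y4 := ((spow4 b x).const_mul (b-a)).div_const 4
      have Y4' := ((spow4 b x).const_mul (3*(b-a))).div_const 4
      have Y3 := ((spow3 b x).const_mul ((b-a)^2)).div_const 3
      have XA := (((Y5.add Y4).const_mul (|g a|^q)).div_const 12).neg
      have XB := (((Y5.add Y4').add Y3).const_mul (|g b|^q)).div_const 12
      exact (XA.add XB).congr_deriv (by ring)
    rw [integral_eval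
      (fun x => (x-b)^2*(2*x-a-b)/12 * ((b-x)*|g a|^q + (x-a)*|g b|^q)) _ (by fun_prop) hΦ, hm]
    ring
  have eV1 : ∫ x in a..m, (x-a)^2*(a+b-2*x)/12 * (((b-x)*|g a|^q + (x-a)*|g b|^q)/(b-a))
      = ((b-a)^4/1152) * ((7*|g a|^q + 3*|g b|^q)/10) := by
    have e : ∫ x in a..m, (x-a)^2*(a+b-2*x)/12 * (((b-x)*|g a|^q + (x-a)*|g b|^q)/(b-a))
        = (∫ x in a..m, (x-a)^2*(a+b-2*x)/12 * ((b-x)*|g a|^q + (x-a)*|g b|^q))/(b-a) := by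
      rw [← intervalIntegral.integral_div]
      apply intervalIntegral.integral_congr
      intro x _
      ring
    rw [e, intV1, div_eq_iff hne]
    ring
  have eV2 : ∫ x in m..b, (x-b)^2*(2*x-a-b)/12 * (((b-x)*|g a|^q + (x-a)*|g b|^q)/(b-a))
      = ((b-a)^4/1152) * ((3*|g a|^q + 7*|g b|^q)/10) := by
    have e : ∫ x in m..b, (x-b)^2*(2*x-a-b)/12 * (((b-x)*|g a|^q + (x-a)*|g b|^q)/(b-a))
        = (∫ x in m..b, (x-b)^2*(2*x-a-b)/12 * ((b-x)*|g a|^q + (x-a)*|g b|^q))/(b-a) := by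
      rw [← intervalIntegral.integral_div]
      apply intervalIntegral.integral_congr
      intro x _
      ring
    rw [e, intV2, div_eq_iff hne]
    ring
  -- measurability
  have hφm1 : AEStronglyMeasurable (fun x => |g x|) (volume.restrict (Set.Ioc a m)) := by
    have h1 := (hint.mono_set
      ((Set.Ioc_subset_Icc_self).trans (Set.Icc_subset_Icc le_rfl hmb))).aestronglyMeasurable
    simpa [Real.norm_eq_abs] using h1.norm
  have hφm2 : AEStronglyMeasurable (fun x => |g x|) (volume.restrict (Set.Ioc m b)) := by
    have h1 := (hint.mono_set
      ((Set.Ioc_subset_Icc_self).trans (Set.Icc_subset_Icc ham le_rfl))).aestronglyMeasurable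
    simpa [Real.norm_eq_abs] using h1.norm
  -- Hölder applications
  have key1 := holder_step (w := fun x => (x-a)^2*(a+b-2*x)/12) (φ := fun x => |g x|)
    (β := fun x => ((b-x)*|g a|^q + (x-a)*|g b|^q)/(b-a)) ham hq (by fun_prop) (by fun_prop)
    (fun x hx => by
      have h2 : x ≤ (a+b)/2 := by have := hx.2; rwa [hm] at this
      nlinarith [sq_nonneg (x-a)])
    (fun x => abs_nonneg _) hφm1
    (fun x hx => hβbd x (Set.Icc_subset_Icc le_rfl hmb hx))
  have key2 := holder_step (w := fun x => (x-b)^2*(2*x-a-b)/12) (φ := fun x => |g x|)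
    (β := fun x => ((b-x)*|g a|^q + (x-a)*|g b|^q)/(b-a)) hmb hq (by fun_prop) (by fun_prop)
    (fun x hx => by
      have h2 : (a+b)/2 ≤ x := by have := hx.1; rwa [hm] at this
      nlinarith [sq_nonneg (x-b)])
    (fun x => abs_nonneg _) hφm2
    (fun x hx => hβbd x (Set.Icc_subset_Icc ham le_rfl hx))
  beta_reduce at key1 key2
  -- final assembly
  have c1nn : (0:ℝ) ≤ (7*|g a|^q + 3*|g b|^q)/10 := by positivity
  have c2nn : (0:ℝ) ≤ (3*|g a|^q + 7*|g b|^q)/10 := by positivity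
  have hC : (0:ℝ) < (b-a)^4/1152 := by positivity
  have hexp : (1 - 1/q) + 1/q = 1 := by ring
  have bound1 : ∫ x in a..m, (x-a)^2*(a+b-2*x)/12 * |g x|
      ≤ (b-a)^4/1152 * ((7*|g a|^q + 3*|g b|^q)/10)^(1/q) := by
    refine le_trans key1 (le_of_eq ?_)
    rw [int1, eV1, Real.mul_rpow hC.le c1nn, ← mul_assoc, ← Real.rpow_add hC, hexp,
      Real.rpow_one]
  have bound2 : ∫ x in m..b, (x-b)^2*(2*x-a-b)/12 * |g x|
      ≤ (b-a)^4/1152 * ((3*|g a|^q + 7*|g b|^q)/10)^(1/q) := by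
    refine le_trans key2 (le_of_eq ?_)
    rw [int2, eV2, Real.mul_rpow hC.le c2nn, ← mul_assoc, ← Real.rpow_add hC, hexp,
      Real.rpow_one]
  refine le_trans habs (le_trans (add_le_add bound1 bound2) (le_of_eq ?_))
  rw [mul_add]
  exact add_comm _ _
end

section
/- Let f : I → ℝ where I ⊆ ℝ is an interval, f three times differentiable on the interior I° with f''' integrable on [a,b], where a, b ∈ I° with a < b. Suppose |f'''| is convex on [a,b]. Then |∫_a^b f(x) dx − ((b−a)/6)·[f(a) + 4·f((a+b)/2) + f(b)]| ≤ ((b−a)^4/1152)·( |f'''(a)| + |f'''(b)| ). -/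
open MeasureTheory Real Set

private lemma integral_cubic (c x y c3 c4 c5 : ℝ) :
    ∫ t in x..y, (3*c3*(t-c)^2 + 4*c4*(t-c)^3 + 5*c5*(t-c)^4) =
      (c3*(y-c)^3 + c4*(y-c)^4 + c5*(y-c)^5)
        - (c3*(x-c)^3 + c4*(x-c)^4 + c5*(x-c)^5) := by
  apply intervalIntegral.integral_eq_sub_of_hasDerivAt
  · intro t _
    have h1 : HasDerivAt (fun s : ℝ => s - c) 1 t := (hasDerivAt_id t).sub_const c
    have H := (((h1.pow 3).const_mul c3).add ((h1.pow 4).const_mul c4)).add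
      ((h1.pow 5).const_mul c5)
    convert H using 1
    · rfl
    norm_num
    try ring
  · apply Continuous.intervalIntegrable
    fun_prop

set_option maxHeartbeats 2000000 in
theorem simpson_convex_q_one (I : Set ℝ) (hI : I.OrdConnected) (f : ℝ → ℝ)
    (a b : ℝ) (ha : a ∈ interior I) (hb : b ∈ interior I) (hab : a < b)
    (hd1 : ∀ x ∈ interior I, DifferentiableAt ℝ f x)
    (hd2 : ∀ x ∈ interior I, DifferentiableAt ℝ (deriv f) x)
    (hd3 : ∀ x ∈ interior I, DifferentiableAt ℝ (deriv (deriv f)) x)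
    (hint : IntegrableOn (deriv (deriv (deriv f))) (Set.Icc a b))
    (hconv : ConvexOn ℝ (Set.Icc a b) fun x => |deriv (deriv (deriv f)) x|) :
    |(∫ x in a..b, f x) - (b - a) / 6 * (f a + 4 * f ((a + b) / 2) + f b)| ≤
      (b - a) ^ 4 / 1152 *
        (|deriv (deriv (deriv f)) a| + |deriv (deriv (deriv f)) b|) := by
  have hba : b - a ≠ 0 := by linarith
  have ham : a ≤ (a+b)/2 := by linarith
  have hmb : (a+b)/2 ≤ b := by linarith
  have hsub : Icc a b ⊆ interior I := hI.interior.out ha hb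
  have hmem1 : uIcc a ((a+b)/2) ⊆ interior I := by
    rw [uIcc_of_le ham]; exact (Icc_subset_Icc le_rfl hmb).trans hsub
  have hmem2 : uIcc ((a+b)/2) b ⊆ interior I := by
    rw [uIcc_of_le hmb]; exact (Icc_subset_Icc ham le_rfl).trans hsub
  -- integrability facts
  have hi3 : ∀ x y : ℝ, uIcc x y ⊆ Icc a b →
      IntervalIntegrable (deriv (deriv (deriv f))) volume x y := by
    intro x y hxy
    exact (hint.mono_set hxy).intervalIntegrable
  have hi3am : IntervalIntegrable (deriv (deriv (deriv f))) volume a ((a+b)/2) := by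
    apply hi3; rw [uIcc_of_le ham]; exact Icc_subset_Icc le_rfl hmb
  have hi3mb : IntervalIntegrable (deriv (deriv (deriv f))) volume ((a+b)/2) b := by
    apply hi3; rw [uIcc_of_le hmb]; exact Icc_subset_Icc ham le_rfl
  have hc2 : ∀ x y : ℝ, uIcc x y ⊆ interior I →
      IntervalIntegrable (deriv (deriv f)) volume x y := by
    intro x y hxy
    exact ContinuousOn.intervalIntegrable
      (fun t ht => ((hd3 t (hxy ht)).continuousAt).continuousWithinAt)
  have hc1 : ∀ x y : ℝ, uIcc x y ⊆ interior I →
      IntervalIntegrable (deriv f) volume x y := by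
    intro x y hxy
    exact ContinuousOn.intervalIntegrable
      (fun t ht => ((hd2 t (hxy ht)).continuousAt).continuousWithinAt)
  have hc0 : ∀ x y : ℝ, uIcc x y ⊆ interior I →
      IntervalIntegrable f volume x y := by
    intro x y hxy
    exact ContinuousOn.intervalIntegrable
      (fun t ht => ((hd1 t (hxy ht)).continuousAt).continuousWithinAt)
  -- derivative facts
  have hD2 : ∀ x ∈ interior I, HasDerivAt (deriv (deriv f)) (deriv (deriv (deriv f)) x) x :=
    fun x hx => (hd3 x hx).hasDerivAt
  have hD1 : ∀ x ∈ interior I, HasDerivAt (deriv f) (deriv (deriv f) x) x :=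
    fun x hx => (hd2 x hx).hasDerivAt
  have hD0 : ∀ x ∈ interior I, HasDerivAt f (deriv f x) x :=
    fun x hx => (hd1 x hx).hasDerivAt
  -- kernel derivative facts (first half, centered at a)
  have hk1 : ∀ c : ℝ, ∀ x : ℝ, HasDerivAt (fun t : ℝ => -(1/6) * ((t - c)^2 * (t - (a+b)/2)))
      ((fun t : ℝ => -(1/6) * (2*(t - c)*(t - (a+b)/2) + (t - c)^2)) x) x := by
    intro c x
    have h1 : HasDerivAt (fun s : ℝ => s - c) 1 x := (hasDerivAt_id x).sub_const c
    have h2 : HasDerivAt (fun s : ℝ => s - (a+b)/2) 1 x := (hasDerivAt_id x).sub_const _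
    have H := ((h1.pow 2).mul h2).const_mul (-(1/6) : ℝ)
    convert H using 1
    · rfl
    · rfl
    · rfl
    norm_num
    try ring
  have hk2 : ∀ c : ℝ, ∀ x : ℝ,
      HasDerivAt (fun t : ℝ => -(1/6) * (2*(t - c)*(t - (a+b)/2) + (t - c)^2))
      ((fun t : ℝ => -(1/6) * (2*(t - (a+b)/2) + 4*(t - c))) x) x := by
    intro c x
    have h1 : HasDerivAt (fun s : ℝ => s - c) 1 x := (hasDerivAt_id x).sub_const c
    have h2 : HasDerivAt (fun s : ℝ => s - (a+b)/2) 1 x := (hasDerivAt_id x).sub_const _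
    have H := (((h1.const_mul 2).mul h2).add (h1.pow 2)).const_mul (-(1/6) : ℝ)
    convert H using 1
    · rfl
    · rfl
    · rfl
    norm_num
    try ring
  have hk3 : ∀ c : ℝ, ∀ x : ℝ,
      HasDerivAt (fun t : ℝ => -(1/6) * (2*(t - (a+b)/2) + 4*(t - c)))
      ((fun _ : ℝ => (-1 : ℝ)) x) x := by
    intro c x
    have h1 : HasDerivAt (fun s : ℝ => s - c) 1 x := (hasDerivAt_id x).sub_const c
    have h2 : HasDerivAt (fun s : ℝ => s - (a+b)/2) 1 x := (hasDerivAt_id x).sub_const _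
    have H := ((h2.const_mul 2).add (h1.const_mul 4)).const_mul (-(1/6) : ℝ)
    convert H using 1
    · rfl
    · rfl
    · rfl
    norm_num
  -- integration by parts, first half
  have e1 := intervalIntegral.integral_mul_deriv_eq_deriv_mul
    (u := fun t : ℝ => -(1/6) * ((t - a)^2 * (t - (a+b)/2)))
    (u' := fun t : ℝ => -(1/6) * (2*(t - a)*(t - (a+b)/2) + (t - a)^2))
    (v := deriv (deriv f)) (v' := deriv (deriv (deriv f)))
    (fun x _ => hk1 a x) (fun x hx => hD2 x (hmem1 hx))
    (Continuous.intervalIntegrable (by fun_prop) _ _) hi3am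
  have e2 := intervalIntegral.integral_mul_deriv_eq_deriv_mul
    (u := fun t : ℝ => -(1/6) * (2*(t - a)*(t - (a+b)/2) + (t - a)^2))
    (u' := fun t : ℝ => -(1/6) * (2*(t - (a+b)/2) + 4*(t - a)))
    (v := deriv f) (v' := deriv (deriv f))
    (fun x _ => hk2 a x) (fun x hx => hD1 x (hmem1 hx))
    (Continuous.intervalIntegrable (by fun_prop) _ _) (hc2 _ _ hmem1)
  have e3 := intervalIntegral.integral_mul_deriv_eq_deriv_mul
    (u := fun t : ℝ => -(1/6) * (2*(t - (a+b)/2) + 4*(t - a)))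
    (u' := fun _ : ℝ => (-1 : ℝ))
    (v := f) (v' := deriv f)
    (fun x _ => hk3 a x) (fun x hx => hD0 x (hmem1 hx))
    (Continuous.intervalIntegrable (by fun_prop) _ _) (hc1 _ _ hmem1)
  have e4 : ∫ x in a..((a+b)/2), (-1 : ℝ) * f x = - ∫ x in a..((a+b)/2), f x := by
    rw [intervalIntegral.integral_const_mul]; ring
  -- integration by parts, second half
  have e1' := intervalIntegral.integral_mul_deriv_eq_deriv_mul
    (u := fun t : ℝ => -(1/6) * ((t - b)^2 * (t - (a+b)/2)))
    (u' := fun t : ℝ => -(1/6) * (2*(t - b)*(t - (a+b)/2) + (t - b)^2))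
    (v := deriv (deriv f)) (v' := deriv (deriv (deriv f)))
    (fun x _ => hk1 b x) (fun x hx => hD2 x (hmem2 hx))
    (Continuous.intervalIntegrable (by fun_prop) _ _) hi3mb
  have e2' := intervalIntegral.integral_mul_deriv_eq_deriv_mul
    (u := fun t : ℝ => -(1/6) * (2*(t - b)*(t - (a+b)/2) + (t - b)^2))
    (u' := fun t : ℝ => -(1/6) * (2*(t - (a+b)/2) + 4*(t - b)))
    (v := deriv f) (v' := deriv (deriv f))
    (fun x _ => hk2 b x) (fun x hx => hD1 x (hmem2 hx))
    (Continuous.intervalIntegrable (by fun_prop) _ _) (hc2 _ _ hmem2)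
  have e3' := intervalIntegral.integral_mul_deriv_eq_deriv_mul
    (u := fun t : ℝ => -(1/6) * (2*(t - (a+b)/2) + 4*(t - b)))
    (u' := fun _ : ℝ => (-1 : ℝ))
    (v := f) (v' := deriv f)
    (fun x _ => hk3 b x) (fun x hx => hD0 x (hmem2 hx))
    (Continuous.intervalIntegrable (by fun_prop) _ _) (hc1 _ _ hmem2)
  have e4' : ∫ x in ((a+b)/2)..b, (-1 : ℝ) * f x = - ∫ x in ((a+b)/2)..b, f x := by
    rw [intervalIntegral.integral_const_mul]; ring
  have hsplit : (∫ x in a..((a+b)/2), f x) + (∫ x in ((a+b)/2)..b, f x) = ∫ x in a..b, f x :=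
    intervalIntegral.integral_add_adjacent_intervals (hc0 _ _ hmem1) (hc0 _ _ hmem2)
  -- the key identity
  have keysum :
      (∫ t in a..((a+b)/2), (-(1/6) * ((t - a)^2 * (t - (a+b)/2))) * deriv (deriv (deriv f)) t)
      + (∫ t in ((a+b)/2)..b, (-(1/6) * ((t - b)^2 * (t - (a+b)/2))) * deriv (deriv (deriv f)) t)
      = (∫ x in a..b, f x) - (b - a) / 6 * (f a + 4 * f ((a + b) / 2) + f b) := by
    linear_combination e1 - e2 + e3 - e4 + e1' - e2' + e3' - e4' + hsplit
  set A := |deriv (deriv (deriv f)) a| with hA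
  set B := |deriv (deriv (deriv f)) b| with hB
  -- convexity bound
  have hW : ∀ t ∈ Icc a b, |deriv (deriv (deriv f)) t| ≤ ((b-t)*A + (t-a)*B) * (b-a)⁻¹ := by
    intro t ht
    have h1 : (0:ℝ) ≤ (b-t)/(b-a) := div_nonneg (by linarith [ht.2]) (by linarith)
    have h2 : (0:ℝ) ≤ (t-a)/(b-a) := div_nonneg (by linarith [ht.1]) (by linarith)
    have h3 : (b-t)/(b-a) + (t-a)/(b-a) = 1 := by field_simp; ring
    have h4 := hconv.2 (left_mem_Icc.mpr hab.le) (right_mem_Icc.mpr hab.le) h1 h2 h3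
    rw [smul_eq_mul, smul_eq_mul] at h4
    have h5 : (b-t)/(b-a) * a + (t-a)/(b-a) * b = t := by field_simp; ring
    rw [h5] at h4
    calc |deriv (deriv (deriv f)) t| ≤ (b-t)/(b-a) * A + (t-a)/(b-a) * B := h4
      _ = ((b-t)*A + (t-a)*B) * (b-a)⁻¹ := by ring
  -- pointwise bounds
  have pw1 : ∀ t ∈ Icc a ((a+b)/2),
      |(-(1/6) * ((t - a)^2 * (t - (a+b)/2))) * deriv (deriv (deriv f)) t|
        ≤ -(1/6) * ((t - a)^2 * (t - (a+b)/2)) * (((b-t)*A + (t-a)*B) * (b-a)⁻¹) := by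
    intro t ht
    have hp : (0:ℝ) ≤ -(1/6) * ((t - a)^2 * (t - (a+b)/2)) := by
      nlinarith [mul_nonneg (sq_nonneg (t-a)) (sub_nonneg.mpr ht.2)]
    rw [abs_mul, abs_of_nonneg hp]
    exact mul_le_mul_of_nonneg_left (hW t ⟨ht.1, le_trans ht.2 hmb⟩) hp
  have pw2 : ∀ t ∈ Icc ((a+b)/2) b,
      |(-(1/6) * ((t - b)^2 * (t - (a+b)/2))) * deriv (deriv (deriv f)) t|
        ≤ (1/6) * ((t - b)^2 * (t - (a+b)/2)) * (((b-t)*A + (t-a)*B) * (b-a)⁻¹) := by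
    intro t ht
    have hq : (-(1/6) * ((t - b)^2 * (t - (a+b)/2))) ≤ 0 := by
      nlinarith [mul_nonneg (sq_nonneg (t-b)) (sub_nonneg.mpr ht.1)]
    have hp : (0:ℝ) ≤ (1/6) * ((t - b)^2 * (t - (a+b)/2)) := by
      nlinarith [mul_nonneg (sq_nonneg (t-b)) (sub_nonneg.mpr ht.1)]
    have habs : |(-(1/6) * ((t - b)^2 * (t - (a+b)/2)))|
        = (1/6) * ((t - b)^2 * (t - (a+b)/2)) := by
      rw [abs_of_nonpos hq]; ring
    rw [abs_mul, habs]
    exact mul_le_mul_of_nonneg_left (hW t ⟨le_trans ham ht.1, ht.2⟩) hp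
  -- integrability of the abs products
  have int1 : IntervalIntegrable
      (fun t => |(-(1/6) * ((t - a)^2 * (t - (a+b)/2))) * deriv (deriv (deriv f)) t|)
      volume a ((a+b)/2) :=
    (hi3am.continuousOn_mul (Continuous.continuousOn (by fun_prop))).abs
  have int2 : IntervalIntegrable
      (fun t => |(-(1/6) * ((t - b)^2 * (t - (a+b)/2))) * deriv (deriv (deriv f)) t|)
      volume ((a+b)/2) b :=
    (hi3mb.continuousOn_mul (Continuous.continuousOn (by fun_prop))).abs
  have mono1 := intervalIntegral.integral_mono_on ham int1
    (Continuous.intervalIntegrable (by fun_prop) _ _) pw1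
  have mono2 := intervalIntegral.integral_mono_on hmb int2
    (Continuous.intervalIntegrable (by fun_prop) _ _) pw2
  -- exact values
  have hval1 : ∫ t in a..((a+b)/2),
      -(1/6) * ((t - a)^2 * (t - (a+b)/2)) * (((b-t)*A + (t-a)*B) * (b-a)⁻¹)
      = (b-a)^4 * (7*A+3*B)/11520 := by
    rw [intervalIntegral.integral_congr (g := fun t =>
      3*(A*(b-a)/36)*(t-a)^2 + 4*((B-3*A)/48)*(t-a)^3 + 5*((A-B)/30*(b-a)⁻¹)*(t-a)^4)
      (fun t _ => by field_simp; ring)]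
    rw [integral_cubic]
    field_simp
    ring
  have hval2 : ∫ t in ((a+b)/2)..b,
      (1/6) * ((t - b)^2 * (t - (a+b)/2)) * (((b-t)*A + (t-a)*B) * (b-a)⁻¹)
      = (b-a)^4 * (3*A+7*B)/11520 := by
    rw [intervalIntegral.integral_congr (g := fun t =>
      3*(B*(b-a)/36)*(t-b)^2 + 4*((3*B-A)/48)*(t-b)^3 + 5*((B-A)/30*(b-a)⁻¹)*(t-b)^4)
      (fun t _ => by field_simp; ring)]
    rw [integral_cubic]
    field_simp
    ring
  rw [← keysum]
  refine le_trans (abs_add_le _ _) ?_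
  refine le_trans (add_le_add (intervalIntegral.abs_integral_le_integral_abs ham)
    (intervalIntegral.abs_integral_le_integral_abs hmb)) ?_
  refine le_trans (add_le_add mono1 mono2) ?_
  rw [hval1, hval2]
  apply le_of_eq
  ring
end

section
/- Let f : I → ℝ where I ⊆ ℝ is an interval, and suppose f''' is absolutely continuous on the interior I° of I. Let a, b ∈ I° with a < b and f''' integrable on [a,b]. Then ∫_a^b f(x) dx − ((b−a)/6)·[f(a) + 4·f((a+b)/2) + f(b)] = (b−a)^4 · ∫_0^1 p(t)·f'''(t·a + (1−t)·b) dt, where p(t) = (1/6)·t²·(t − 1/2) for t ∈ [0, 1/2] and p(t) = (1/6)·(t−1)²·(t − 1/2) for t ∈ (1/2, 1]. -/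
open MeasureTheory Real Set

/-- A real function `g` is absolutely continuous on a set `s`. -/
def AbsolutelyContinuousOnReal (g : ℝ → ℝ) (s : Set ℝ) : Prop :=
  ∀ ε > (0 : ℝ), ∃ δ > (0 : ℝ), ∀ (n : ℕ) (u v : Fin n → ℝ),
    (∀ i, u i < v i ∧ Set.Icc (u i) (v i) ⊆ s) →
    (Pairwise fun i j => Disjoint (Set.Ioo (u i) (v i)) (Set.Ioo (u j) (v j))) →
    (∑ i, (v i - u i)) < δ → (∑ i, |g (v i) - g (u i)|) < ε

/-- The Simpson kernel `p(t)` from the paper. -/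
noncomputable def simpsonKernel (t : ℝ) : ℝ :=
  if t ≤ 1 / 2 then (1 / 6) * t ^ 2 * (t - 1 / 2) else (1 / 6) * (t - 1) ^ 2 * (t - 1 / 2)

private lemma kernelK_hasDerivAt (r m x : ℝ) :
    HasDerivAt (fun x => (1/6)*(x-r)^2*(m-x)) ((1/6)*(2*(x-r)*(m-x)-(x-r)^2)) x := by
  have h1 : HasDerivAt (fun x : ℝ => (x - r) ^ 2) (2*(x-r)) x := by
    simpa [Pi.pow_def] using ((hasDerivAt_id x).sub_const r).pow 2
  have h2 : HasDerivAt (fun x : ℝ => m - x) (-1) x := by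
    simpa using (hasDerivAt_id x).const_sub m
  have key := (h1.const_mul (1/6 : ℝ)).mul h2
  have h3 : (1/6)*(2*(x-r)*(m-x)-(x-r)^2) = 1/6*(2*(x-r)) * (m-x) + (1/6*(x-r)^2) * (-1) := by
    ring
  rw [h3]; exact key

private lemma kernelK1_hasDerivAt (r m x : ℝ) :
    HasDerivAt (fun x => (1/6)*(2*(x-r)*(m-x)-(x-r)^2)) ((m-r)/3-(x-r)) x := by
  have h1 : HasDerivAt (fun x : ℝ => x - r) 1 x := (hasDerivAt_id x).sub_const r
  have h1' : HasDerivAt (fun x : ℝ => (x - r) ^ 2) (2*(x-r)) x := by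
    simpa [Pi.pow_def] using ((hasDerivAt_id x).sub_const r).pow 2
  have h2 : HasDerivAt (fun x : ℝ => m - x) (-1) x := by
    simpa using (hasDerivAt_id x).const_sub m
  have key := (((h1.const_mul (2:ℝ)).mul h2).sub h1').const_mul (1/6 : ℝ)
  have h3 : (m-r)/3-(x-r) = (1/6 : ℝ) * ((2*1) * (m-x) + 2*(x-r) * (-1) - 2*(x-r)) := by ring
  rw [h3]; exact key

private lemma kernelK2_hasDerivAt (r m x : ℝ) :
    HasDerivAt (fun x : ℝ => (m-r)/3-(x-r)) (-1) x := by
  simpa using ((hasDerivAt_id x).sub_const r).const_sub ((m-r)/3)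

private lemma parts3 (f : ℝ → ℝ) (p q r m : ℝ)
    (h0 : ∀ x ∈ Set.uIcc p q, HasDerivAt f (deriv f x) x)
    (h1 : ∀ x ∈ Set.uIcc p q, HasDerivAt (deriv f) (deriv (deriv f) x) x)
    (h2 : ∀ x ∈ Set.uIcc p q, HasDerivAt (deriv (deriv f)) (deriv (deriv (deriv f)) x) x)
    (hi : IntervalIntegrable (deriv (deriv (deriv f))) volume p q) :
    ∫ x in p..q, ((1/6)*(x-r)^2*(m-x)) * deriv (deriv (deriv f)) x =
      (((1/6)*(q-r)^2*(m-q)) * deriv (deriv f) q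
        - ((1/6)*(p-r)^2*(m-p)) * deriv (deriv f) p)
      - (((1/6)*(2*(q-r)*(m-q)-(q-r)^2)) * deriv f q
          - ((1/6)*(2*(p-r)*(m-p)-(p-r)^2)) * deriv f p)
      + (((m-r)/3-(q-r)) * f q - ((m-r)/3-(p-r)) * f p)
      + ∫ x in p..q, f x := by
  have hf0c : IntervalIntegrable (deriv f) volume p q :=
    (ContinuousOn.intervalIntegrable (fun x hx =>
      (h1 x hx).differentiableAt.continuousAt.continuousWithinAt))
  have hf1c : IntervalIntegrable (deriv (deriv f)) volume p q :=
    (ContinuousOn.intervalIntegrable (fun x hx =>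
      (h2 x hx).differentiableAt.continuousAt.continuousWithinAt))
  have hfc : IntervalIntegrable f volume p q :=
    (ContinuousOn.intervalIntegrable (fun x hx =>
      (h0 x hx).differentiableAt.continuousAt.continuousWithinAt))
  have hK1i : IntervalIntegrable (fun x => (1/6)*(2*(x-r)*(m-x)-(x-r)^2)) volume p q :=
    (Continuous.intervalIntegrable (by fun_prop) p q)
  have hK2i : IntervalIntegrable (fun x : ℝ => (m-r)/3-(x-r)) volume p q :=
    (Continuous.intervalIntegrable (by fun_prop) p q)
  have step1 : ∫ x in p..q, ((1/6)*(x-r)^2*(m-x)) * deriv (deriv (deriv f)) x =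
      ((1/6)*(q-r)^2*(m-q)) * deriv (deriv f) q - ((1/6)*(p-r)^2*(m-p)) * deriv (deriv f) p
      - ∫ x in p..q, ((1/6)*(2*(x-r)*(m-x)-(x-r)^2)) * deriv (deriv f) x :=
    intervalIntegral.integral_mul_deriv_eq_deriv_mul
      (fun x _ => kernelK_hasDerivAt r m x) h2 hK1i hi
  have step2 : ∫ x in p..q, ((1/6)*(2*(x-r)*(m-x)-(x-r)^2)) * deriv (deriv f) x =
      ((1/6)*(2*(q-r)*(m-q)-(q-r)^2)) * deriv f q
      - ((1/6)*(2*(p-r)*(m-p)-(p-r)^2)) * deriv f p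
      - ∫ x in p..q, ((m-r)/3-(x-r)) * deriv f x :=
    intervalIntegral.integral_mul_deriv_eq_deriv_mul
      (fun x _ => kernelK1_hasDerivAt r m x) h1 hK2i hf1c
  have step3 : ∫ x in p..q, ((m-r)/3-(x-r)) * deriv f x =
      ((m-r)/3-(q-r)) * f q - ((m-r)/3-(p-r)) * f p
      - ∫ x in p..q, (-1) * f x :=
    intervalIntegral.integral_mul_deriv_eq_deriv_mul
      (fun x _ => kernelK2_hasDerivAt r m x) h0
      (Continuous.intervalIntegrable (by fun_prop) p q) hf0c
  have hneg : ∫ x in p..q, (-1 : ℝ) * f x = - ∫ x in p..q, f x := by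
    simp [neg_one_mul, intervalIntegral.integral_neg]
  rw [step1, step2, step3, hneg]
  ring

theorem simpson_identity (I : Set ℝ) (hI : I.OrdConnected) (f : ℝ → ℝ)
    (a b : ℝ) (ha : a ∈ interior I) (hb : b ∈ interior I) (hab : a < b)
    (hd1 : ∀ x ∈ interior I, DifferentiableAt ℝ f x)
    (hd2 : ∀ x ∈ interior I, DifferentiableAt ℝ (deriv f) x)
    (hd3 : ∀ x ∈ interior I, DifferentiableAt ℝ (deriv (deriv f)) x)
    (hac : AbsolutelyContinuousOnReal (deriv (deriv (deriv f))) (interior I))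
    (hint : IntegrableOn (deriv (deriv (deriv f))) (Set.Icc a b)) :
    (∫ x in a..b, f x) - (b - a) / 6 * (f a + 4 * f ((a + b) / 2) + f b) =
      (b - a) ^ 4 *
        ∫ t in (0 : ℝ)..1,
          simpsonKernel t * deriv (deriv (deriv f)) (t * a + (1 - t) * b) := by
  set F := deriv (deriv (deriv f)) with hF
  have hba : (0:ℝ) < b - a := by linarith
  have hbane : b - a ≠ 0 := ne_of_gt hba
  have habne : a - b ≠ 0 := by intro h; apply hbane; linarith
  have hIcc : Set.Icc a b ⊆ interior I := hI.interior.out ha hb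
  have h0 : ∀ x ∈ Set.Icc a b, HasDerivAt f (deriv f x) x :=
    fun x hx => (hd1 x (hIcc hx)).hasDerivAt
  have h1 : ∀ x ∈ Set.Icc a b, HasDerivAt (deriv f) (deriv (deriv f) x) x :=
    fun x hx => (hd2 x (hIcc hx)).hasDerivAt
  have h2 : ∀ x ∈ Set.Icc a b, HasDerivAt (deriv (deriv f)) (F x) x :=
    fun x hx => (hd3 x (hIcc hx)).hasDerivAt
  have hac2 : a ≤ (a+b)/2 := by linarith
  have hcb2 : (a+b)/2 ≤ b := by linarith
  have hsub1 : Set.uIcc a ((a+b)/2) ⊆ Set.Icc a b := by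
    rw [Set.uIcc_of_le hac2]; exact Set.Icc_subset_Icc le_rfl hcb2
  have hsub2 : Set.uIcc ((a+b)/2) b ⊆ Set.Icc a b := by
    rw [Set.uIcc_of_le hcb2]; exact Set.Icc_subset_Icc hac2 le_rfl
  have hFab : IntervalIntegrable F volume a b :=
    (intervalIntegrable_iff_integrableOn_Icc_of_le hab.le).2 hint
  have hFi1 : IntervalIntegrable F volume a ((a+b)/2) :=
    hFab.mono_set (by rw [Set.uIcc_of_le hab.le]; exact hsub1)
  have hFi2 : IntervalIntegrable F volume ((a+b)/2) b :=
    hFab.mono_set (by rw [Set.uIcc_of_le hab.le]; exact hsub2)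
  -- the two halves, by triple integration by parts
  have half1 := parts3 f a ((a+b)/2) a ((a+b)/2)
    (fun x hx => h0 x (hsub1 hx)) (fun x hx => h1 x (hsub1 hx))
    (fun x hx => h2 x (hsub1 hx)) hFi1
  have half2 := parts3 f ((a+b)/2) b b ((a+b)/2)
    (fun x hx => h0 x (hsub2 hx)) (fun x hx => h1 x (hsub2 hx))
    (fun x hx => h2 x (hsub2 hx)) hFi2
  -- the full kernel in the x variable
  set K : ℝ → ℝ := fun x =>
    if (a+b)/2 ≤ x then (1/6)*(x-b)^2*((a+b)/2-x) else (1/6)*(x-a)^2*((a+b)/2-x) with hK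
  have hKeq1 : Set.EqOn (fun x => K x * F x)
      (fun x => ((1/6)*(x-a)^2*((a+b)/2-x)) * F x) (Set.uIcc a ((a+b)/2)) := by
    intro x hx
    rw [Set.uIcc_of_le hac2] at hx
    simp only [hK]
    rcases le_or_gt ((a+b)/2) x with h | h
    · have hxc : x = (a+b)/2 := le_antisymm hx.2 h
      rw [if_pos h, hxc]; ring
    · rw [if_neg (not_le.mpr h)]
  have hKeq2 : Set.EqOn (fun x => K x * F x)
      (fun x => ((1/6)*(x-b)^2*((a+b)/2-x)) * F x) (Set.uIcc ((a+b)/2) b) := by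
    intro x hx
    rw [Set.uIcc_of_le hcb2] at hx
    simp only [hK]
    rw [if_pos hx.1]
  -- interval integrability of the kernel-product on each half
  have hKFint1 : IntervalIntegrable (fun x => K x * F x) volume a ((a+b)/2) := by
    rw [intervalIntegrable_iff_integrableOn_Icc_of_le hac2]
    have hpoly : IntegrableOn (fun x => ((1/6)*(x-a)^2*((a+b)/2-x)) * F x)
        (Set.Icc a ((a+b)/2)) volume :=
      IntegrableOn.continuousOn_mul (Continuous.continuousOn (by fun_prop))
        (hint.mono_set (by rw [← Set.uIcc_of_le hac2]; exact hsub1)) isCompact_Icc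
    exact hpoly.congr_fun (fun x hx => (hKeq1 (by rwa [Set.uIcc_of_le hac2])).symm)
      measurableSet_Icc
  have hKFint2 : IntervalIntegrable (fun x => K x * F x) volume ((a+b)/2) b := by
    rw [intervalIntegrable_iff_integrableOn_Icc_of_le hcb2]
    have hpoly : IntegrableOn (fun x => ((1/6)*(x-b)^2*((a+b)/2-x)) * F x)
        (Set.Icc ((a+b)/2) b) volume :=
      IntegrableOn.continuousOn_mul (Continuous.continuousOn (by fun_prop))
        (hint.mono_set (by rw [← Set.uIcc_of_le hcb2]; exact hsub2)) isCompact_Icc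
    exact hpoly.congr_fun (fun x hx => (hKeq2 (by rwa [Set.uIcc_of_le hcb2])).symm)
      measurableSet_Icc
  -- splitting the kernel integral
  have hsplitK : ∫ x in a..b, K x * F x =
      (∫ x in a..(a+b)/2, ((1/6)*(x-a)^2*((a+b)/2-x)) * F x)
      + ∫ x in ((a+b)/2)..b, ((1/6)*(x-b)^2*((a+b)/2-x)) * F x := by
    rw [← intervalIntegral.integral_congr hKeq1, ← intervalIntegral.integral_congr hKeq2]
    exact (intervalIntegral.integral_add_adjacent_intervals hKFint1 hKFint2).symm
  -- change of variables: the t-integral equals the x-integral of the kernel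
  have hkey : ∀ t : ℝ, (b-a)^3 * (simpsonKernel t * F (t*a+(1-t)*b)) =
      K ((a-b)*t+b) * F ((a-b)*t+b) := by
    intro t
    have hx : (a-b)*t+b = t*a+(1-t)*b := by ring
    rw [hx]
    simp only [hK, simpsonKernel]
    by_cases ht : t ≤ 1/2
    · have hc : (a+b)/2 ≤ t*a+(1-t)*b := by nlinarith
      rw [if_pos ht, if_pos hc]; ring
    · have hc : ¬ ((a+b)/2 ≤ t*a+(1-t)*b) := by
        push_neg at ht ⊢; nlinarith
      rw [if_neg ht, if_neg hc]; ring
  have hsubst : ∫ t in (0:ℝ)..1, K ((a-b)*t+b) * F ((a-b)*t+b) =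
      (a-b)⁻¹ • ∫ x in (a-b)*0+b..(a-b)*1+b, K x * F x :=
    intervalIntegral.integral_comp_mul_add (fun x => K x * F x) habne b
  have key2 : (b-a)^4 * (∫ t in (0:ℝ)..1, simpsonKernel t * F (t*a+(1-t)*b)) =
      ∫ x in a..b, K x * F x := by
    have e0 : ∫ t in (0:ℝ)..1, (b-a)^3 * (simpsonKernel t * F (t*a+(1-t)*b)) =
        (b-a)^3 * ∫ t in (0:ℝ)..1, simpsonKernel t * F (t*a+(1-t)*b) :=
      intervalIntegral.integral_const_mul _ _
    have e1 : ∫ t in (0:ℝ)..1, (b-a)^3 * (simpsonKernel t * F (t*a+(1-t)*b)) =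
        ∫ t in (0:ℝ)..1, K ((a-b)*t+b) * F ((a-b)*t+b) :=
      intervalIntegral.integral_congr (fun t _ => hkey t)
    have hb0 : (a-b)*0+b = b := by ring
    have ha1 : (a-b)*1+b = a := by ring
    rw [hb0, ha1] at hsubst
    have e2 : ∫ x in b..a, K x * F x = - ∫ x in a..b, K x * F x :=
      intervalIntegral.integral_symm a b
    have H : (b-a)^3 * (∫ t in (0:ℝ)..1, simpsonKernel t * F (t*a+(1-t)*b)) =
        (b-a)⁻¹ * ∫ x in a..b, K x * F x := by
      rw [← e0, e1, hsubst, e2, smul_eq_mul]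
      rw [show a - b = -(b-a) by ring]
      field_simp
    calc (b-a)^4 * (∫ t in (0:ℝ)..1, simpsonKernel t * F (t*a+(1-t)*b))
        = (b-a) * ((b-a)^3 * ∫ t in (0:ℝ)..1, simpsonKernel t * F (t*a+(1-t)*b)) := by ring
      _ = (b-a) * ((b-a)⁻¹ * ∫ x in a..b, K x * F x) := by rw [H]
      _ = ∫ x in a..b, K x * F x := by field_simp
  -- split ∫ f over the two halves
  have hfc1 : IntervalIntegrable f volume a ((a+b)/2) :=
    ContinuousOn.intervalIntegrable (fun x hx =>
      (h0 x (hsub1 hx)).differentiableAt.continuousAt.continuousWithinAt)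
  have hfc2 : IntervalIntegrable f volume ((a+b)/2) b :=
    ContinuousOn.intervalIntegrable (fun x hx =>
      (h0 x (hsub2 hx)).differentiableAt.continuousAt.continuousWithinAt)
  have hsplitf : ∫ x in a..b, f x =
      (∫ x in a..(a+b)/2, f x) + ∫ x in ((a+b)/2)..b, f x :=
    (intervalIntegral.integral_add_adjacent_intervals hfc1 hfc2).symm
  rw [key2, hsplitK, half1, half2, hsplitf]
  ring
end

section
/- Let f : I → ℝ with I ⊆ [0, ∞), f three times differentiable on the interior I° with f''' integrable on [a,b], where a, b ∈ I° with a < b. Suppose |f'''|^q is s-convex in the second sense on [a,b] for some fixed s ∈ (0,1] and q > 1 with 1/p + 1/q = 1. Then |∫_a^b f(x) dx − ((b−a)/6)·[f(a) + 4·f((a+b)/2) + f(b)]| ≤ ((b−a)^4/48)·(1/2)^{1/p}·(Γ(2p+1)·Γ(p+1)/Γ(3p+2))^{1/p} · { [ |f'''(a)|^q/(2^{s+1}(s+1)) + ((2^{s+1}−1)/(2^{s+1}(s+1)))·|f'''(b)|^q ]^{1/q} + [ ((2^{s+1}−1)/(2^{s+1}(s+1)))·|f'''(a)|^q + |f'''(b)|^q/(2^{s+1}(s+1))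 ]^{1/q} }. -/
open MeasureTheory Real Set intervalIntegral

/-- `g` is `s`-convex in the second sense on the set `A`: for all `x, y ∈ A` and `t ∈ [0,1]`,
`g(tx + (1-t)y) ≤ t^s g(x) + (1-t)^s g(y)`. -/
def SConvexSecondSenseOn (s : ℝ) (A : Set ℝ) (g : ℝ → ℝ) : Prop :=
  ∀ x ∈ A, ∀ y ∈ A, ∀ t ∈ Set.Icc (0 : ℝ) 1,
    g (t * x + (1 - t) * y) ≤ t ^ s * g x + (1 - t) ^ s * g y

section SimpsonAux

lemma simpson_parts_aux (f f1 f2 f3 K0 K1 K2 : ℝ → ℝ) (α β : ℝ) (hαβ : α ≤ β)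
    (hf : ∀ t ∈ Set.Icc α β, HasDerivAt f (f1 t) t)
    (hf1 : ∀ t ∈ Set.Icc α β, HasDerivAt f1 (f2 t) t)
    (hf2 : ∀ t ∈ Set.Icc α β, HasDerivAt f2 (f3 t) t)
    (hK0 : ∀ t, HasDerivAt K0 (K1 t) t)
    (hK1 : ∀ t, HasDerivAt K1 (K2 t) t)
    (hK2 : ∀ t, HasDerivAt K2 (-1) t)
    (hKf3 : IntervalIntegrable (fun t => K0 t * f3 t) MeasureTheory.volume α β) :
    ∫ t in α..β, K0 t * f3 t = (∫ t in α..β, f t)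
      + (K0 β * f2 β - K1 β * f1 β + K2 β * f β)
      - (K0 α * f2 α - K1 α * f1 α + K2 α * f α) := by
  have huIcc : Set.uIcc α β = Set.Icc α β := Set.uIcc_of_le hαβ
  have hfc : ContinuousOn f (Set.Icc α β) :=
    fun t ht => (hf t ht).continuousAt.continuousWithinAt
  have hfint : IntervalIntegrable f MeasureTheory.volume α β :=
    ContinuousOn.intervalIntegrable (by rwa [huIcc])
  have hF : ∀ t ∈ Set.uIcc α β, HasDerivAt (fun t => K0 t * f2 t - K1 t * f1 t + K2 t * f t)
      (K0 t * f3 t - f t) t := by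
    intro t ht
    rw [huIcc] at ht
    have H := (((hK0 t).mul (hf2 t ht)).sub ((hK1 t).mul (hf1 t ht))).add
      ((hK2 t).mul (hf t ht))
    convert H using 1
    · rfl
    · rfl
    · rfl
    · ring
  have heq := intervalIntegral.integral_eq_sub_of_hasDerivAt hF (hKf3.sub hfint)
  rw [intervalIntegral.integral_sub hKf3 hfint] at heq
  linarith [heq]

lemma simpson_int_rpow_affine (e h s : ℝ) (hh : h ≠ 0) (hs : 0 < s) (α β : ℝ) :
    ∫ t in α..β, ((t - e)/h) ^ s
      = h/(s+1) * (((β-e)/h)^(s+1) - ((α-e)/h)^(s+1)) := by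
  have hs1 : s + 1 ≠ 0 := by linarith
  have hD : ∀ t : ℝ, HasDerivAt (fun t => h/(s+1) * (((t-e)/h) ^ (s+1)))
      (((t-e)/h) ^ s) t := by
    intro t
    have hu : HasDerivAt (fun t : ℝ => (t-e)/h) (1/h) t := by
      simpa using ((hasDerivAt_id t).sub_const e).div_const h
    have h2 := (hu.rpow_const (Or.inr (by linarith : (1:ℝ) ≤ s + 1))).const_mul (h/(s+1))
    have h3 : s + 1 - 1 = s := by ring
    rw [h3] at h2
    convert h2 using 1
    · rfl
    · rfl
    field_simp
    try exact Or.inl trivial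
  have hcont : Continuous fun t : ℝ => ((t - e)/h) ^ s := by
    rw [continuous_iff_continuousAt]
    intro t
    exact (((continuous_id.sub continuous_const).div_const h).continuousAt).rpow_const
      (Or.inr hs.le)
  have := intervalIntegral.integral_eq_sub_of_hasDerivAt
    (f := fun t => h/(s+1) * (((t-e)/h) ^ (s+1)))
    (fun t _ => hD t) (hcont.intervalIntegrable α β)
  rw [this]
  ring

lemma simpson_real_beta {u v : ℝ} (hu : 0 < u) (hv : 0 < v) :
    ∫ x in (0:ℝ)..1, x ^ (u-1) * (1-x) ^ (v-1) =
      Real.Gamma u * Real.Gamma v / Real.Gamma (u+v) := by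
  have hG : Real.Gamma (u+v) ≠ 0 := (Real.Gamma_pos_of_pos (by linarith)).ne'
  have key : Complex.betaIntegral u v =
      ((∫ x in (0:ℝ)..1, x ^ (u-1) * (1-x) ^ (v-1) : ℝ) : ℂ) := by
    rw [Complex.betaIntegral]
    rw [show ((∫ x in (0:ℝ)..1, x ^ (u-1) * (1-x) ^ (v-1) : ℝ) : ℂ)
        = ∫ x in (0:ℝ)..1, ((x ^ (u-1) * (1-x) ^ (v-1) : ℝ) : ℂ)
      from (RCLike.intervalIntegral_ofReal (𝕜 := ℂ)).symm]
    apply intervalIntegral.integral_congr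
    intro x hx
    rw [Set.uIcc_of_le (by norm_num : (0:ℝ) ≤ 1)] at hx
    obtain ⟨hx0, hx1⟩ := hx
    simp only []
    show (x:ℂ) ^ ((u:ℂ)-1) * ((1:ℂ)-(x:ℂ)) ^ ((v:ℂ)-1) = ((x ^ (u-1) * (1-x) ^ (v-1) : ℝ) : ℂ)
    rw [show ((1:ℂ) - x) = ((1 - x : ℝ) : ℂ) by push_cast; ring,
      show ((u:ℂ)-1) = ((u-1:ℝ):ℂ) by push_cast; ring,
      show ((v:ℂ)-1) = ((v-1:ℝ):ℂ) by push_cast; ring,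
      ← Complex.ofReal_cpow hx0, ← Complex.ofReal_cpow (by linarith),
      ← Complex.ofReal_mul]
  have := Complex.Gamma_mul_Gamma_eq_betaIntegral
    (s := (u:ℂ)) (t := (v:ℂ)) (by simpa using hu) (by simpa using hv)
  rw [key] at this
  rw [← Complex.ofReal_add, Complex.Gamma_ofReal, Complex.Gamma_ofReal,
    Complex.Gamma_ofReal, ← Complex.ofReal_mul, ← Complex.ofReal_mul] at this
  have h2 := Complex.ofReal_injective this
  field_simp
  linarith [h2]

lemma simpson_beta_scaled {u v c : ℝ} (hu : 0 < u) (hv : 0 < v) (hc : 0 < c) :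
    ∫ x in (0:ℝ)..c, x ^ (u-1) * (c-x) ^ (v-1)
      = c ^ (u+v-1) * (Real.Gamma u * Real.Gamma v / Real.Gamma (u+v)) := by
  have hB := simpson_real_beta hu hv
  have hc' : c ≠ 0 := hc.ne'
  have h1 : ∫ y in (0:ℝ)..1, (fun x => x ^ (u-1) * (c-x) ^ (v-1)) (c * y)
      = c⁻¹ • ∫ x in (0:ℝ)..c, x ^ (u-1) * (c-x) ^ (v-1) := by
    simpa using intervalIntegral.integral_comp_mul_left (a := 0) (b := 1)
      (fun x => x ^ (u-1) * (c-x) ^ (v-1)) hc'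
  have h2 : ∫ y in (0:ℝ)..1, (fun x => x ^ (u-1) * (c-x) ^ (v-1)) (c * y)
      = c ^ (u-1) * c ^ (v-1) * (Real.Gamma u * Real.Gamma v / Real.Gamma (u+v)) := by
    rw [← hB, ← intervalIntegral.integral_const_mul]
    apply intervalIntegral.integral_congr
    intro y hy
    rw [Set.uIcc_of_le (by norm_num : (0:ℝ) ≤ 1)] at hy
    obtain ⟨hy0, hy1⟩ := hy
    simp only []
    rw [show c - c * y = c * (1 - y) by ring,
      Real.mul_rpow hc.le hy0, Real.mul_rpow hc.le (by linarith)]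
    ring
  rw [h2, smul_eq_mul] at h1
  have e1 : c * (c⁻¹ * ∫ x in (0:ℝ)..c, x ^ (u-1) * (c-x) ^ (v-1))
      = ∫ x in (0:ℝ)..c, x ^ (u-1) * (c-x) ^ (v-1) := by
    rw [← mul_assoc, mul_inv_cancel₀ hc', one_mul]
  have e2 := congrArg (fun z => c * z) h1
  have e3 : c * (c ^ (u-1) * c ^ (v-1) * (Real.Gamma u * Real.Gamma v / Real.Gamma (u+v)))
      = c ^ (u+v-1) * (Real.Gamma u * Real.Gamma v / Real.Gamma (u+v)) := by
    rw [show c ^ (u+v-1) = c ^ (1:ℝ) * c ^ (u-1) * c ^ (v-1) by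
      rw [← Real.rpow_add hc, ← Real.rpow_add hc]; ring_nf, Real.rpow_one]
    ring
  rw [e1] at e2
  rw [← e2, e3]

lemma simpson_kernel_rpow (p c : ℝ) (hp : 0 < p) (hc : 0 < c) :
    ∫ x in (0:ℝ)..c, (x^2*(c-x)/6) ^ p
      = ((1:ℝ)/6)^p * (c ^ (3*p+1) *
          (Real.Gamma (2*p+1) * Real.Gamma (p+1) / Real.Gamma (3*p+2))) := by
  have hbs := simpson_beta_scaled (u := 2*p+1) (v := p+1) (by linarith) (by linarith) hc
  have e1 : 2*p+1 + (p+1) - 1 = 3*p+1 := by ring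
  have e2 : 2*p+1 + (p+1) = 3*p+2 := by ring
  rw [e1, e2] at hbs
  rw [← hbs, ← intervalIntegral.integral_const_mul]
  apply intervalIntegral.integral_congr
  intro x hx
  rw [Set.uIcc_of_le hc.le] at hx
  obtain ⟨hx0, hx1⟩ := hx
  simp only []
  have hcx : (0:ℝ) ≤ c - x := by linarith
  have hx2 : (0:ℝ) ≤ x^2 := sq_nonneg x
  rw [div_rpow (by positivity) (by norm_num : (0:ℝ) ≤ 6),
    Real.mul_rpow hx2 hcx, div_rpow (by norm_num : (0:ℝ) ≤ 1) (by norm_num : (0:ℝ) ≤ 6)]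
  have hx2p : (x^2) ^ p = x ^ (2*p) := by
    rw [← Real.rpow_natCast x 2, ← Real.rpow_mul hx0]
    norm_num
  rw [hx2p]
  have e3 : 2*p+1-1 = 2*p := by ring
  have e4 : p+1-1 = p := by ring
  rw [e3, e4, Real.one_rpow]
  ring

lemma simpson_holder_half (K g : ℝ → ℝ) (α β : ℝ) (hαβ : α ≤ β) (p q : ℝ)
    (hpq : p.HolderConjugate q) (hKc : Continuous K)
    (hmeas : AEStronglyMeasurable g (MeasureTheory.volume.restrict (Set.Ioc α β)))
    (hgq : IntegrableOn (fun x => |g x| ^ q) (Set.Ioc α β)) :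
    |∫ t in α..β, K t * g t| ≤ (∫ x in Set.Ioc α β, |K x| ^ p) ^ (1/p)
      * (∫ x in Set.Ioc α β, |g x| ^ q) ^ (1/q) := by
  rw [intervalIntegral.integral_of_le hαβ]
  have h1 : |∫ x in Set.Ioc α β, K x * g x| ≤ ∫ x in Set.Ioc α β, ‖K x‖ * ‖g x‖ := by
    have h0 : |∫ x in Set.Ioc α β, K x * g x| ≤ ∫ x in Set.Ioc α β, ‖K x * g x‖ :=
      MeasureTheory.norm_integral_le_integral_norm (f := fun x => K x * g x)
        (μ := MeasureTheory.volume.restrict (Set.Ioc α β))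
    refine h0.trans_eq ?_
    apply setIntegral_congr_fun measurableSet_Ioc
    intro x _
    simp [abs_mul]
  refine h1.trans ?_
  have hKmem : MemLp K (ENNReal.ofReal p) (MeasureTheory.volume.restrict (Set.Ioc α β)) := by
    rw [← memLp_norm_rpow_iff (q := ENNReal.ofReal p) hKc.aestronglyMeasurable
      (by simp [hpq.pos]) (by simp),
      ENNReal.div_self (by simp [hpq.pos]) (by simp),
      ENNReal.toReal_ofReal hpq.nonneg, memLp_one_iff_integrable]
    apply Continuous.integrableOn_Ioc
    exact hKc.norm.rpow_const (fun x => Or.inr hpq.nonneg)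
  have hgmem : MemLp g (ENNReal.ofReal q) (MeasureTheory.volume.restrict (Set.Ioc α β)) := by
    rw [← memLp_norm_rpow_iff (q := ENNReal.ofReal q) hmeas
      (by simp [hpq.symm.pos]) (by simp),
      ENNReal.div_self (by simp [hpq.symm.pos]) (by simp),
      ENNReal.toReal_ofReal hpq.symm.nonneg, memLp_one_iff_integrable]
    simpa [Real.norm_eq_abs] using hgq.integrable
  have := integral_mul_norm_le_Lp_mul_Lq hpq hKmem hgmem
  simpa [Real.norm_eq_abs] using this

end SimpsonAux

set_option maxHeartbeats 1600000 in
theorem simpson_sconvex_holder (I : Set ℝ) (hI : I.OrdConnected)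
    (hIsub : I ⊆ Set.Ici (0 : ℝ)) (f : ℝ → ℝ) (a b s p q : ℝ)
    (ha : a ∈ interior I) (hb : b ∈ interior I) (hab : a < b)
    (hd1 : ∀ x ∈ interior I, DifferentiableAt ℝ f x)
    (hd2 : ∀ x ∈ interior I, DifferentiableAt ℝ (deriv f) x)
    (hd3 : ∀ x ∈ interior I, DifferentiableAt ℝ (deriv (deriv f)) x)
    (hint : IntegrableOn (deriv (deriv (deriv f))) (Set.Icc a b))
    (hs : s ∈ Set.Ioc (0 : ℝ) 1) (hq : 1 < q) (hp : 1 < p) (hpq : 1 / p + 1 / q = 1)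
    (hconv : SConvexSecondSenseOn s (Set.Icc a b)
      fun x => |deriv (deriv (deriv f)) x| ^ q) :
    |(∫ x in a..b, f x) - (b - a) / 6 * (f a + 4 * f ((a + b) / 2) + f b)| ≤
      (b - a) ^ 4 / 48 * ((1 : ℝ) / 2) ^ (1 / p) *
        (Gamma (2 * p + 1) * Gamma (p + 1) / Gamma (3 * p + 2)) ^ (1 / p) *
        ((|deriv (deriv (deriv f)) a| ^ q / ((2 : ℝ) ^ (s + 1) * (s + 1)) +
              ((2 : ℝ) ^ (s + 1) - 1) / ((2 : ℝ) ^ (s + 1) * (s + 1)) *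
                |deriv (deriv (deriv f)) b| ^ q) ^ (1 / q) +
          (((2 : ℝ) ^ (s + 1) - 1) / ((2 : ℝ) ^ (s + 1) * (s + 1)) *
                |deriv (deriv (deriv f)) a| ^ q +
              |deriv (deriv (deriv f)) b| ^ q / ((2 : ℝ) ^ (s + 1) * (s + 1))) ^ (1 / q)) := by
  set f3 := deriv (deriv (deriv f)) with hf3def
  have hsub : Set.Icc a b ⊆ interior I := hI.interior.out ha hb
  have ham : a ≤ (a+b)/2 := by linarith
  have hmb : (a+b)/2 ≤ b := by linarith
  have hba : (0:ℝ) < b - a := by linarith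
  have hc : (0:ℝ) < (b-a)/2 := by linarith
  have hp0 : p ≠ 0 := by positivity
  have hq0 : q ≠ 0 := by positivity
  have hpconj : p.HolderConjugate q := Real.holderConjugate_iff.2 ⟨hp, by rw [← one_div, ← one_div]; exact hpq⟩
  have hs0 : 0 < s := hs.1
  have hs1 : s + 1 ≠ 0 := by linarith
  have h2s : (0:ℝ) < (2:ℝ) ^ (s+1) := Real.rpow_pos_of_pos (by norm_num) _
  -- === Part 1: the kernel identity ===
  have Hf : ∀ t ∈ Set.Icc a b, HasDerivAt f (deriv f t) t :=
    fun t ht => (hd1 t (hsub ht)).hasDerivAt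
  have Hf1 : ∀ t ∈ Set.Icc a b, HasDerivAt (deriv f) (deriv (deriv f) t) t :=
    fun t ht => (hd2 t (hsub ht)).hasDerivAt
  have Hf2 : ∀ t ∈ Set.Icc a b, HasDerivAt (deriv (deriv f)) (f3 t) t :=
    fun t ht => (hd3 t (hsub ht)).hasDerivAt
  have hsub1 : Set.Icc a ((a+b)/2) ⊆ Set.Icc a b := Set.Icc_subset_Icc le_rfl hmb
  have hsub2 : Set.Icc ((a+b)/2) b ⊆ Set.Icc a b := Set.Icc_subset_Icc ham le_rfl
  have hK10 : ∀ t : ℝ, HasDerivAt (fun t => (t-a)^2*((b-a)-2*(t-a))/12)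
      ((2*(b-a)*(t-a) - 6*(t-a)^2)/12) t := by
    intro t
    have hid : HasDerivAt (fun t : ℝ => t - a) 1 t := (hasDerivAt_id t).sub_const a
    have h1 : HasDerivAt (fun t : ℝ => (t-a)^2) (2*(t-a)) t := by have := hid.pow 2; simp at this; exact this
    have h2 : HasDerivAt (fun t : ℝ => (b-a) - 2*(t-a)) (-2) t := by
      simpa using (hid.const_mul 2).const_sub (b-a)
    have := (h1.mul h2).div_const 12
    convert this using 1
    · rfl
    · rfl
    · rfl
    · ring
  have hK11 : ∀ t : ℝ, HasDerivAt (fun t => (2*(b-a)*(t-a) - 6*(t-a)^2)/12)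
      ((b-a)/6 - (t-a)) t := by
    intro t
    have hid : HasDerivAt (fun t : ℝ => t - a) 1 t := (hasDerivAt_id t).sub_const a
    have h1 : HasDerivAt (fun t : ℝ => 2*(b-a)*(t-a)) (2*(b-a)) t := by
      simpa using hid.const_mul (2*(b-a))
    have h2 : HasDerivAt (fun t : ℝ => 6*(t-a)^2) (6*(2*(t-a))) t := by
      simpa using (hid.pow 2).const_mul 6
    have := (h1.sub h2).div_const 12
    convert this using 1
    · rfl
    · rfl
    · rfl
    · ring
  have hK12 : ∀ t : ℝ, HasDerivAt (fun t : ℝ => (b-a)/6 - (t-a)) (-1) t := by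
    intro t
    simpa using ((hasDerivAt_id t).sub_const a).const_sub ((b-a)/6)
  have hK20 : ∀ t : ℝ, HasDerivAt (fun t => (b-t)^2*(2*(b-t)-(b-a))/12)
      ((2*(b-a)*(b-t) - 6*(b-t)^2)/12) t := by
    intro t
    have hid : HasDerivAt (fun t : ℝ => b - t) (-1) t := (hasDerivAt_id t).const_sub b
    have h1 : HasDerivAt (fun t : ℝ => (b-t)^2) (2*(b-t)*(-1)) t := by
      have := hid.pow 2; simp at this; rw [show 2*(b-t)*(-1) = -(2*(b-t)) by ring]; exact this
    have h2 : HasDerivAt (fun t : ℝ => 2*(b-t) - (b-a)) (-2) t := by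
      simpa using (hid.const_mul 2).sub_const (b-a)
    have := (h1.mul h2).div_const 12
    convert this using 1
    · rfl
    · rfl
    · rfl
    · ring
  have hK21 : ∀ t : ℝ, HasDerivAt (fun t => (2*(b-a)*(b-t) - 6*(b-t)^2)/12)
      ((b-t) - (b-a)/6) t := by
    intro t
    have hid : HasDerivAt (fun t : ℝ => b - t) (-1) t := (hasDerivAt_id t).const_sub b
    have h1 : HasDerivAt (fun t : ℝ => 2*(b-a)*(b-t)) (2*(b-a)*(-1)) t := by
      simpa using hid.const_mul (2*(b-a))
    have h2 : HasDerivAt (fun t : ℝ => 6*(b-t)^2) (6*(2*(b-t)*(-1))) t := by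
      simpa using (hid.pow 2).const_mul 6
    have := (h1.sub h2).div_const 12
    convert this using 1
    · rfl
    · rfl
    · rfl
    · ring
  have hK22 : ∀ t : ℝ, HasDerivAt (fun t : ℝ => (b-t) - (b-a)/6) (-1) t := by
    intro t
    simpa using ((hasDerivAt_id t).const_sub b).sub_const ((b-a)/6)
  have hKf31 : IntervalIntegrable (fun t => ((t-a)^2*((b-a)-2*(t-a))/12) * f3 t)
      MeasureTheory.volume a ((a+b)/2) := by
    rw [intervalIntegrable_iff_integrableOn_Icc_of_le ham]
    exact IntegrableOn.continuousOn_mul (by fun_prop) (hint.mono_set hsub1) isCompact_Icc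
  have hKf32 : IntervalIntegrable (fun t => ((b-t)^2*(2*(b-t)-(b-a))/12) * f3 t)
      MeasureTheory.volume ((a+b)/2) b := by
    rw [intervalIntegrable_iff_integrableOn_Icc_of_le hmb]
    exact IntegrableOn.continuousOn_mul (by fun_prop) (hint.mono_set hsub2) isCompact_Icc
  have half1 := simpson_parts_aux f (deriv f) (deriv (deriv f)) f3 _ _ _ a ((a+b)/2) ham
    (fun t ht => Hf t (hsub1 ht)) (fun t ht => Hf1 t (hsub1 ht)) (fun t ht => Hf2 t (hsub1 ht))
    hK10 hK11 hK12 hKf31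
  have half2 := simpson_parts_aux f (deriv f) (deriv (deriv f)) f3 _ _ _ ((a+b)/2) b hmb
    (fun t ht => Hf t (hsub2 ht)) (fun t ht => Hf1 t (hsub2 ht)) (fun t ht => Hf2 t (hsub2 ht))
    hK20 hK21 hK22 hKf32
  have hfint1 : IntervalIntegrable f MeasureTheory.volume a ((a+b)/2) :=
    ContinuousOn.intervalIntegrable (by
      rw [Set.uIcc_of_le ham]
      exact fun t ht => (Hf t (hsub1 ht)).continuousAt.continuousWithinAt)
  have hfint2 : IntervalIntegrable f MeasureTheory.volume ((a+b)/2) b :=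
    ContinuousOn.intervalIntegrable (by
      rw [Set.uIcc_of_le hmb]
      exact fun t ht => (Hf t (hsub2 ht)).continuousAt.continuousWithinAt)
  have hsplit := intervalIntegral.integral_add_adjacent_intervals hfint1 hfint2
  have key : (∫ x in a..b, f x) - (b - a) / 6 * (f a + 4 * f ((a + b) / 2) + f b) =
      (∫ t in a..(a+b)/2, ((t-a)^2*((b-a)-2*(t-a))/12) * f3 t)
      + (∫ t in ((a+b)/2)..b, ((b-t)^2*(2*(b-t)-(b-a))/12) * f3 t) := by
    rw [half1, half2, ← hsplit]
    ring

  -- === Part 2: estimates ===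
  clear half1 half2 hsplit hfint1 hfint2 hK10 hK11 hK12 hK20 hK21 hK22
  set G := Real.Gamma (2*p+1) * Real.Gamma (p+1) / Real.Gamma (3*p+2) with hGdef
  have hGpos : 0 < G := by
    apply div_pos (mul_pos (Real.Gamma_pos_of_pos (by linarith))
      (Real.Gamma_pos_of_pos (by linarith))) (Real.Gamma_pos_of_pos (by linarith))
  have hbne : b - a ≠ 0 := hba.ne'
  have habne : a - b ≠ 0 := sub_ne_zero.2 hab.ne
  have hf3meas : Measurable f3 := by rw [hf3def]; exact measurable_deriv _
  -- pointwise s-convexity bound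
  have hpoint : ∀ t ∈ Set.Icc a b, |f3 t| ^ q
      ≤ ((b-t)/(b-a)) ^ s * |f3 a| ^ q + ((t-a)/(b-a)) ^ s * |f3 b| ^ q := by
    intro t ht
    have h1 : (b-t)/(b-a) ∈ Set.Icc (0:ℝ) 1 := by
      constructor
      · apply div_nonneg _ hba.le
        linarith [ht.2]
      · rw [div_le_one hba]
        linarith [ht.1]
    have h2 := hconv a (Set.left_mem_Icc.2 hab.le) b (Set.right_mem_Icc.2 hab.le) _ h1
    simp only [] at h2
    have e1 : (b-t)/(b-a) * a + (1 - (b-t)/(b-a)) * b = t := by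
      field_simp
      ring
    have e2 : 1 - (b-t)/(b-a) = (t-a)/(b-a) := by
      field_simp
      ring
    rw [e1, e2] at h2
    exact h2
  have hbound_cont : Continuous
      (fun t : ℝ => ((b-t)/(b-a)) ^ s * |f3 a| ^ q + ((t-a)/(b-a)) ^ s * |f3 b| ^ q) := by
    apply Continuous.add
    · exact (Continuous.rpow_const (by fun_prop) (fun x => Or.inr hs0.le)).mul continuous_const
    · exact (Continuous.rpow_const (by fun_prop) (fun x => Or.inr hs0.le)).mul continuous_const
  -- integrability of |f3|^q on the two halves
  have hq_int : ∀ α β : ℝ, Set.Ioc α β ⊆ Set.Icc a b →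
      IntegrableOn (fun x => |f3 x| ^ q) (Set.Ioc α β) := by
    intro α β hss
    refine Integrable.mono' (hbound_cont.integrableOn_Ioc) ?_ ?_
    · exact (hf3meas.abs.pow_const _).aestronglyMeasurable
    · rw [ae_restrict_iff' measurableSet_Ioc]
      refine Filter.Eventually.of_forall (fun t ht => ?_)
      rw [Real.norm_of_nonneg (Real.rpow_nonneg (abs_nonneg _) _)]
      exact hpoint t (hss ht)
  have hq_int1 := hq_int a ((a+b)/2) (fun x hx => ⟨hx.1.le, hx.2.trans hmb⟩)
  have hq_int2 := hq_int ((a+b)/2) b (fun x hx => ⟨ham.trans hx.1.le, hx.2⟩)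
  -- the four elementary s-integrals
  have hhalf : ((a+b)/2 - a)/(b-a) = 1/2 := by
    rw [div_eq_div_iff hbne (by norm_num : (2:ℝ) ≠ 0)]
    ring
  have hhalf2 : ((a+b)/2 - b)/(a-b) = 1/2 := by
    rw [div_eq_div_iff habne (by norm_num : (2:ℝ) ≠ 0)]
    ring
  have hinv2 : ((1:ℝ)/2) ^ (s+1) = ((2:ℝ)^(s+1))⁻¹ := by
    rw [show ((1:ℝ)/2) = 2⁻¹ by norm_num, Real.inv_rpow (by norm_num : (0:ℝ) ≤ 2)]
  have e_int1 : ∫ t in a..(a+b)/2, ((t-a)/(b-a)) ^ s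
      = (b-a) * (1/((2:ℝ)^(s+1)*(s+1))) := by
    rw [simpson_int_rpow_affine a (b-a) s hbne hs0 a ((a+b)/2), hhalf, sub_self, zero_div,
      Real.zero_rpow hs1, hinv2]
    field_simp
    ring
    try exact Or.inl trivial
  have congr_ba : ∀ α β : ℝ, (∫ t in α..β, ((b-t)/(b-a)) ^ s)
      = ∫ t in α..β, ((t-b)/(a-b)) ^ s := by
    intro α β
    apply intervalIntegral.integral_congr
    intro t _
    simp only []
    rw [show (b-t)/(b-a) = (t-b)/(a-b) by rw [div_eq_div_iff hbne habne]; ring]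
  have e_int2 : ∫ t in a..(a+b)/2, ((b-t)/(b-a)) ^ s
      = (b-a) * (((2:ℝ)^(s+1)-1)/((2:ℝ)^(s+1)*(s+1))) := by
    rw [congr_ba, simpson_int_rpow_affine b (a-b) s habne hs0 a ((a+b)/2), hhalf2,
      div_self habne, Real.one_rpow, hinv2]
    field_simp
    ring
    try exact Or.inl trivial
  have e_int3 : ∫ t in ((a+b)/2)..b, ((t-a)/(b-a)) ^ s
      = (b-a) * (((2:ℝ)^(s+1)-1)/((2:ℝ)^(s+1)*(s+1))) := by
    rw [simpson_int_rpow_affine a (b-a) s hbne hs0 ((a+b)/2) b, hhalf,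
      div_self hbne, Real.one_rpow, hinv2]
    field_simp
    try exact Or.inl trivial
  have e_int4 : ∫ t in ((a+b)/2)..b, ((b-t)/(b-a)) ^ s
      = (b-a) * (1/((2:ℝ)^(s+1)*(s+1))) := by
    rw [congr_ba, simpson_int_rpow_affine b (a-b) s habne hs0 ((a+b)/2) b, hhalf2,
      sub_self, zero_div, Real.zero_rpow hs1, hinv2]
    field_simp
    ring
    try exact Or.inl trivial

  -- split bound integrals
  have hsplit_bound : ∀ α β : ℝ,
      (∫ t in α..β, (((b-t)/(b-a)) ^ s * |f3 a| ^ q + ((t-a)/(b-a)) ^ s * |f3 b| ^ q))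
      = (∫ t in α..β, ((b-t)/(b-a)) ^ s) * |f3 a| ^ q
        + (∫ t in α..β, ((t-a)/(b-a)) ^ s) * |f3 b| ^ q := by
    intro α β
    rw [intervalIntegral.integral_add (f := fun t => ((b-t)/(b-a)) ^ s * |f3 a| ^ q)
      (g := fun t => ((t-a)/(b-a)) ^ s * |f3 b| ^ q)
      (((Continuous.rpow_const (by fun_prop) (fun x => Or.inr hs0.le)).mul
        continuous_const).intervalIntegrable _ _)
      (((Continuous.rpow_const (by fun_prop) (fun x => Or.inr hs0.le)).mul
        continuous_const).intervalIntegrable _ _),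
      intervalIntegral.integral_mul_const, intervalIntegral.integral_mul_const]
  have hS1 : ∫ x in Set.Ioc a ((a+b)/2), |f3 x| ^ q
      ≤ (b-a) * (((2:ℝ)^(s+1)-1)/((2:ℝ)^(s+1)*(s+1)) * |f3 a| ^ q
          + |f3 b| ^ q / ((2:ℝ)^(s+1)*(s+1))) := by
    have h1 : ∫ x in Set.Ioc a ((a+b)/2), |f3 x| ^ q
        ≤ ∫ x in Set.Ioc a ((a+b)/2),
            (((b-x)/(b-a)) ^ s * |f3 a| ^ q + ((x-a)/(b-a)) ^ s * |f3 b| ^ q) := by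
      apply setIntegral_mono_on hq_int1 (hbound_cont.integrableOn_Ioc) measurableSet_Ioc
      intro t ht
      exact hpoint t ⟨ht.1.le, ht.2.trans hmb⟩
    refine h1.trans_eq ?_
    rw [← intervalIntegral.integral_of_le ham, hsplit_bound, e_int2, e_int1]
    ring
  have hS2 : ∫ x in Set.Ioc ((a+b)/2) b, |f3 x| ^ q
      ≤ (b-a) * (|f3 a| ^ q / ((2:ℝ)^(s+1)*(s+1))
          + ((2:ℝ)^(s+1)-1)/((2:ℝ)^(s+1)*(s+1)) * |f3 b| ^ q) := by
    have h1 : ∫ x in Set.Ioc ((a+b)/2) b, |f3 x| ^ q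
        ≤ ∫ x in Set.Ioc ((a+b)/2) b,
            (((b-x)/(b-a)) ^ s * |f3 a| ^ q + ((x-a)/(b-a)) ^ s * |f3 b| ^ q) := by
      apply setIntegral_mono_on hq_int2 (hbound_cont.integrableOn_Ioc) measurableSet_Ioc
      intro t ht
      exact hpoint t ⟨ham.trans ht.1.le, ht.2⟩
    refine h1.trans_eq ?_
    rw [← intervalIntegral.integral_of_le hmb, hsplit_bound, e_int4, e_int3]
    ring
  -- kernel Lp integrals
  have hCK1 : ∫ x in Set.Ioc a ((a+b)/2), |(x-a)^2*((b-a)-2*(x-a))/12| ^ p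
      = ((1:ℝ)/6)^p * (((b-a)/2) ^ (3*p+1) * G) := by
    rw [← intervalIntegral.integral_of_le ham]
    have hcomp := intervalIntegral.integral_comp_add_left (a := 0) (b := (b-a)/2)
      (fun t => |(t-a)^2*((b-a)-2*(t-a))/12| ^ p) a
    rw [add_zero, show a + (b-a)/2 = (a+b)/2 by ring] at hcomp
    rw [← hcomp]
    have hcongr : (∫ x in (0:ℝ)..((b-a)/2),
        (fun t => |(t-a)^2*((b-a)-2*(t-a))/12| ^ p) (a + x))
        = ∫ x in (0:ℝ)..((b-a)/2), (x^2*((b-a)/2 - x)/6) ^ p := by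
      apply intervalIntegral.integral_congr
      intro x hx
      rw [Set.uIcc_of_le hc.le] at hx
      simp only []
      rw [show (a + x - a)^2*((b-a)-2*(a + x - a))/12 = x^2*((b-a)-2*x)/12 by ring]
      rw [abs_of_nonneg (div_nonneg (mul_nonneg (sq_nonneg x)
        (by linarith [hx.2])) (by norm_num : (0:ℝ) ≤ 12))]
      rw [show x^2*((b-a)-2*x)/12 = x^2*((b-a)/2 - x)/6 by ring]
    rw [hcongr]
    exact simpson_kernel_rpow p ((b-a)/2) (by linarith) hc
  have hCK2 : ∫ x in Set.Ioc ((a+b)/2) b, |(b-x)^2*(2*(b-x)-(b-a))/12| ^ p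
      = ((1:ℝ)/6)^p * (((b-a)/2) ^ (3*p+1) * G) := by
    rw [← intervalIntegral.integral_of_le hmb]
    have hcomp := intervalIntegral.integral_comp_sub_left (a := 0) (b := (b-a)/2)
      (fun t => |(b-t)^2*(2*(b-t)-(b-a))/12| ^ p) b
    rw [sub_zero, show b - (b-a)/2 = (a+b)/2 by ring] at hcomp
    rw [← hcomp]
    have hcongr : (∫ x in (0:ℝ)..((b-a)/2),
        (fun t => |(b-t)^2*(2*(b-t)-(b-a))/12| ^ p) (b - x))
        = ∫ x in (0:ℝ)..((b-a)/2), (x^2*((b-a)/2 - x)/6) ^ p := by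
      apply intervalIntegral.integral_congr
      intro x hx
      rw [Set.uIcc_of_le hc.le] at hx
      simp only []
      rw [show (b - (b - x))^2*(2*(b - (b - x))-(b-a))/12 = x^2*(2*x-(b-a))/12 by ring]
      rw [abs_of_nonpos (div_nonpos_of_nonpos_of_nonneg
        (mul_nonpos_of_nonneg_of_nonpos (sq_nonneg x) (by linarith [hx.2]))
        (by norm_num : (0:ℝ) ≤ 12))]
      rw [show -(x^2*(2*x-(b-a))/12) = x^2*((b-a)/2 - x)/6 by ring]
    rw [hcongr]
    exact simpson_kernel_rpow p ((b-a)/2) (by linarith) hc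
  -- Hölder
  have hH1 : |∫ t in a..(a+b)/2, ((t-a)^2*((b-a)-2*(t-a))/12) * f3 t|
      ≤ (∫ x in Set.Ioc a ((a+b)/2), |(x-a)^2*((b-a)-2*(x-a))/12| ^ p) ^ (1/p)
        * (∫ x in Set.Ioc a ((a+b)/2), |f3 x| ^ q) ^ (1/q) :=
    simpson_holder_half _ _ _ _ ham p q hpconj (by fun_prop)
      hf3meas.aestronglyMeasurable hq_int1
  have hH2 : |∫ t in ((a+b)/2)..b, ((b-t)^2*(2*(b-t)-(b-a))/12) * f3 t|
      ≤ (∫ x in Set.Ioc ((a+b)/2) b, |(b-x)^2*(2*(b-x)-(b-a))/12| ^ p) ^ (1/p)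
        * (∫ x in Set.Ioc ((a+b)/2) b, |f3 x| ^ q) ^ (1/q) :=
    simpson_holder_half _ _ _ _ hmb p q hpconj (by fun_prop)
      hf3meas.aestronglyMeasurable hq_int2
  -- nonnegativity facts
  have h2ge : (1:ℝ) ≤ (2:ℝ)^(s+1) := by
    rw [show (1:ℝ) = (2:ℝ)^(0:ℝ) by rw [Real.rpow_zero]]
    exact Real.rpow_le_rpow_of_exponent_le (by norm_num) (by linarith)
  have hden : 0 ≤ (2:ℝ)^(s+1)*(s+1) := mul_nonneg h2s.le (by linarith)
  have hW1nn : 0 ≤ |f3 a| ^ q / ((2:ℝ)^(s+1)*(s+1))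
      + ((2:ℝ)^(s+1)-1)/((2:ℝ)^(s+1)*(s+1)) * |f3 b| ^ q :=
    add_nonneg (div_nonneg (Real.rpow_nonneg (abs_nonneg _) q) hden)
      (mul_nonneg (div_nonneg (by linarith) hden) (Real.rpow_nonneg (abs_nonneg _) q))
  have hW2nn : 0 ≤ ((2:ℝ)^(s+1)-1)/((2:ℝ)^(s+1)*(s+1)) * |f3 a| ^ q
      + |f3 b| ^ q / ((2:ℝ)^(s+1)*(s+1)) :=
    add_nonneg (mul_nonneg (div_nonneg (by linarith) hden) (Real.rpow_nonneg (abs_nonneg _) q))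
      (div_nonneg (Real.rpow_nonneg (abs_nonneg _) q) hden)

  set V := ((1:ℝ)/6)^p * (((b-a)/2) ^ (3*p+1) * G) with hVdef
  have hVnn : 0 ≤ V := mul_nonneg (Real.rpow_nonneg (by norm_num) _)
    (mul_nonneg (Real.rpow_nonneg hc.le _) hGpos.le)
  have hq1nn : (0:ℝ) ≤ 1/q := by positivity
  have hS1nn : 0 ≤ ∫ x in Set.Ioc a ((a+b)/2), |f3 x| ^ q :=
    setIntegral_nonneg measurableSet_Ioc (fun x _ => Real.rpow_nonneg (abs_nonneg _) _)
  have hS2nn : 0 ≤ ∫ x in Set.Ioc ((a+b)/2) b, |f3 x| ^ q :=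
    setIntegral_nonneg measurableSet_Ioc (fun x _ => Real.rpow_nonneg (abs_nonneg _) _)
  have hB1 : |∫ t in a..(a+b)/2, ((t-a)^2*((b-a)-2*(t-a))/12) * f3 t|
      ≤ V ^ (1/p) * ((b-a) * (((2:ℝ)^(s+1)-1)/((2:ℝ)^(s+1)*(s+1)) * |f3 a| ^ q
          + |f3 b| ^ q / ((2:ℝ)^(s+1)*(s+1)))) ^ (1/q) := by
    refine hH1.trans ?_
    rw [hCK1]
    exact mul_le_mul_of_nonneg_left (Real.rpow_le_rpow hS1nn hS1 hq1nn)
      (Real.rpow_nonneg hVnn _)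
  have hB2 : |∫ t in ((a+b)/2)..b, ((b-t)^2*(2*(b-t)-(b-a))/12) * f3 t|
      ≤ V ^ (1/p) * ((b-a) * (|f3 a| ^ q / ((2:ℝ)^(s+1)*(s+1))
          + ((2:ℝ)^(s+1)-1)/((2:ℝ)^(s+1)*(s+1)) * |f3 b| ^ q)) ^ (1/q) := by
    refine hH2.trans ?_
    rw [hCK2]
    exact mul_le_mul_of_nonneg_left (Real.rpow_le_rpow hS2nn hS2 hq1nn)
      (Real.rpow_nonneg hVnn _)
  -- the constant identity
  have hA1 : V^(1/p) = (1/6) * ((b-a)/2)^((3*p+1)*(1/p)) * G^(1/p) := by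
    rw [hVdef,
      Real.mul_rpow (Real.rpow_nonneg (by norm_num) p)
        (mul_nonneg (Real.rpow_nonneg hc.le _) hGpos.le),
      Real.mul_rpow (Real.rpow_nonneg hc.le _) hGpos.le,
      ← Real.rpow_mul (by norm_num : (0:ℝ) ≤ 1/6), mul_one_div_cancel hp0, Real.rpow_one,
      ← Real.rpow_mul hc.le]
    ring
  have hA2 : ((b:ℝ)-a)^(1/q) = 2^(1/q) * ((b-a)/2)^(1/q) := by
    conv_lhs => rw [show (b:ℝ)-a = 2*((b-a)/2) by ring]
    exact Real.mul_rpow (by norm_num) hc.le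
  have hA3 : ((b-a)/2)^((3*p+1)*(1/p)) * ((b-a)/2)^(1/q) = ((b-a)/2)^(4:ℕ) := by
    rw [← Real.rpow_add hc]
    have hx : (3*p+1)*(1/p) = 3 + 1/p := by field_simp
    rw [show (3*p+1)*(1/p) + 1/q = 4 by rw [hx]; linarith,
      show ((4:ℝ)) = ((4:ℕ):ℝ) by norm_num, Real.rpow_natCast]
  have hA4 : (2:ℝ)^(1/q) = 2 * (((1:ℝ)/2)^(1/p)) := by
    rw [show (1:ℝ)/q = 1 - 1/p by linarith, Real.rpow_sub (by norm_num : (0:ℝ) < 2),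
      Real.rpow_one, Real.div_rpow (by norm_num : (0:ℝ) ≤ 1) (by norm_num : (0:ℝ) ≤ 2),
      Real.one_rpow]
    ring
  have hD : V^(1/p) * ((b:ℝ)-a)^(1/q) = (b-a)^4/48 * ((1:ℝ)/2)^(1/p) * G^(1/p) := by
    calc V^(1/p) * ((b:ℝ)-a)^(1/q)
        = (1/6) * (((b-a)/2)^((3*p+1)*(1/p)) * ((b-a)/2)^(1/q)) * G^(1/p) * 2^(1/q) := by
          rw [hA1, hA2]; ring
      _ = (1/6) * (((b-a)/2)^(4:ℕ)) * G^(1/p) * (2 * (((1:ℝ)/2)^(1/p))) := by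
          rw [hA3, hA4]
      _ = (b-a)^4/48 * ((1:ℝ)/2)^(1/p) * G^(1/p) := by ring
  -- final assembly
  have hstep1 : |(∫ x in a..b, f x) - (b - a) / 6 * (f a + 4 * f ((a + b) / 2) + f b)|
      ≤ |∫ t in a..(a+b)/2, ((t-a)^2*((b-a)-2*(t-a))/12) * f3 t|
        + |∫ t in ((a+b)/2)..b, ((b-t)^2*(2*(b-t)-(b-a))/12) * f3 t| := by
    rw [key]
    exact abs_add_le _ _
  refine hstep1.trans ((add_le_add hB1 hB2).trans_eq ?_)
  rw [Real.mul_rpow hba.le hW2nn, Real.mul_rpow hba.le hW1nn]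
  calc V^(1/p) * (((b:ℝ)-a)^(1/q) * (((2:ℝ)^(s+1)-1)/((2:ℝ)^(s+1)*(s+1)) * |f3 a| ^ q
          + |f3 b| ^ q / ((2:ℝ)^(s+1)*(s+1)))^(1/q))
      + V^(1/p) * (((b:ℝ)-a)^(1/q) * (|f3 a| ^ q / ((2:ℝ)^(s+1)*(s+1))
          + ((2:ℝ)^(s+1)-1)/((2:ℝ)^(s+1)*(s+1)) * |f3 b| ^ q)^(1/q))
      = (V^(1/p) * ((b:ℝ)-a)^(1/q)) *
          ((|f3 a| ^ q / ((2:ℝ)^(s+1)*(s+1))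
            + ((2:ℝ)^(s+1)-1)/((2:ℝ)^(s+1)*(s+1)) * |f3 b| ^ q)^(1/q)
          + (((2:ℝ)^(s+1)-1)/((2:ℝ)^(s+1)*(s+1)) * |f3 a| ^ q
            + |f3 b| ^ q / ((2:ℝ)^(s+1)*(s+1)))^(1/q)) := by ring
    _ = _ := by rw [hD]
end

section
/- Let f : I → ℝ with I ⊆ [0, ∞), f three times differentiable on the interior I° with f''' integrable on [a,b], where a, b ∈ I° with a < b. Suppose |f'''|^q is s-convex in the second sense on [a,b] for some fixed s ∈ (0,1] and q ≥ 1. Then |∫_a^b f(x) dx − ((b−a)/6)·[f(a) + 4·f((a+b)/2) + f(b)]| ≤ ((b−a)^4/6)·(1/192)^{1−1/q} · { ( (2^{−4−s}/((3+s)(4+s)))·|f'''(a)|^q + (2^{−4−s}·(34 + 2^{4+s}·(s−2) + 11s + s²)/((1+s)(2+s)(3+s)(4+s)))·|f'''(b)|^q )^{1/q} + ( (2^{−4−s}·(34 + 2^{4+s}·(s−2) + 11s + s²)/((1+s)(2+s)(3+s)(4+s)))·|f'''(a)|^q + (2^{−4−s}/((3+s)(4+s)))·|f'''(b)|^q )^{1/q}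 }. -/
open MeasureTheory Real Set

section AuxLemmas

lemma myint_left (α u v p : ℝ) (hp : 0 ≤ p) (hαu : α ≤ u) (huv : u ≤ v) :
    ∫ x in u..v, (x - α) ^ p = ((v - α) ^ (p + 1) - (u - α) ^ (p + 1)) / (p + 1) := by
  have hp1 : (0:ℝ) < p + 1 := by linarith
  have key : ∀ x ∈ Set.uIcc u v,
      HasDerivAt (fun y => (y - α) ^ (p + 1) / (p + 1)) ((x - α) ^ p) x := by
    intro x hx
    have h1 : HasDerivAt (fun y : ℝ => y - α) 1 x := (hasDerivAt_id x).sub_const α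
    have h2 : HasDerivAt (fun y : ℝ => (y - α) ^ (p + 1))
        (1 * (p + 1) * (x - α) ^ (p + 1 - 1)) x :=
      HasDerivAt.rpow_const (p := p + 1) h1 (Or.inr (by linarith))
    have := h2.div_const (p + 1)
    refine this.congr_deriv ?_
    rw [add_sub_cancel_right]
    field_simp
  have hcont : IntervalIntegrable (fun x => (x - α) ^ p) volume u v := by
    apply ContinuousOn.intervalIntegrable
    apply ContinuousOn.rpow_const (by fun_prop)
    intro x hx
    exact Or.inr hp
  rw [intervalIntegral.integral_eq_sub_of_hasDerivAt key hcont]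
  ring

lemma myint_right (β u v p : ℝ) (hp : 0 ≤ p) (hvβ : v ≤ β) (huv : u ≤ v) :
    ∫ x in u..v, (β - x) ^ p = ((β - u) ^ (p + 1) - (β - v) ^ (p + 1)) / (p + 1) := by
  have hp1 : (0:ℝ) < p + 1 := by linarith
  have key : ∀ x ∈ Set.uIcc u v,
      HasDerivAt (fun y => -((β - y) ^ (p + 1) / (p + 1))) ((β - x) ^ p) x := by
    intro x hx
    have h1 : HasDerivAt (fun y : ℝ => β - y) (-1) x := by
      simpa using (hasDerivAt_const x β).fun_sub (hasDerivAt_id x)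
    have h2 : HasDerivAt (fun y : ℝ => (β - y) ^ (p + 1))
        (-1 * (p + 1) * (β - x) ^ (p + 1 - 1)) x :=
      HasDerivAt.rpow_const (p := p + 1) h1 (Or.inr (by linarith))
    have := (h2.div_const (p + 1)).neg
    refine this.congr_deriv ?_
    rw [add_sub_cancel_right]
    field_simp
  have hcont : IntervalIntegrable (fun x => (β - x) ^ p) volume u v := by
    apply ContinuousOn.intervalIntegrable
    apply ContinuousOn.rpow_const (by fun_prop)
    intro x hx
    exact Or.inr hp
  rw [intervalIntegral.integral_eq_sub_of_hasDerivAt key hcont]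
  ring

lemma poly_rpow_left (α s : ℝ) (hs : 0 ≤ s) (u v : ℝ) (hαu : α ≤ u) (huv : u ≤ v)
    (c0 c1 c2 c3 : ℝ) :
    ∫ x in u..v, (c0 + c1*(x - α) + c2*(x - α)^2 + c3*(x - α)^3) * (x - α)^s
      = c0*(((v - α)^(s+1) - (u - α)^(s+1))/(s+1))
      + c1*(((v - α)^(s+2) - (u - α)^(s+2))/(s+2))
      + c2*(((v - α)^(s+3) - (u - α)^(s+3))/(s+3))
      + c3*(((v - α)^(s+4) - (u - α)^(s+4))/(s+4)) := by
  have iir : ∀ p : ℝ, 0 ≤ p → IntervalIntegrable (fun x => (x - α) ^ p) volume u v := by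
    intro p hp
    apply ContinuousOn.intervalIntegrable
    apply ContinuousOn.rpow_const (by fun_prop)
    intro x hx
    exact Or.inr hp
  have congr1 : Set.EqOn
      (fun x => (c0 + c1*(x - α) + c2*(x - α)^2 + c3*(x - α)^3) * (x - α)^s)
      (fun x => c0*(x - α)^s + (c1*(x - α)^(s+1) +
        (c2*(x - α)^(s+2) + c3*(x - α)^(s+3)))) (Set.uIcc u v) := by
    intro x hx
    rw [Set.uIcc_of_le huv] at hx
    have hx0 : (0:ℝ) ≤ x - α := by linarith [hx.1]
    simp only
    rw [Real.rpow_add' hx0 (by positivity : s + 1 ≠ 0),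
        Real.rpow_add' hx0 (by positivity : s + 2 ≠ 0),
        Real.rpow_add' hx0 (by positivity : s + 3 ≠ 0),
        Real.rpow_one,
        show (2:ℝ) = ((2:ℕ):ℝ) by norm_num, Real.rpow_natCast,
        show (3:ℝ) = ((3:ℕ):ℝ) by norm_num, Real.rpow_natCast]
    push_cast
    ring
  rw [intervalIntegral.integral_congr congr1]
  rw [intervalIntegral.integral_add ((iir s hs).const_mul c0)
        (((iir (s+1) (by linarith)).const_mul c1).add
          (((iir (s+2) (by linarith)).const_mul c2).add
            ((iir (s+3) (by linarith)).const_mul c3))),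
      intervalIntegral.integral_add ((iir (s+1) (by linarith)).const_mul c1)
        (((iir (s+2) (by linarith)).const_mul c2).add
          ((iir (s+3) (by linarith)).const_mul c3)),
      intervalIntegral.integral_add ((iir (s+2) (by linarith)).const_mul c2)
        ((iir (s+3) (by linarith)).const_mul c3),
      intervalIntegral.integral_const_mul, intervalIntegral.integral_const_mul,
      intervalIntegral.integral_const_mul, intervalIntegral.integral_const_mul,
      myint_left α u v s hs hαu huv,
      myint_left α u v (s+1) (by linarith) hαu huv,
      myint_left α u v (s+2) (by linarith) hαu huv,
      myint_left α u v (s+3) (by linarith) hαu huv,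
      show s+1+1 = s+2 by ring, show s+2+1 = s+3 by ring, show s+3+1 = s+4 by ring]
  ring

lemma poly_rpow_right (β s : ℝ) (hs : 0 ≤ s) (u v : ℝ) (hvβ : v ≤ β) (huv : u ≤ v)
    (c0 c1 c2 c3 : ℝ) :
    ∫ x in u..v, (c0 + c1*(β - x) + c2*(β - x)^2 + c3*(β - x)^3) * (β - x)^s
      = c0*(((β - u)^(s+1) - (β - v)^(s+1))/(s+1))
      + c1*(((β - u)^(s+2) - (β - v)^(s+2))/(s+2))
      + c2*(((β - u)^(s+3) - (β - v)^(s+3))/(s+3))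
      + c3*(((β - u)^(s+4) - (β - v)^(s+4))/(s+4)) := by
  have iir : ∀ p : ℝ, 0 ≤ p → IntervalIntegrable (fun x => (β - x) ^ p) volume u v := by
    intro p hp
    apply ContinuousOn.intervalIntegrable
    apply ContinuousOn.rpow_const (by fun_prop)
    intro x hx
    exact Or.inr hp
  have congr1 : Set.EqOn
      (fun x => (c0 + c1*(β - x) + c2*(β - x)^2 + c3*(β - x)^3) * (β - x)^s)
      (fun x => c0*(β - x)^s + (c1*(β - x)^(s+1) +
        (c2*(β - x)^(s+2) + c3*(β - x)^(s+3)))) (Set.uIcc u v) := by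
    intro x hx
    rw [Set.uIcc_of_le huv] at hx
    have hx0 : (0:ℝ) ≤ β - x := by linarith [hx.2]
    simp only
    rw [Real.rpow_add' hx0 (by positivity : s + 1 ≠ 0),
        Real.rpow_add' hx0 (by positivity : s + 2 ≠ 0),
        Real.rpow_add' hx0 (by positivity : s + 3 ≠ 0),
        Real.rpow_one,
        show (2:ℝ) = ((2:ℕ):ℝ) by norm_num, Real.rpow_natCast,
        show (3:ℝ) = ((3:ℕ):ℝ) by norm_num, Real.rpow_natCast]
    push_cast
    ring
  rw [intervalIntegral.integral_congr congr1]
  rw [intervalIntegral.integral_add ((iir s hs).const_mul c0)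
        (((iir (s+1) (by linarith)).const_mul c1).add
          (((iir (s+2) (by linarith)).const_mul c2).add
            ((iir (s+3) (by linarith)).const_mul c3))),
      intervalIntegral.integral_add ((iir (s+1) (by linarith)).const_mul c1)
        (((iir (s+2) (by linarith)).const_mul c2).add
          ((iir (s+3) (by linarith)).const_mul c3)),
      intervalIntegral.integral_add ((iir (s+2) (by linarith)).const_mul c2)
        ((iir (s+3) (by linarith)).const_mul c3),
      intervalIntegral.integral_const_mul, intervalIntegral.integral_const_mul,
      intervalIntegral.integral_const_mul, intervalIntegral.integral_const_mul,
      myint_right β u v s hs hvβ huv,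
      myint_right β u v (s+1) (by linarith) hvβ huv,
      myint_right β u v (s+2) (by linarith) hvβ huv,
      myint_right β u v (s+3) (by linarith) hvβ huv,
      show s+1+1 = s+2 by ring, show s+2+1 = s+3 by ring, show s+3+1 = s+4 by ring]
  ring

lemma kernel_int_left (α γ u v : ℝ) :
    ∫ x in u..v, (x - α)^2*(γ - x)/6 =
      (((γ-α)*(v-α)^3/3 - (v-α)^4/4) - ((γ-α)*(u-α)^3/3 - (u-α)^4/4))/6 := by
  have key : ∀ x ∈ Set.uIcc u v,
      HasDerivAt (fun y => ((γ-α)*(y-α)^3/3 - (y-α)^4/4)/6) ((x - α)^2*(γ - x)/6) x := by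
    intro x _
    have h3 : HasDerivAt (fun y : ℝ => (y-α)^3) (3*(x-α)^2) x := by
      simpa using ((hasDerivAt_id x).sub_const α).fun_pow 3
    have h4 : HasDerivAt (fun y : ℝ => (y-α)^4) (4*(x-α)^3) x := by
      simpa using ((hasDerivAt_id x).sub_const α).fun_pow 4
    have := (((h3.const_mul (γ-α)).div_const 3).sub (h4.div_const 4)).div_const 6
    refine this.congr_deriv ?_
    ring
  rw [intervalIntegral.integral_eq_sub_of_hasDerivAt key
    (ContinuousOn.intervalIntegrable (by fun_prop))]
  ring

lemma kernel_int_right (β γ u v : ℝ) :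
    ∫ x in u..v, (x - β)^2*(x - γ)/6 =
      (((v-β)^4/4 - (γ-β)*(v-β)^3/3) - ((u-β)^4/4 - (γ-β)*(u-β)^3/3))/6 := by
  have key : ∀ x ∈ Set.uIcc u v,
      HasDerivAt (fun y => ((y-β)^4/4 - (γ-β)*(y-β)^3/3)/6) ((x - β)^2*(x - γ)/6) x := by
    intro x _
    have h3 : HasDerivAt (fun y : ℝ => (y-β)^3) (3*(x-β)^2) x := by
      simpa using ((hasDerivAt_id x).sub_const β).fun_pow 3
    have h4 : HasDerivAt (fun y : ℝ => (y-β)^4) (4*(x-β)^3) x := by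
      simpa using ((hasDerivAt_id x).sub_const β).fun_pow 4
    have := ((h4.div_const 4).sub ((h3.const_mul (γ-β)).div_const 3)).div_const 6
    refine this.congr_deriv ?_
    ring
  rw [intervalIntegral.integral_eq_sub_of_hasDerivAt key
    (ContinuousOn.intervalIntegrable (by fun_prop))]
  ring

lemma holder_weighted (α β : ℝ) (hαβ : α ≤ β) (w g : ℝ → ℝ) (q : ℝ) (hq : 1 ≤ q)
    (hw : ContinuousOn w (Set.Icc α β)) (hw0 : ∀ x ∈ Set.Icc α β, 0 ≤ w x)
    (hg : AEStronglyMeasurable g (volume.restrict (Set.Ioc α β)))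
    (M : ℝ) (hM : ∀ x ∈ Set.Icc α β, |g x| ≤ M) :
    ∫ x in α..β, w x * |g x| ≤
      (∫ x in α..β, w x) ^ (1 - 1 / q) * (∫ x in α..β, w x * |g x| ^ q) ^ (1 / q) := by
  rcases eq_or_lt_of_le hq with hq1 | hq1
  · subst hq1
    simp only [div_one, sub_self, Real.rpow_zero, one_mul, Real.rpow_one]
    exact le_rfl
  · set p := q.conjExponent with hpdef
    have hpq : p.HolderConjugate q := (Real.HolderConjugate.conjExponent hq1).symm
    have hp1 : 1 - 1/q = 1/p := by
      rw [one_div, one_div]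
      linarith [hpq.inv_add_inv_eq_one]
    have hfin : IsFiniteMeasure (volume.restrict (Set.Ioc α β)) := by
      constructor
      rw [Measure.restrict_apply_univ, Real.volume_Ioc]
      exact ENNReal.ofReal_lt_top
    obtain ⟨C, hC⟩ : ∃ C, ∀ x ∈ Set.Icc α β, w x ≤ C := by
      rcases (isCompact_Icc.bddAbove_image hw).exists_ge 0 with ⟨C, _, hC⟩
      exact ⟨C, fun x hx => hC _ (Set.mem_image_of_mem w hx)⟩
    have hwm : AEStronglyMeasurable w (volume.restrict (Set.Ioc α β)) :=
      (hw.aestronglyMeasurable measurableSet_Icc).mono_measure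
        (Measure.restrict_mono Set.Ioc_subset_Icc_self le_rfl)
    have haeIcc : ∀ᵐ x ∂(volume.restrict (Set.Ioc α β)), x ∈ Set.Icc α β := by
      filter_upwards [ae_restrict_mem measurableSet_Ioc] with x hx
      exact Set.Ioc_subset_Icc_self hx
    have hmemf : MemLp (fun x => w x ^ (1/p)) (ENNReal.ofReal p)
        (volume.restrict (Set.Ioc α β)) := by
      apply MemLp.of_bound (C := (max C 0) ^ (1/p))
      · exact (Real.continuous_rpow_const hpq.one_div_nonneg).comp_aestronglyMeasurable hwm
      · filter_upwards [haeIcc] with x hx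
        rw [Real.norm_eq_abs, abs_of_nonneg (Real.rpow_nonneg (hw0 x hx) _)]
        exact Real.rpow_le_rpow (hw0 x hx) (le_max_of_le_left (hC x hx)) hpq.one_div_nonneg
    have hmemg : MemLp (fun x => w x ^ (1/q) * |g x|) (ENNReal.ofReal q)
        (volume.restrict (Set.Ioc α β)) := by
      apply MemLp.of_bound (C := (max C 0) ^ (1/q) * max M 0)
      · have habs : AEStronglyMeasurable (fun x => |g x|) (volume.restrict (Set.Ioc α β)) := by
          simpa [Real.norm_eq_abs] using hg.norm
        exact ((Real.continuous_rpow_const hpq.symm.one_div_nonneg).comp_aestronglyMeasurable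
          hwm).mul habs
      · filter_upwards [haeIcc] with x hx
        rw [Real.norm_eq_abs, abs_mul, abs_of_nonneg (Real.rpow_nonneg (hw0 x hx) _), abs_abs]
        apply mul_le_mul _ (le_max_of_le_left (hM x hx)) (abs_nonneg _)
          (Real.rpow_nonneg (le_max_right _ _) _)
        exact Real.rpow_le_rpow (hw0 x hx) (le_max_of_le_left (hC x hx)) hpq.symm.one_div_nonneg
    have hH := MeasureTheory.integral_mul_le_Lp_mul_Lq_of_nonneg hpq
      (f := fun x => w x ^ (1/p)) (g := fun x => w x ^ (1/q) * |g x|)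
      (by filter_upwards [haeIcc] with x hx; exact Real.rpow_nonneg (hw0 x hx) _)
      (by filter_upwards [haeIcc] with x hx
          exact mul_nonneg (Real.rpow_nonneg (hw0 x hx) _) (abs_nonneg _)) hmemf hmemg
    have hsum : 1/p + 1/q = 1 := by rw [one_div, one_div]; exact hpq.inv_add_inv_eq_one
    rw [hp1, intervalIntegral.integral_of_le hαβ, intervalIntegral.integral_of_le hαβ,
        intervalIntegral.integral_of_le hαβ]
    have e1 : ∫ x in Set.Ioc α β, w x * |g x| =
        ∫ x in Set.Ioc α β, (w x ^ (1/p)) * (w x ^ (1/q) * |g x|) := by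
      refine integral_congr_ae ?_
      filter_upwards [haeIcc] with x hx
      rw [← mul_assoc, ← Real.rpow_add' (hw0 x hx) (by rw [hsum]; norm_num), hsum,
        Real.rpow_one]
    have e2 : ∫ x in Set.Ioc α β, w x = ∫ x in Set.Ioc α β, (w x ^ (1/p)) ^ p := by
      refine integral_congr_ae ?_
      filter_upwards [haeIcc] with x hx
      rw [← Real.rpow_mul (hw0 x hx), one_div, inv_mul_cancel₀ hpq.ne_zero, Real.rpow_one]
    have e3 : ∫ x in Set.Ioc α β, w x * |g x| ^ q =
        ∫ x in Set.Ioc α β, (w x ^ (1/q) * |g x|) ^ q := by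
      refine integral_congr_ae ?_
      filter_upwards [haeIcc] with x hx
      rw [Real.mul_rpow (Real.rpow_nonneg (hw0 x hx) _) (abs_nonneg _),
        ← Real.rpow_mul (hw0 x hx), one_div, inv_mul_cancel₀ hpq.symm.ne_zero, Real.rpow_one]
    rw [e1, e2, e3]
    exact hH

end AuxLemmas

set_option maxHeartbeats 1000000 in
theorem simpson_sconvex_power_mean (I : Set ℝ) (hI : I.OrdConnected)
    (hIsub : I ⊆ Set.Ici (0 : ℝ)) (f : ℝ → ℝ) (a b s q : ℝ)
    (ha : a ∈ interior I) (hb : b ∈ interior I) (hab : a < b)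
    (hd1 : ∀ x ∈ interior I, DifferentiableAt ℝ f x)
    (hd2 : ∀ x ∈ interior I, DifferentiableAt ℝ (deriv f) x)
    (hd3 : ∀ x ∈ interior I, DifferentiableAt ℝ (deriv (deriv f)) x)
    (hint : IntegrableOn (deriv (deriv (deriv f))) (Set.Icc a b))
    (hs : s ∈ Set.Ioc (0 : ℝ) 1) (hq : 1 ≤ q)
    (hconv : SConvexSecondSenseOn s (Set.Icc a b)
      fun x => |deriv (deriv (deriv f)) x| ^ q) :
    |(∫ x in a..b, f x) - (b - a) / 6 * (f a + 4 * f ((a + b) / 2) + f b)| ≤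
      (b - a) ^ 4 / 6 * ((1 : ℝ) / 192) ^ (1 - 1 / q) *
        (((2 : ℝ) ^ (-4 - s) / ((3 + s) * (4 + s)) * |deriv (deriv (deriv f)) a| ^ q +
              (2 : ℝ) ^ (-4 - s) * (34 + (2 : ℝ) ^ (4 + s) * (s - 2) + 11 * s + s ^ 2) /
                  ((1 + s) * (2 + s) * (3 + s) * (4 + s)) *
                |deriv (deriv (deriv f)) b| ^ q) ^ (1 / q) +
          ((2 : ℝ) ^ (-4 - s) * (34 + (2 : ℝ) ^ (4 + s) * (s - 2) + 11 * s + s ^ 2) /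
                  ((1 + s) * (2 + s) * (3 + s) * (4 + s)) *
                |deriv (deriv (deriv f)) a| ^ q +
              (2 : ℝ) ^ (-4 - s) / ((3 + s) * (4 + s)) *
                |deriv (deriv (deriv f)) b| ^ q) ^ (1 / q)) := by
  obtain ⟨hs0, hs1⟩ := hs
  have hq0 : (0:ℝ) < q := lt_of_lt_of_le one_pos hq
  set c : ℝ := (a + b) / 2 with hc
  have hac : a ≤ c := by rw [hc]; linarith
  have hcb : c ≤ b := by rw [hc]; linarith
  have hba' : (0:ℝ) < b - a := by linarith
  have hsub : Set.Icc a b ⊆ interior I := by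
    have hIab : Set.Icc a b ⊆ I := hI.out (interior_subset ha) (interior_subset hb)
    have hIoo : Set.Ioo a b ⊆ interior I := by
      rw [← interior_Icc]; exact interior_mono hIab
    intro x hx
    rcases eq_or_lt_of_le hx.1 with h | h
    · exact h ▸ ha
    rcases eq_or_lt_of_le hx.2 with h2 | h2
    · exact h2 ▸ hb
    exact hIoo ⟨h, h2⟩
  have fCont : ContinuousOn f (interior I) := fun y hy =>
    ((hd1 y hy).continuousAt).continuousWithinAt
  have hopen : IsOpen (interior I) := isOpen_interior
  have hfi : ∀ u v : ℝ, u ∈ Set.Icc a b → v ∈ Set.Icc a b →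
      IntervalIntegrable f volume u v := by
    intro u v hu hv
    apply ContinuousOn.intervalIntegrable
    apply fCont.mono
    intro x hx
    apply hsub
    rcases Set.mem_uIcc.1 hx with h | h
    · exact ⟨le_trans hu.1 h.1, le_trans h.2 hv.2⟩
    · exact ⟨le_trans hv.1 h.1, le_trans h.2 hu.2⟩
  have hf3i : ∀ u v : ℝ, u ∈ Set.Icc a b → v ∈ Set.Icc a b → u ≤ v →
      IntervalIntegrable (deriv (deriv (deriv f))) volume u v := by
    intro u v hu hv huv
    rw [intervalIntegrable_iff_integrableOn_Icc_of_le huv]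
    exact hint.mono_set (Set.Icc_subset_Icc hu.1 hv.2)
  have haIcc : a ∈ Set.Icc a b := ⟨le_refl a, le_of_lt hab⟩
  have hbIcc : b ∈ Set.Icc a b := ⟨le_of_lt hab, le_refl b⟩
  have hcIcc : c ∈ Set.Icc a b := ⟨hac, hcb⟩
  -- The Simpson identity with the third derivative.
  have key : (∫ x in a..b, f x) - (b - a) / 6 * (f a + 4 * f c + f b) =
      (∫ x in a..c, (x - a)^2 * (c - x) / 6 * deriv (deriv (deriv f)) x)
      + ∫ x in c..b, (x - b)^2 * (c - x) / 6 * deriv (deriv (deriv f)) x := by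
    have main : ∀ e u v : ℝ, u ∈ Set.Icc a b → v ∈ Set.Icc a b → u ≤ v →
        (∫ x in u..v, (x - e)^2 * (c - x) / 6 * deriv (deriv (deriv f)) x) =
        (fun x => (x - e)^2 * (c - x) / 6 * deriv (deriv f) x
          - (2*(x - e)*(c - x) - (x - e)^2) / 6 * deriv f x
          + ((2*e + c)/3 - x) * f x + ∫ t in u..x, f t) v -
        (fun x => (x - e)^2 * (c - x) / 6 * deriv (deriv f) x
          - (2*(x - e)*(c - x) - (x - e)^2) / 6 * deriv f x
          + ((2*e + c)/3 - x) * f x + ∫ t in u..x, f t) u := by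
      intro e u v hu hv huv
      apply intervalIntegral.integral_eq_sub_of_hasDerivAt
      · intro x hx
        rw [Set.uIcc_of_le huv] at hx
        have hxI : x ∈ interior I := hsub ⟨le_trans hu.1 hx.1, le_trans hx.2 hv.2⟩
        have hK : HasDerivAt (fun y => (y - e)^2 * (c - y) / 6)
            ((2*(x - e)*(c - x) - (x - e)^2) / 6) x := by
          have h1 : HasDerivAt (fun y : ℝ => (y - e)^2) (2*(x - e)) x := by
            simpa using (((hasDerivAt_id x).sub_const e).fun_pow 2)
          have h2 : HasDerivAt (fun y : ℝ => c - y) (-1) x := by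
            simpa using (hasDerivAt_const x c).fun_sub (hasDerivAt_id x)
          have := (h1.mul h2).div_const 6
          refine this.congr_deriv ?_
          ring
        have hKd : HasDerivAt (fun y => (2*(y - e)*(c - y) - (y - e)^2) / 6)
            ((2*e + c)/3 - x) x := by
          have h1 : HasDerivAt (fun y : ℝ => 2*(y - e)*(c - y) - (y - e)^2)
              (2*(c - x) + 2*(x - e)*(-1) - 2*(x - e)) x := by
            have ha1 : HasDerivAt (fun y : ℝ => 2*(y - e)) 2 x := by
              simpa using ((hasDerivAt_id x).sub_const e).const_mul 2
            have ha2 : HasDerivAt (fun y : ℝ => c - y) (-1) x := by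
              simpa using (hasDerivAt_const x c).fun_sub (hasDerivAt_id x)
            have ha3 : HasDerivAt (fun y : ℝ => (y - e)^2) (2*(x - e)) x := by
              simpa using (((hasDerivAt_id x).sub_const e).fun_pow 2)
            have := (ha1.mul ha2).sub ha3
            exact this.congr_deriv rfl
          have := h1.div_const 6
          refine this.congr_deriv ?_
          ring
        have hKdd : HasDerivAt (fun y : ℝ => (2*e + c)/3 - y) (-1) x := by
          simpa using (hasDerivAt_const x ((2*e + c)/3)).fun_sub (hasDerivAt_id x)
        have hf2 : HasDerivAt (deriv (deriv f)) (deriv (deriv (deriv f)) x) x :=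
          (hd3 x hxI).hasDerivAt
        have hf1 : HasDerivAt (deriv f) (deriv (deriv f) x) x := (hd2 x hxI).hasDerivAt
        have hf0 : HasDerivAt f (deriv f x) x := (hd1 x hxI).hasDerivAt
        have hFTC : HasDerivAt (fun y => ∫ t in u..y, f t) (f x) x := by
          apply intervalIntegral.integral_hasDerivAt_right
            (hfi u x hu ⟨le_trans hu.1 hx.1, le_trans hx.2 hv.2⟩)
          · exact (fCont.stronglyMeasurableAtFilter hopen x hxI)
          · exact (hd1 x hxI).continuousAt
        have := (((hK.mul hf2).sub (hKd.mul hf1)).add (hKdd.mul hf0)).add hFTC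
        refine this.congr_deriv ?_
        ring
      · exact IntervalIntegrable.continuousOn_mul (hf3i u v hu hv huv) (by fun_prop)
    have h1 := main a a c haIcc hcIcc hac
    have h2 := main b c b hcIcc hbIcc hcb
    rw [h1, h2]
    simp only [intervalIntegral.integral_same]
    have hsplit : (∫ t in a..c, f t) + (∫ t in c..b, f t) = ∫ t in a..b, f t :=
      intervalIntegral.integral_add_adjacent_intervals (hfi a c haIcc hcIcc)
        (hfi c b hcIcc hbIcc)
    rw [← hsplit]
    simp only [hc]
    ring
  set g : ℝ → ℝ := deriv (deriv (deriv f)) with hg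
  set A : ℝ := |g a| ^ q with hA
  set B : ℝ := |g b| ^ q with hB
  set d : ℝ := (b - a) / 2 with hd
  have hd0 : (0:ℝ) < d := by rw [hd]; linarith
  -- pointwise s-convexity bound
  have hptw : ∀ x ∈ Set.Icc a b, |g x| ^ q ≤
      ((b - x)/(b - a))^s * A + ((x - a)/(b - a))^s * B := by
    intro x hx
    have ht0 : 0 ≤ (b - x)/(b - a) := div_nonneg (by linarith [hx.2]) hba'.le
    have ht1 : (b - x)/(b - a) ≤ 1 := by
      rw [div_le_one hba']; linarith [hx.1]
    have h := hconv a ⟨le_rfl, hab.le⟩ b ⟨hab.le, le_rfl⟩ ((b - x)/(b - a)) ⟨ht0, ht1⟩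
    simp only at h
    have harg : (b - x)/(b - a) * a + (1 - (b - x)/(b - a)) * b = x := by
      field_simp
      ring
    have h2 : 1 - (b - x)/(b - a) = (x - a)/(b - a) := by
      field_simp
      ring
    rw [harg, h2] at h
    exact h
  have hA0 : 0 ≤ A := Real.rpow_nonneg (abs_nonneg _) _
  have hB0 : 0 ≤ B := Real.rpow_nonneg (abs_nonneg _) _
  have hAB : ∀ x ∈ Set.Icc a b, |g x| ^ q ≤ A + B := by
    intro x hx
    refine le_trans (hptw x hx) ?_
    have ht0 : 0 ≤ (b - x)/(b - a) := div_nonneg (by linarith [hx.2]) hba'.le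
    have ht1 : (b - x)/(b - a) ≤ 1 := by rw [div_le_one hba']; linarith [hx.1]
    have hu0 : 0 ≤ (x - a)/(b - a) := div_nonneg (by linarith [hx.1]) hba'.le
    have hu1 : (x - a)/(b - a) ≤ 1 := by rw [div_le_one hba']; linarith [hx.2]
    have e1 : ((b - x)/(b - a))^s ≤ 1 := Real.rpow_le_one ht0 ht1 hs0.le
    have e2 : ((x - a)/(b - a))^s ≤ 1 := Real.rpow_le_one hu0 hu1 hs0.le
    have p1 : ((b - x)/(b - a))^s * A ≤ A := by nlinarith
    have p2 : ((x - a)/(b - a))^s * B ≤ B := by nlinarith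
    linarith
  have hM : ∀ x ∈ Set.Icc a b, |g x| ≤ (A + B)^(1/q) := by
    intro x hx
    have h1 : (|g x|^q)^(1/q) = |g x| := by
      rw [← Real.rpow_mul (abs_nonneg _), mul_one_div, div_self hq0.ne', Real.rpow_one]
    rw [← h1]
    exact Real.rpow_le_rpow (Real.rpow_nonneg (abs_nonneg _) _) (hAB x hx) (by positivity)
  have hmeas : AEStronglyMeasurable g (volume.restrict (Set.Icc a b)) :=
    hint.aestronglyMeasurable
  have meas1 : AEStronglyMeasurable g (volume.restrict (Set.Ioc a c)) :=
    hmeas.mono_measure (Measure.restrict_mono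
      (show Set.Ioc a c ⊆ Set.Icc a b from fun x hx => ⟨hx.1.le, le_trans hx.2 hcb⟩) le_rfl)
  have meas2 : AEStronglyMeasurable g (volume.restrict (Set.Ioc c b)) :=
    hmeas.mono_measure (Measure.restrict_mono
      (show Set.Ioc c b ⊆ Set.Icc a b from fun x hx => ⟨le_trans hac hx.1.le, hx.2⟩) le_rfl)
  -- kernel positivity
  have K1nn : ∀ x ∈ Set.Icc a c, 0 ≤ (x - a)^2*(c - x)/6 := fun x hx =>
    div_nonneg (mul_nonneg (sq_nonneg _) (by linarith [hx.2])) (by norm_num)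
  have K2nn : ∀ x ∈ Set.Icc c b, 0 ≤ (x - b)^2*(x - c)/6 := fun x hx =>
    div_nonneg (mul_nonneg (sq_nonneg _) (by linarith [hx.1])) (by norm_num)
  have hinvq : (0:ℝ) ≤ 1/q := (div_pos one_pos hq0).le
  have hPpos : (0:ℝ) < (b - a)^4/6 := by
    have := pow_pos hba' 4
    linarith
  -- from |∫ K g| to ∫ |K| |g|
  have habs1 : |∫ x in a..c, (x - a)^2*(c - x)/6 * g x| ≤
      ∫ x in a..c, (x - a)^2*(c - x)/6 * |g x| := by
    refine le_trans (intervalIntegral.abs_integral_le_integral_abs hac) (le_of_eq ?_)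
    apply intervalIntegral.integral_congr
    intro x hx
    rw [Set.uIcc_of_le hac] at hx
    simp only
    rw [abs_mul, abs_of_nonneg (K1nn x hx)]
  have habs2 : |∫ x in c..b, (x - b)^2*(c - x)/6 * g x| ≤
      ∫ x in c..b, (x - b)^2*(x - c)/6 * |g x| := by
    refine le_trans (intervalIntegral.abs_integral_le_integral_abs hcb) (le_of_eq ?_)
    apply intervalIntegral.integral_congr
    intro x hx
    rw [Set.uIcc_of_le hcb] at hx
    simp only
    rw [abs_mul]
    congr 1
    rw [abs_of_nonpos (by nlinarith [sq_nonneg (x - b), hx.1] : (x - b)^2*(c - x)/6 ≤ 0)]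
    ring
  -- kernel integrals
  have hW1 : ∫ x in a..c, (x - a)^2*(c - x)/6 = (b - a)^4/1152 := by
    rw [kernel_int_left a c a c, hc]; ring
  have hW2 : ∫ x in c..b, (x - b)^2*(x - c)/6 = (b - a)^4/1152 := by
    rw [kernel_int_right b c c b, hc]; ring
  -- weighted kernel integrals
  have heqB1 : Set.EqOn (fun x => (x - a)^2*(c - x)/6 * (b - x)^s)
      (fun x => ((-(4*d^3)/6) + ((8*d^2)/6)*(b - x) + ((-(5*d))/6)*(b - x)^2 +
        ((1:ℝ)/6)*(b - x)^3) * (b - x)^s) (Set.uIcc a c) := by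
    intro x _
    simp only [hd, hc]
    ring
  have hIbig1 := (intervalIntegral.integral_congr heqB1).trans
    (poly_rpow_right b s hs0.le a c hcb hac _ _ _ _)
  have heqS1 : Set.EqOn (fun x => (x - a)^2*(c - x)/6 * (x - a)^s)
      (fun x => ((0:ℝ) + (0:ℝ)*(x - a) + (d/6)*(x - a)^2 + (-(1:ℝ)/6)*(x - a)^3) * (x - a)^s)
      (Set.uIcc a c) := by
    intro x _
    simp only [hd, hc]
    ring
  have hIsmall1 := (intervalIntegral.integral_congr heqS1).trans
    (poly_rpow_left a s hs0.le a c le_rfl hac _ _ _ _)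
  have heqB2 : Set.EqOn (fun x => (x - b)^2*(x - c)/6 * (x - a)^s)
      (fun x => ((-(4*d^3)/6) + ((8*d^2)/6)*(x - a) + ((-(5*d))/6)*(x - a)^2 +
        ((1:ℝ)/6)*(x - a)^3) * (x - a)^s) (Set.uIcc c b) := by
    intro x _
    simp only [hd, hc]
    ring
  have hIbig2 := (intervalIntegral.integral_congr heqB2).trans
    (poly_rpow_left a s hs0.le c b hac hcb _ _ _ _)
  have heqS2 : Set.EqOn (fun x => (x - b)^2*(x - c)/6 * (b - x)^s)
      (fun x => ((0:ℝ) + (0:ℝ)*(b - x) + (d/6)*(b - x)^2 + (-(1:ℝ)/6)*(b - x)^3) * (b - x)^s)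
      (Set.uIcc c b) := by
    intro x _
    simp only [hd, hc]
    ring
  have hIsmall2 := (intervalIntegral.integral_congr heqS2).trans
    (poly_rpow_right b s hs0.le c b le_rfl hcb _ _ _ _)
  -- rpow expansion facts
  have h2d : (0:ℝ) < 2*d := by linarith
  have q1' : (2*d)^(s+1) = (2*d)^s*(2*d) := by rw [Real.rpow_add h2d, Real.rpow_one]
  have q2' : (2*d)^(s+2) = (2*d)^s*(2*d)^2 := by
    rw [show s+2 = s+((2:ℕ):ℝ) by norm_num, Real.rpow_add h2d, Real.rpow_natCast]
  have q3' : (2*d)^(s+3) = (2*d)^s*(2*d)^3 := by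
    rw [show s+3 = s+((3:ℕ):ℝ) by norm_num, Real.rpow_add h2d, Real.rpow_natCast]
  have q4' : (2*d)^(s+4) = (2*d)^s*(2*d)^4 := by
    rw [show s+4 = s+((4:ℕ):ℝ) by norm_num, Real.rpow_add h2d, Real.rpow_natCast]
  have p1' : d^(s+1) = d^s*d := by rw [Real.rpow_add hd0, Real.rpow_one]
  have p2' : d^(s+2) = d^s*d^2 := by
    rw [show s+2 = s+((2:ℕ):ℝ) by norm_num, Real.rpow_add hd0, Real.rpow_natCast]
  have p3' : d^(s+3) = d^s*d^3 := by
    rw [show s+3 = s+((3:ℕ):ℝ) by norm_num, Real.rpow_add hd0, Real.rpow_natCast]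
  have p4' : d^(s+4) = d^s*d^4 := by
    rw [show s+4 = s+((4:ℕ):ℝ) by norm_num, Real.rpow_add hd0, Real.rpow_natCast]
  have e2ds : (2*d)^s = 2^s*d^s := Real.mul_rpow (by norm_num) hd0.le
  have r16 : (2:ℝ)^(4+s) = 2^s*16 := by
    rw [show (4:ℝ)+s = s+((4:ℕ):ℝ) by push_cast; ring, Real.rpow_add two_pos,
      Real.rpow_natCast]
    norm_num
  have rneg : (2:ℝ)^(-4-s) = (2^s*16)⁻¹ := by
    rw [show (-4-s:ℝ) = -(4+s) by ring, Real.rpow_neg (by norm_num : (0:ℝ) ≤ 2), r16]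
  have hT0 : (0:ℝ) < (2:ℝ)^s := Real.rpow_pos_of_pos two_pos s
  have hds : (0:ℝ) < d^s := Real.rpow_pos_of_pos hd0 s
  have n1 : s+1 ≠ 0 := by positivity
  have n2 : s+2 ≠ 0 := by positivity
  have n3 : s+3 ≠ 0 := by positivity
  have n4 : s+4 ≠ 0 := by positivity
  have m1 : 1+s ≠ 0 := by positivity
  have m2 : 2+s ≠ 0 := by positivity
  have m3 : 3+s ≠ 0 := by positivity
  have m4 : 4+s ≠ 0 := by positivity
  -- integrabilities
  have ii1 : IntervalIntegrable (fun x => (x - a)^2*(c - x)/6*(b - x)^s) volume a c := by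
    apply ContinuousOn.intervalIntegrable
    apply ContinuousOn.mul (by fun_prop)
    apply ContinuousOn.rpow_const (by fun_prop)
    intro x _
    exact Or.inr hs0.le
  have ii2 : IntervalIntegrable (fun x => (x - a)^2*(c - x)/6*(x - a)^s) volume a c := by
    apply ContinuousOn.intervalIntegrable
    apply ContinuousOn.mul (by fun_prop)
    apply ContinuousOn.rpow_const (by fun_prop)
    intro x _
    exact Or.inr hs0.le
  have ii3 : IntervalIntegrable (fun x => (x - b)^2*(x - c)/6*(x - a)^s) volume c b := by
    apply ContinuousOn.intervalIntegrable
    apply ContinuousOn.mul (by fun_prop)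
    apply ContinuousOn.rpow_const (by fun_prop)
    intro x _
    exact Or.inr hs0.le
  have ii4 : IntervalIntegrable (fun x => (x - b)^2*(x - c)/6*(b - x)^s) volume c b := by
    apply ContinuousOn.intervalIntegrable
    apply ContinuousOn.mul (by fun_prop)
    apply ContinuousOn.rpow_const (by fun_prop)
    intro x _
    exact Or.inr hs0.le
  -- evaluation of the weighted integrals
  have hR1 : (∫ x in a..c, (x - a)^2*(c - x)/6 *
        (((b - x)/(b - a))^s * A + ((x - a)/(b - a))^s * B))
      = (b - a)^4/6 * ((2:ℝ)^(-4-s)*(34 + (2:ℝ)^(4+s)*(s-2) + 11*s + s^2) /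
          ((1+s)*(2+s)*(3+s)*(4+s)) * A + (2:ℝ)^(-4-s)/((3+s)*(4+s)) * B) := by
    have heq : Set.EqOn (fun x => (x - a)^2*(c - x)/6 *
        (((b - x)/(b - a))^s * A + ((x - a)/(b - a))^s * B))
        (fun x => (A/(b - a)^s) * ((x - a)^2*(c - x)/6*(b - x)^s)
          + (B/(b - a)^s) * ((x - a)^2*(c - x)/6*(x - a)^s)) (Set.uIcc a c) := by
      intro x hx
      rw [Set.uIcc_of_le hac] at hx
      simp only
      rw [Real.div_rpow (by linarith [hx.2, hcb] : (0:ℝ) ≤ b - x) hba'.le,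
          Real.div_rpow (by linarith [hx.1] : (0:ℝ) ≤ x - a) hba'.le]
      ring
    rw [intervalIntegral.integral_congr heq,
        intervalIntegral.integral_add (ii1.const_mul _) (ii2.const_mul _),
        intervalIntegral.integral_const_mul, intervalIntegral.integral_const_mul,
        hIbig1, hIsmall1]
    rw [show b - c = d by rw [hd, hc]; ring, show c - a = d by rw [hd, hc]; ring,
        sub_self, show b - a = 2*d by rw [hd]; ring]
    rw [Real.zero_rpow n1, Real.zero_rpow n2, Real.zero_rpow n3, Real.zero_rpow n4]
    rw [q1', q2', q3', q4', p1', p2', p3', p4', e2ds, r16, rneg]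
    field_simp
    ring
  have hR2 : (∫ x in c..b, (x - b)^2*(x - c)/6 *
        (((b - x)/(b - a))^s * A + ((x - a)/(b - a))^s * B))
      = (b - a)^4/6 * ((2:ℝ)^(-4-s)/((3+s)*(4+s)) * A +
          (2:ℝ)^(-4-s)*(34 + (2:ℝ)^(4+s)*(s-2) + 11*s + s^2) /
          ((1+s)*(2+s)*(3+s)*(4+s)) * B) := by
    have heq : Set.EqOn (fun x => (x - b)^2*(x - c)/6 *
        (((b - x)/(b - a))^s * A + ((x - a)/(b - a))^s * B))
        (fun x => (A/(b - a)^s) * ((x - b)^2*(x - c)/6*(b - x)^s)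
          + (B/(b - a)^s) * ((x - b)^2*(x - c)/6*(x - a)^s)) (Set.uIcc c b) := by
      intro x hx
      rw [Set.uIcc_of_le hcb] at hx
      simp only
      rw [Real.div_rpow (by linarith [hx.2] : (0:ℝ) ≤ b - x) hba'.le,
          Real.div_rpow (by linarith [hx.1, hac] : (0:ℝ) ≤ x - a) hba'.le]
      ring
    rw [intervalIntegral.integral_congr heq,
        intervalIntegral.integral_add (ii4.const_mul _) (ii3.const_mul _),
        intervalIntegral.integral_const_mul, intervalIntegral.integral_const_mul,
        hIsmall2, hIbig2]
    rw [show b - c = d by rw [hd, hc]; ring, show c - a = d by rw [hd, hc]; ring,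
        sub_self, show b - a = 2*d by rw [hd]; ring]
    rw [Real.zero_rpow n1, Real.zero_rpow n2, Real.zero_rpow n3, Real.zero_rpow n4]
    rw [q1', q2', q3', q4', p1', p2', p3', p4', e2ds, r16, rneg]
    field_simp
    ring
  -- integrability of the compared functions
  have habsq1 : AEStronglyMeasurable (fun x => |g x|^q) (volume.restrict (Set.Ioc a c)) := by
    have habs : AEStronglyMeasurable (fun x => |g x|) (volume.restrict (Set.Ioc a c)) := by
      simpa [Real.norm_eq_abs] using meas1.norm
    simpa [Function.comp_def] using
      (Real.continuous_rpow_const hq0.le).comp_aestronglyMeasurable habs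
  have habsq2 : AEStronglyMeasurable (fun x => |g x|^q) (volume.restrict (Set.Ioc c b)) := by
    have habs : AEStronglyMeasurable (fun x => |g x|) (volume.restrict (Set.Ioc c b)) := by
      simpa [Real.norm_eq_abs] using meas2.norm
    simpa [Function.comp_def] using
      (Real.continuous_rpow_const hq0.le).comp_aestronglyMeasurable habs
  have iiL1 : IntervalIntegrable (fun x => (x - a)^2*(c - x)/6 * |g x|^q) volume a c := by
    rw [intervalIntegrable_iff_integrableOn_Ioc_of_le hac]
    have hbound : IntegrableOn (fun x => (x - a)^2*(c - x)/6 * (A + B)) (Set.Ioc a c) := by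
      have h' : IntervalIntegrable (fun x => (x - a)^2*(c - x)/6 * (A + B)) volume a c :=
        ContinuousOn.intervalIntegrable (by fun_prop)
      rwa [intervalIntegrable_iff_integrableOn_Ioc_of_le hac] at h'
    apply Integrable.mono' hbound
    · exact ((by fun_prop : Continuous fun x : ℝ =>
        (x - a)^2*(c - x)/6).aestronglyMeasurable).mul habsq1
    · filter_upwards [ae_restrict_mem measurableSet_Ioc] with x hx
      have hx' : x ∈ Set.Icc a b := ⟨hx.1.le, le_trans hx.2 hcb⟩
      have hxac : x ∈ Set.Icc a c := ⟨hx.1.le, hx.2⟩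
      rw [Real.norm_eq_abs, abs_mul, abs_of_nonneg (K1nn x hxac),
          abs_of_nonneg (Real.rpow_nonneg (abs_nonneg _) _)]
      exact mul_le_mul_of_nonneg_left (hAB x hx') (K1nn x hxac)
  have iiL2 : IntervalIntegrable (fun x => (x - b)^2*(x - c)/6 * |g x|^q) volume c b := by
    rw [intervalIntegrable_iff_integrableOn_Ioc_of_le hcb]
    have hbound : IntegrableOn (fun x => (x - b)^2*(x - c)/6 * (A + B)) (Set.Ioc c b) := by
      have h' : IntervalIntegrable (fun x => (x - b)^2*(x - c)/6 * (A + B)) volume c b :=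
        ContinuousOn.intervalIntegrable (by fun_prop)
      rwa [intervalIntegrable_iff_integrableOn_Ioc_of_le hcb] at h'
    apply Integrable.mono' hbound
    · exact ((by fun_prop : Continuous fun x : ℝ =>
        (x - b)^2*(x - c)/6).aestronglyMeasurable).mul habsq2
    · filter_upwards [ae_restrict_mem measurableSet_Ioc] with x hx
      have hx' : x ∈ Set.Icc a b := ⟨le_trans hac hx.1.le, hx.2⟩
      have hxcb : x ∈ Set.Icc c b := ⟨hx.1.le, hx.2⟩
      rw [Real.norm_eq_abs, abs_mul, abs_of_nonneg (K2nn x hxcb),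
          abs_of_nonneg (Real.rpow_nonneg (abs_nonneg _) _)]
      exact mul_le_mul_of_nonneg_left (hAB x hx') (K2nn x hxcb)
  have iiR1 : IntervalIntegrable (fun x => (x - a)^2*(c - x)/6 *
      (((b - x)/(b - a))^s * A + ((x - a)/(b - a))^s * B)) volume a c := by
    apply ContinuousOn.intervalIntegrable
    apply ContinuousOn.mul (by fun_prop)
    apply ContinuousOn.add
    · exact (ContinuousOn.rpow_const (by fun_prop) (fun x _ => Or.inr hs0.le)).mul
        continuousOn_const
    · exact (ContinuousOn.rpow_const (by fun_prop) (fun x _ => Or.inr hs0.le)).mul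
        continuousOn_const
  have iiR2 : IntervalIntegrable (fun x => (x - b)^2*(x - c)/6 *
      (((b - x)/(b - a))^s * A + ((x - a)/(b - a))^s * B)) volume c b := by
    apply ContinuousOn.intervalIntegrable
    apply ContinuousOn.mul (by fun_prop)
    apply ContinuousOn.add
    · exact (ContinuousOn.rpow_const (by fun_prop) (fun x _ => Or.inr hs0.le)).mul
        continuousOn_const
    · exact (ContinuousOn.rpow_const (by fun_prop) (fun x _ => Or.inr hs0.le)).mul
        continuousOn_const
  have hmono1 : (∫ x in a..c, (x - a)^2*(c - x)/6 * |g x|^q) ≤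
      ∫ x in a..c, (x - a)^2*(c - x)/6 * (((b - x)/(b - a))^s * A + ((x - a)/(b - a))^s * B) := by
    apply intervalIntegral.integral_mono_on hac iiL1 iiR1
    intro x hx
    exact mul_le_mul_of_nonneg_left (hptw x ⟨hx.1, le_trans hx.2 hcb⟩) (K1nn x hx)
  have hmono2 : (∫ x in c..b, (x - b)^2*(x - c)/6 * |g x|^q) ≤
      ∫ x in c..b, (x - b)^2*(x - c)/6 * (((b - x)/(b - a))^s * A + ((x - a)/(b - a))^s * B) := by
    apply intervalIntegral.integral_mono_on hcb iiL2 iiR2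
    intro x hx
    exact mul_le_mul_of_nonneg_left (hptw x ⟨le_trans hac hx.1, hx.2⟩) (K2nn x hx)
  -- Hölder
  have hold1 : (∫ x in a..c, (x - a)^2*(c - x)/6 * |g x|) ≤
      (∫ x in a..c, (x - a)^2*(c - x)/6)^(1 - 1/q) *
      (∫ x in a..c, (x - a)^2*(c - x)/6 * |g x|^q)^(1/q) :=
    holder_weighted a c hac (fun x => (x - a)^2*(c - x)/6) g q hq (by fun_prop) K1nn meas1
      ((A + B)^(1/q)) (fun x hx => hM x ⟨hx.1, le_trans hx.2 hcb⟩)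
  have hold2 : (∫ x in c..b, (x - b)^2*(x - c)/6 * |g x|) ≤
      (∫ x in c..b, (x - b)^2*(x - c)/6)^(1 - 1/q) *
      (∫ x in c..b, (x - b)^2*(x - c)/6 * |g x|^q)^(1/q) :=
    holder_weighted c b hcb (fun x => (x - b)^2*(x - c)/6) g q hq (by fun_prop) K2nn meas2
      ((A + B)^(1/q)) (fun x hx => hM x ⟨le_trans hac hx.1, hx.2⟩)
  have hXnn1 : 0 ≤ ∫ x in a..c, (x - a)^2*(c - x)/6 * |g x|^q :=
    intervalIntegral.integral_nonneg hac
      (fun x hx => mul_nonneg (K1nn x hx) (Real.rpow_nonneg (abs_nonneg _) _))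
  have hXnn2 : 0 ≤ ∫ x in c..b, (x - b)^2*(x - c)/6 * |g x|^q :=
    intervalIntegral.integral_nonneg hcb
      (fun x hx => mul_nonneg (K2nn x hx) (Real.rpow_nonneg (abs_nonneg _) _))
  set CA : ℝ := (2:ℝ)^(-4-s)*(34 + (2:ℝ)^(4+s)*(s-2) + 11*s + s^2) /
    ((1+s)*(2+s)*(3+s)*(4+s)) with hCA
  set CB : ℝ := (2:ℝ)^(-4-s)/((3+s)*(4+s)) with hCB
  have hfin1 : (∫ x in a..c, (x - a)^2*(c - x)/6 * |g x|) ≤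
      (b - a)^4/6 * ((1:ℝ)/192)^(1 - 1/q) * (CA*A + CB*B)^(1/q) := by
    refine le_trans hold1 ?_
    rw [hW1]
    have hX1R : (∫ x in a..c, (x - a)^2*(c - x)/6 * |g x|^q) ≤
        (b - a)^4/6 * (CA*A + CB*B) := by
      exact hmono1.trans (le_of_eq hR1)
    have hbr : 0 ≤ CA*A + CB*B :=
      (mul_nonneg_iff_of_pos_left hPpos).mp (le_trans hXnn1 hX1R)
    calc ((b - a)^4/1152)^(1 - 1/q) * (∫ x in a..c, (x - a)^2*(c - x)/6 * |g x|^q)^(1/q)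
        ≤ ((b - a)^4/1152)^(1 - 1/q) * ((b - a)^4/6 * (CA*A + CB*B))^(1/q) :=
          mul_le_mul_of_nonneg_left (Real.rpow_le_rpow hXnn1 hX1R hinvq)
            (Real.rpow_nonneg (by positivity) _)
      _ = (b - a)^4/6 * ((1:ℝ)/192)^(1 - 1/q) * (CA*A + CB*B)^(1/q) := by
          rw [show (b - a)^4/1152 = ((b - a)^4/6) * ((1:ℝ)/192) by ring,
              Real.mul_rpow (le_of_lt hPpos) (by norm_num),
              Real.mul_rpow (le_of_lt hPpos) hbr]
          have hPP : ((b - a)^4/6)^(1 - 1/q) * ((b - a)^4/6)^(1/q) = (b - a)^4/6 := by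
            rw [← Real.rpow_add hPpos, show 1 - 1/q + 1/q = 1 by ring, Real.rpow_one]
          calc ((b - a)^4/6)^(1 - 1/q) * ((1:ℝ)/192)^(1 - 1/q) *
                (((b - a)^4/6)^(1/q) * (CA*A + CB*B)^(1/q))
              = (((b - a)^4/6)^(1 - 1/q) * ((b - a)^4/6)^(1/q)) *
                (((1:ℝ)/192)^(1 - 1/q) * (CA*A + CB*B)^(1/q)) := by ring
            _ = _ := by rw [hPP]; ring
  have hfin2 : (∫ x in c..b, (x - b)^2*(x - c)/6 * |g x|) ≤
      (b - a)^4/6 * ((1:ℝ)/192)^(1 - 1/q) * (CB*A + CA*B)^(1/q) := by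
    refine le_trans hold2 ?_
    rw [hW2]
    have hX2R : (∫ x in c..b, (x - b)^2*(x - c)/6 * |g x|^q) ≤
        (b - a)^4/6 * (CB*A + CA*B) := by
      exact hmono2.trans (le_of_eq hR2)
    have hbr : 0 ≤ CB*A + CA*B :=
      (mul_nonneg_iff_of_pos_left hPpos).mp (le_trans hXnn2 hX2R)
    calc ((b - a)^4/1152)^(1 - 1/q) * (∫ x in c..b, (x - b)^2*(x - c)/6 * |g x|^q)^(1/q)
        ≤ ((b - a)^4/1152)^(1 - 1/q) * ((b - a)^4/6 * (CB*A + CA*B))^(1/q) :=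
          mul_le_mul_of_nonneg_left (Real.rpow_le_rpow hXnn2 hX2R hinvq)
            (Real.rpow_nonneg (by positivity) _)
      _ = (b - a)^4/6 * ((1:ℝ)/192)^(1 - 1/q) * (CB*A + CA*B)^(1/q) := by
          rw [show (b - a)^4/1152 = ((b - a)^4/6) * ((1:ℝ)/192) by ring,
              Real.mul_rpow (le_of_lt hPpos) (by norm_num),
              Real.mul_rpow (le_of_lt hPpos) hbr]
          have hPP : ((b - a)^4/6)^(1 - 1/q) * ((b - a)^4/6)^(1/q) = (b - a)^4/6 := by
            rw [← Real.rpow_add hPpos, show 1 - 1/q + 1/q = 1 by ring, Real.rpow_one]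
          calc ((b - a)^4/6)^(1 - 1/q) * ((1:ℝ)/192)^(1 - 1/q) *
                (((b - a)^4/6)^(1/q) * (CB*A + CA*B)^(1/q))
              = (((b - a)^4/6)^(1 - 1/q) * ((b - a)^4/6)^(1/q)) *
                (((1:ℝ)/192)^(1 - 1/q) * (CB*A + CA*B)^(1/q)) := by ring
            _ = _ := by rw [hPP]; ring
  calc |(∫ x in a..b, f x) - (b - a)/6*(f a + 4*f c + f b)|
      = |(∫ x in a..c, (x - a)^2*(c - x)/6 * g x)
          + ∫ x in c..b, (x - b)^2*(c - x)/6 * g x| := by rw [key]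
    _ ≤ |∫ x in a..c, (x - a)^2*(c - x)/6 * g x|
          + |∫ x in c..b, (x - b)^2*(c - x)/6 * g x| := abs_add_le _ _
    _ ≤ (∫ x in a..c, (x - a)^2*(c - x)/6 * |g x|)
          + ∫ x in c..b, (x - b)^2*(x - c)/6 * |g x| := add_le_add habs1 habs2
    _ ≤ ((b - a)^4/6 * ((1:ℝ)/192)^(1 - 1/q) * (CA*A + CB*B)^(1/q))
          + ((b - a)^4/6 * ((1:ℝ)/192)^(1 - 1/q) * (CB*A + CA*B)^(1/q)) :=
        add_le_add hfin1 hfin2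
    _ = (b - a)^4/6 * ((1:ℝ)/192)^(1 - 1/q) * ((CB*A + CA*B)^(1/q) + (CA*A + CB*B)^(1/q)) := by
        ring
end
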